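/- arXiv:2409.09255 — 6 statements merged into one kernel-verified Lean document; each statement's English description precedes it below -/
import Mathlib

section
/- Let ℓ⃗ = (ℓ_μ ≥ ⋯ ≥ ℓ_1) and ℓ⃗' = (ℓ'_{μ'} ≥ ⋯ ≥ ℓ'_1) be partitions of the same integer ℓ ≥ 1 into positive parts. If (t - (-1)^μ) · ∏_{ν=1}^{μ} (t^{2ℓ_ν} - 1) = (t - (-1)^{μ'}) · ∏_{ν=1}^{μ'} (t^{2ℓ'_ν} - 1) as polynomials in ℂ[t], then μ = μ' and ℓ_ν = ℓ'_ν for all ν. -/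
open Polynomial

private lemma factor_ne_zero {n : ℕ} (hn : 0 < n) : (X ^ n - 1 : ℂ[X]) ≠ 0 := by
  intro h
  have := congrArg (eval 0) h
  simp [zero_pow hn.ne'] at this

private lemma rm_factor {n : ℕ} (hn : 0 < n) {a : ℂ} (ha : a ^ n = 1) :
    rootMultiplicity a (X ^ n - 1 : ℂ[X]) = 1 := by
  have hsep : (X ^ n - 1 : ℂ[X]).Separable :=
    X_pow_sub_one_separable_iff.mpr (by exact_mod_cast hn.ne')
  have h1 : 0 < rootMultiplicity a (X ^ n - 1 : ℂ[X]) :=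
    (rootMultiplicity_pos (factor_ne_zero hn)).mpr (by simp [IsRoot, ha])
  exact le_antisymm (rootMultiplicity_le_one_of_separable hsep a) h1

private lemma rm_prod (a : ℂ) {ι : Type} (f : ι → ℂ[X]) (s : Finset ι) :
    (∀ i ∈ s, f i ≠ 0) →
    rootMultiplicity a (∏ i ∈ s, f i) = ∑ i ∈ s, rootMultiplicity a (f i) := by
  classical
  induction s using Finset.induction_on with
  | empty => intro _; simp
  | @insert i s his ih =>
    intro hf
    rw [Finset.prod_insert his, Finset.sum_insert his,
      rootMultiplicity_mul (mul_ne_zero (hf i (by simp))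
        (Finset.prod_ne_zero_iff.mpr fun j hj => hf j (by simp [hj]))),
      ih fun j hj => hf j (by simp [hj])]


private lemma key_multiset : ∀ (n : ℕ) (M M' : Multiset ℕ), M.card = n →
    (∀ l ∈ M, 0 < l) → (∀ l ∈ M', 0 < l) →
    (M.map fun l => (X : ℂ[X]) ^ (2 * l) - 1).prod =
      (M'.map fun l => (X : ℂ[X]) ^ (2 * l) - 1).prod →
    M = M' := by
  intro n
  induction n with
  | zero =>
    intro M M' hc h h' heq
    obtain rfl : M = 0 := Multiset.card_eq_zero.mp hc
    by_contra hM'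
    obtain ⟨l, hl⟩ := Multiset.exists_mem_of_ne_zero (fun h0 => hM' h0.symm)
    have h1 : ((M'.map fun l => (X : ℂ[X]) ^ (2 * l) - 1).prod).eval 1 = 1 := by
      rw [← heq]; simp
    rw [eval_multiset_prod] at h1
    have h0 : (0 : ℂ) ∈ (M'.map fun l => (X : ℂ[X]) ^ (2 * l) - 1).map (eval 1) :=
      Multiset.mem_map.mpr ⟨_, Multiset.mem_map.mpr ⟨l, hl, rfl⟩, by simp⟩
    rw [Multiset.prod_eq_zero h0] at h1
    exact one_ne_zero h1.symm
  | succ n ih =>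
    intro M M' hc h h' heq
    have hM : M ≠ 0 := by intro h0; simp [h0] at hc
    obtain ⟨a, ha⟩ := Multiset.exists_mem_of_ne_zero hM
    have hSne : (M + M').toFinset.Nonempty := ⟨a, Multiset.mem_toFinset.mpr (by simp [ha])⟩
    set m := (M + M').toFinset.max' hSne with hm
    have hmmem : m ∈ M + M' := Multiset.mem_toFinset.mp ((M + M').toFinset.max'_mem hSne)
    have hmax : ∀ b ∈ M + M', b ≤ m := fun b hb =>
      (M + M').toFinset.le_max' b (Multiset.mem_toFinset.mpr hb)
    have hmpos : 0 < m := by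
      rcases Multiset.mem_add.mp hmmem with hx | hx
      exacts [h m hx, h' m hx]
    -- auxiliary: membership transfers across the equation
    have aux : ∀ A B : Multiset ℕ, (∀ l ∈ B, 0 < l) → (∀ b ∈ B, b ≤ m) →
        (A.map fun l => (X : ℂ[X]) ^ (2 * l) - 1).prod =
          (B.map fun l => (X : ℂ[X]) ^ (2 * l) - 1).prod →
        m ∈ A → m ∈ B := by
      intro A B hB hBle hAB hmA
      set ζ : ℂ := Complex.exp (2 * Real.pi * Complex.I / (2 * m)) with hζdef
      have hζ : IsPrimitiveRoot ζ (2 * m) := by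
        have := Complex.isPrimitiveRoot_exp (2 * m) (by positivity)
        simpa using this
      have hz : ((A.map fun l => (X : ℂ[X]) ^ (2 * l) - 1).prod).eval ζ = 0 := by
        rw [eval_multiset_prod]
        refine Multiset.prod_eq_zero (Multiset.mem_map.mpr
          ⟨_, Multiset.mem_map.mpr ⟨m, hmA, rfl⟩, ?_⟩)
        simp [hζ.pow_eq_one]
      rw [hAB, eval_multiset_prod] at hz
      rw [Multiset.prod_eq_zero_iff] at hz
      obtain ⟨p, hp, hp0⟩ := Multiset.mem_map.mp hz
      obtain ⟨l, hl, rfl⟩ := Multiset.mem_map.mp hp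
      have hl1 : ζ ^ (2 * l) = 1 := by
        have := hp0.symm
        simp only [eval_sub, eval_pow, eval_X, eval_one] at hp0
        linear_combination hp0
      have hdvd : 2 * m ∣ 2 * l := hζ.dvd_of_pow_eq_one _ hl1
      have hml : m ∣ l := (mul_dvd_mul_iff_left (two_ne_zero)).mp hdvd
      have : l = m := le_antisymm (hBle l hl) (Nat.le_of_dvd (hB l hl) hml)
      exact this ▸ hl
    have hmM : m ∈ M ∧ m ∈ M' := by
      rcases Multiset.mem_add.mp hmmem with hx | hx
      · exact ⟨hx, aux M M' h' (fun b hb => hmax b (by simp [hb])) heq hx⟩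
      · exact ⟨aux M' M h (fun b hb => hmax b (by simp [hb])) heq.symm hx, hx⟩
    obtain ⟨hmM1, hmM2⟩ := hmM
    have e1 : M = m ::ₘ M.erase m := (Multiset.cons_erase hmM1).symm
    have e2 : M' = m ::ₘ M'.erase m := (Multiset.cons_erase hmM2).symm
    rw [e1, e2, Multiset.map_cons, Multiset.map_cons, Multiset.prod_cons,
      Multiset.prod_cons] at heq
    have hne : ((X : ℂ[X]) ^ (2 * m) - 1) ≠ 0 := by
      intro hf
      have := congrArg (eval 0) hf
      simp [zero_pow (by positivity : 2 * m ≠ 0)] at this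
    have heq' := mul_left_cancel₀ hne heq
    have hcard : (M.erase m).card = n := by
      rw [Multiset.card_erase_of_mem hmM1, hc]; rfl
    have := ih (M.erase m) (M'.erase m) hcard
      (fun l hl => h l (Multiset.mem_of_mem_erase hl))
      (fun l hl => h' l (Multiset.mem_of_mem_erase hl)) heq'
    rw [e1, e2, this]

private lemma rm_full (k : ℕ) (K : Fin k → ℕ) (hK : ∀ ν, 0 < K ν) (a : ℂ) (ha : a ^ 2 = 1) :
    rootMultiplicity a ((X - C ((-1 : ℂ) ^ k)) * ∏ ν : Fin k, (X ^ (2 * K ν) - 1)) =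
      (if a = (-1 : ℂ) ^ k then 1 else 0) + k := by
  classical
  have hP : (∏ ν : Fin k, ((X : ℂ[X]) ^ (2 * K ν) - 1)) ≠ 0 :=
    Finset.prod_ne_zero_iff.mpr fun ν _ => factor_ne_zero (Nat.mul_pos two_pos (hK ν))
  rw [rootMultiplicity_mul (mul_ne_zero (X_sub_C_ne_zero _) hP),
    rm_prod a _ _ (fun ν _ => factor_ne_zero (Nat.mul_pos two_pos (hK ν))),
    rootMultiplicity_X_sub_C]
  congr 1
  rw [Finset.sum_congr rfl fun ν _ => rm_factor (Nat.mul_pos two_pos (hK ν))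
    (by rw [pow_mul, ha, one_pow])]
  simp

/-- If `ℓ⃗ = (ℓ_μ ≥ ⋯ ≥ ℓ_1)` and `ℓ⃗' = (ℓ'_{μ'} ≥ ⋯ ≥ ℓ'_1)` are partitions
of the same integer `ℓ ≥ 1` into positive parts and
`(t - (-1)^μ)·∏_ν (t^{2ℓ_ν} - 1) = (t - (-1)^{μ'})·∏_ν (t^{2ℓ'_ν} - 1)` in `ℂ[t]`,
then `μ = μ'` and `ℓ_ν = ℓ'_ν` for all `ν`.  (Partitions are recorded as monotone functions
`Fin μ → ℕ`, the value at `ν` being the part `ℓ_{ν+1}`.) -/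
theorem stmt4 (ℓ μ μ' : ℕ) (hℓ : 1 ≤ ℓ) (L : Fin μ → ℕ) (L' : Fin μ' → ℕ)
    (hpos : ∀ ν, 0 < L ν) (hmono : Monotone L) (hsum : ∑ ν, L ν = ℓ)
    (hpos' : ∀ ν, 0 < L' ν) (hmono' : Monotone L') (hsum' : ∑ ν, L' ν = ℓ)
    (heq : (X - C ((-1 : ℂ) ^ μ)) * ∏ ν : Fin μ, (X ^ (2 * L ν) - 1) =
           (X - C ((-1 : ℂ) ^ μ')) * ∏ ν : Fin μ', (X ^ (2 * L' ν) - 1)) :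
    μ = μ' ∧ ∀ (ν : ℕ) (h1 : ν < μ) (h2 : ν < μ'), L ⟨ν, h1⟩ = L' ⟨ν, h2⟩ := by
  classical
  have A : (if (1 : ℂ) = (-1 : ℂ) ^ μ then 1 else 0) + μ =
      (if (1 : ℂ) = (-1 : ℂ) ^ μ' then 1 else 0) + μ' := by
    rw [← rm_full μ L hpos 1 (by norm_num), ← rm_full μ' L' hpos' 1 (by norm_num), heq]
  have B : (if (-1 : ℂ) = (-1 : ℂ) ^ μ then 1 else 0) + μ =
      (if (-1 : ℂ) = (-1 : ℂ) ^ μ' then 1 else 0) + μ' := by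
    rw [← rm_full μ L hpos (-1) (by norm_num), ← rm_full μ' L' hpos' (-1) (by norm_num), heq]
  have C : ∀ k : ℕ, (if (1 : ℂ) = (-1 : ℂ) ^ k then 1 else 0) +
      (if (-1 : ℂ) = (-1 : ℂ) ^ k then 1 else 0) = 1 := by
    intro k
    rcases Nat.even_or_odd k with hk | hk
    · rw [hk.neg_one_pow]; norm_num
    · rw [hk.neg_one_pow]; norm_num
  have hμ : μ = μ' := by have := C μ; have := C μ'; omega
  subst hμ
  refine ⟨rfl, ?_⟩
  have heq' := mul_left_cancel₀ (X_sub_C_ne_zero ((-1 : ℂ) ^ μ)) heq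
  have hML : ((↑(List.ofFn L) : Multiset ℕ).map fun l => (X : ℂ[X]) ^ (2 * l) - 1).prod =
      ∏ ν : Fin μ, ((X : ℂ[X]) ^ (2 * L ν) - 1) := by
    rw [Multiset.map_coe, List.map_ofFn, Multiset.prod_coe, List.prod_ofFn]
    rfl
  have hML' : ((↑(List.ofFn L') : Multiset ℕ).map fun l => (X : ℂ[X]) ^ (2 * l) - 1).prod =
      ∏ ν : Fin μ, ((X : ℂ[X]) ^ (2 * L' ν) - 1) := by
    rw [Multiset.map_coe, List.map_ofFn, Multiset.prod_coe, List.prod_ofFn]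
    rfl
  have hkey : (↑(List.ofFn L) : Multiset ℕ) = ↑(List.ofFn L') := by
    refine key_multiset (List.ofFn L).length _ _ (by simp) ?_ ?_ ?_
    · intro l hl
      obtain ⟨ν, rfl⟩ := List.mem_ofFn.mp hl
      exact hpos ν
    · intro l hl
      obtain ⟨ν, rfl⟩ := List.mem_ofFn.mp hl
      exact hpos' ν
    · rw [hML, hML', heq']
  have hperm : (List.ofFn L).Perm (List.ofFn L') := Multiset.coe_eq_coe.mp hkey
  have hlist : List.ofFn L = List.ofFn L' :=
    hperm.eq_of_sortedLE hmono.sortedLE_ofFn hmono'.sortedLE_ofFn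
  have hLL : L = L' := List.ofFn_injective hlist
  intro ν h1 h2
  rw [hLL]
end

section
/- Let ℓ ≥ 2 and let ℓ⃗ and ℓ⃗' be partitions of ℓ into positive parts, with associated elements n_{ℓ⃗} and n_{ℓ⃗'} of SO_{2ℓ+1}(ℂ). If there exists g ∈ SO_{2ℓ+1}(ℂ) with g n_{ℓ⃗} g⁻¹ = n_{ℓ⃗'}, then ℓ⃗ = ℓ⃗'. -/
open Matrix

namespace Stmt5

/-- The anti-diagonal matrix `K` with ones on the anti-diagonal (1-based: `K_{ij} = 1` iff
`i + j = (2ℓ+1) + 1`). -/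
noncomputable def K (ℓ : ℕ) : Matrix (Fin (2*ℓ+1)) (Fin (2*ℓ+1)) ℂ :=
  Matrix.of fun i j => if (i.val + 1) + (j.val + 1) = (2*ℓ+1) + 1 then 1 else 0

/-- The matrix `s_k ∈ SO_{2ℓ+1}(ℂ)` (1-based indices). -/
noncomputable def s (ℓ k : ℕ) : Matrix (Fin (2*ℓ+1)) (Fin (2*ℓ+1)) ℂ :=
  Matrix.of fun i j =>
    if i = j ∧ i.val + 1 ≠ k ∧ i.val + 1 ≠ k + 1 ∧
        i.val + 1 ≠ 2*ℓ - k + 1 ∧ i.val + 1 ≠ 2*ℓ - k + 2 then 1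
    else if i ≠ j ∧ ((i.val + 1 = k ∧ j.val + 1 = k + 1) ∨
        (i.val + 1 = k + 1 ∧ j.val + 1 = k)) then 1
    else if i ≠ j ∧ ((i.val + 1 = 2*ℓ - k + 1 ∧ j.val + 1 = 2*ℓ - k + 2) ∨
        (i.val + 1 = 2*ℓ - k + 2 ∧ j.val + 1 = 2*ℓ - k + 1)) then 1
    else 0

/-- The matrix `t_ℓ ∈ SO_{2ℓ+1}(ℂ)`. -/
noncomputable def tTop (ℓ : ℕ) : Matrix (Fin (2*ℓ+1)) (Fin (2*ℓ+1)) ℂ :=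
  Matrix.of fun i j =>
    if i = j ∧ (i.val + 1 < ℓ ∨ ℓ + 2 < i.val + 1) then 1
    else if i ≠ j ∧ ((i.val + 1 = ℓ ∧ j.val + 1 = ℓ + 2) ∨
        (i.val + 1 = ℓ + 2 ∧ j.val + 1 = ℓ)) then 1
    else if i = j ∧ i.val + 1 = ℓ + 1 then -1
    else 0

/-- `t_k = s_k s_{k+1} ⋯ s_{ℓ-1} · t_ℓ · s_{ℓ-1} ⋯ s_{k+1} s_k`. -/
noncomputable def t (ℓ k : ℕ) : Matrix (Fin (2*ℓ+1)) (Fin (2*ℓ+1)) ℂ :=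
  (List.ofFn fun a : Fin (ℓ - k) => s ℓ (k + a.val)).prod * tTop ℓ *
  (List.ofFn fun a : Fin (ℓ - k) => s ℓ (ℓ - 1 - a.val)).prod

/-- `n_{ℓ⃗} = ∏_{ν=1}^{μ} ( s_{ℓ'_ν+1} ⋯ s_{ℓ'_ν+ℓ_ν-1} · t_{ℓ'_ν+ℓ_ν} )`. -/
noncomputable def n (ℓ μ : ℕ) (L : Fin μ → ℕ) : Matrix (Fin (2*ℓ+1)) (Fin (2*ℓ+1)) ℂ :=
  (List.ofFn fun ν : Fin μ =>
    (List.ofFn fun a : Fin (L ν - 1) =>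
      s ℓ ((∑ j ∈ Finset.Iio ν, L j) + a.val + 1)).prod *
    t ℓ ((∑ j ∈ Finset.Iio ν, L j) + L ν)).prod


variable (ℓ : ℕ)

/-- Monomial matrix: entry `ε j` at `(f j, j)` (0-based on values). -/
noncomputable def mono (f : ℕ → ℕ) (ε : ℕ → ℂ) : Matrix (Fin (2*ℓ+1)) (Fin (2*ℓ+1)) ℂ :=
  Matrix.of fun i j => if (i : ℕ) = f j then ε j else 0

lemma mono_apply (f : ℕ → ℕ) (ε : ℕ → ℂ) (i j : Fin (2*ℓ+1)) :
    mono ℓ f ε i j = if (i : ℕ) = f j then ε j else 0 := rfl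

lemma mono_mul (f g : ℕ → ℕ) (ε δ : ℕ → ℂ) (hg : ∀ x < 2*ℓ+1, g x < 2*ℓ+1) :
    mono ℓ f ε * mono ℓ g δ = mono ℓ (f ∘ g) (fun x => δ x * ε (g x)) := by
  ext i j
  rw [Matrix.mul_apply]
  have hgj : g (j : ℕ) < 2*ℓ+1 := hg j j.isLt
  rw [Finset.sum_eq_single (⟨g (j : ℕ), hgj⟩ : Fin (2*ℓ+1))]
  · simp [mono_apply, Function.comp, mul_comm]
  · intro k _ hk
    have : (k : ℕ) ≠ g (j : ℕ) := by
      intro h; apply hk; exact Fin.ext h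
    simp [mono_apply, this]
  · intro h; exact absurd (Finset.mem_univ _) h

lemma mono_one : mono ℓ id (fun _ => 1) = 1 := by
  ext i j
  simp only [mono_apply, id_eq, Matrix.one_apply]
  by_cases h : i = j
  · subst h; simp
  · have : (i : ℕ) ≠ (j : ℕ) := fun hc => h (Fin.ext hc)
    simp [h, this.symm, Ne.symm]

lemma mono_congr {f f' : ℕ → ℕ} {ε ε' : ℕ → ℂ} (hf : ∀ x < 2*ℓ+1, f x = f' x)
    (hε : ∀ x < 2*ℓ+1, ε x = ε' x) : mono ℓ f ε = mono ℓ f' ε' := by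
  ext i j
  rw [mono_apply, mono_apply, hf j j.isLt, hε j j.isLt]

lemma mono_trace (f : ℕ → ℕ) (ε : ℕ → ℂ) :
    (mono ℓ f ε).trace = ∑ x : Fin (2*ℓ+1), if (x : ℕ) = f x then ε x else 0 := by
  simp [Matrix.trace, Matrix.diag, mono_apply]


-- the permutation-level functions (0-based `x`; 1-based index is `x+1`)
def sf (ℓ k : ℕ) : ℕ → ℕ := fun x =>
  if x + 1 = k then x + 1 else if x + 1 = k + 1 then x - 1
  else if x + 1 = 2*ℓ - k + 1 then x + 1 else if x + 1 = 2*ℓ - k + 2 then x - 1 else x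
def tc (ℓ k : ℕ) : ℕ → ℕ := fun x =>
  if x + 1 = k then 2*ℓ + 1 - k else if x + 1 = 2*ℓ + 2 - k then k - 1 else x
def tsign (ℓ : ℕ) : ℕ → ℂ := fun x => if x = ℓ then -1 else 1

lemma sf_lt (ℓ k : ℕ) (hk1 : 1 ≤ k) (hk : k < ℓ) : ∀ x < 2*ℓ+1, sf ℓ k x < 2*ℓ+1 := by
  intro x hx; unfold sf; split_ifs <;> omega
lemma tc_lt (ℓ k : ℕ) (hk1 : 1 ≤ k) (hk : k ≤ ℓ) : ∀ x < 2*ℓ+1, tc ℓ k x < 2*ℓ+1 := by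
  intro x hx; unfold tc; split_ifs <;> omega

lemma s_eq (ℓ k : ℕ) (hk1 : 1 ≤ k) (hk : k < ℓ) : s ℓ k = mono ℓ (sf ℓ k) (fun _ => 1) := by
  ext i j
  have hi := i.isLt; have hj := j.isLt
  simp only [s, mono_apply, Matrix.of_apply, sf, Fin.ext_iff, ne_eq]
  split_ifs <;> first | rfl | omega

lemma tTop_eq (ℓ : ℕ) (hℓ : 1 ≤ ℓ) : tTop ℓ = mono ℓ (tc ℓ ℓ) (tsign ℓ) := by
  ext i j
  have hi := i.isLt; have hj := j.isLt
  simp only [tTop, mono_apply, Matrix.of_apply, tc, tsign, Fin.ext_iff, ne_eq]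
  split_ifs <;> first | rfl | omega


lemma ofFn_nat_succ {M : Type*} (F : ℕ → M) {m d : ℕ} (h : m = d + 1) :
    List.ofFn (fun a : Fin m => F a.val) =
      F 0 :: List.ofFn (fun a : Fin d => F (a.val + 1)) := by
  subst h; simp [List.ofFn_succ]
lemma ofFn_nat_succ' {M : Type*} (F : ℕ → M) {m d : ℕ} (h : m = d + 1) :
    List.ofFn (fun a : Fin m => F a.val) =
      (List.ofFn fun a : Fin d => F a.val) ++ [F d] := by
  subst h; rw [List.ofFn_succ']; simp [List.concat_eq_append]
lemma ofFn_nat_zero {M : Type*} (F : ℕ → M) {m : ℕ} (h : m = 0) :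
    List.ofFn (fun a : Fin m => F a.val) = [] := by subst h; simp

lemma t_rec (ℓ k : ℕ) (hk : k < ℓ) : t ℓ k = s ℓ k * t ℓ (k+1) * s ℓ k := by
  obtain ⟨d, hd⟩ : ∃ d, ℓ - k = d + 1 := ⟨ℓ - k - 1, by omega⟩
  have hd' : ℓ - (k+1) = d := by omega
  unfold t
  rw [ofFn_nat_succ (fun a => s ℓ (k + a)) hd,
      ofFn_nat_succ' (fun a => s ℓ (ℓ - 1 - a)) hd, hd']
  have h1 : (fun a : Fin d => s ℓ (k + (a.val + 1))) =
      (fun a : Fin d => s ℓ (k + 1 + a.val)) := by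
    funext a; exact congrArg (s ℓ) (by omega)
  have h2 : ℓ - 1 - d = k := by omega
  rw [List.prod_cons, List.prod_append, List.prod_singleton, h1, h2]
  noncomm_ring

lemma sf_tc_sf (ℓ k : ℕ) (hk1 : 1 ≤ k) (hk : k < ℓ) (x : ℕ) (hx : x < 2*ℓ+1) :
    sf ℓ k (tc ℓ (k+1) (sf ℓ k x)) = tc ℓ k x := by
  rcases (by omega : x + 1 = k ∨ x + 1 = k + 1 ∨ x + 1 = 2*ℓ - k + 1 ∨
      x + 1 = 2*ℓ - k + 2 ∨ (x + 1 ≠ k ∧ x + 1 ≠ k + 1 ∧ x + 1 ≠ 2*ℓ - k + 1 ∧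
      x + 1 ≠ 2*ℓ - k + 2)) with h | h | h | h | h
  · rw [show sf ℓ k x = x + 1 by unfold sf; split_ifs <;> omega,
        show tc ℓ (k+1) (x+1) = 2*ℓ - k by unfold tc; split_ifs <;> omega,
        show sf ℓ k (2*ℓ - k) = 2*ℓ - k + 1 by unfold sf; split_ifs <;> omega]
    unfold tc; split_ifs <;> omega
  · rw [show sf ℓ k x = x - 1 by unfold sf; split_ifs <;> omega,
        show tc ℓ (k+1) (x-1) = x - 1 by unfold tc; split_ifs <;> omega,
        show sf ℓ k (x - 1) = x by unfold sf; split_ifs <;> omega]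
    unfold tc; split_ifs <;> omega
  · rw [show sf ℓ k x = x + 1 by unfold sf; split_ifs <;> omega,
        show tc ℓ (k+1) (x+1) = x + 1 by unfold tc; split_ifs <;> omega,
        show sf ℓ k (x + 1) = x by unfold sf; split_ifs <;> omega]
    unfold tc; split_ifs <;> omega
  · rw [show sf ℓ k x = x - 1 by unfold sf; split_ifs <;> omega,
        show tc ℓ (k+1) (x-1) = k by unfold tc; split_ifs <;> omega,
        show sf ℓ k k = k - 1 by unfold sf; split_ifs <;> omega]
    unfold tc; split_ifs <;> omega
  · rw [show sf ℓ k x = x by unfold sf; split_ifs <;> omega,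
        show tc ℓ (k+1) x = x by unfold tc; split_ifs <;> omega,
        show sf ℓ k x = x by unfold sf; split_ifs <;> omega]
    unfold tc; split_ifs <;> omega

lemma sf_mid (ℓ k : ℕ) (hk1 : 1 ≤ k) (hk : k < ℓ) (x : ℕ) : sf ℓ k x = ℓ ↔ x = ℓ := by
  unfold sf; split_ifs <;> omega

lemma t_eq (ℓ : ℕ) : ∀ d k, k = ℓ - d → 1 ≤ k → t ℓ k = mono ℓ (tc ℓ k) (tsign ℓ) := by
  intro d
  induction d with
  | zero =>
    intro k hk hk1
    have hkl : k = ℓ := by omega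
    subst hkl
    unfold t
    rw [ofFn_nat_zero (fun a => s k (k + a)) (by omega),
        ofFn_nat_zero (fun a => s k (k - 1 - a)) (by omega)]
    simp [tTop_eq k (by omega)]
  | succ d ih =>
    intro k hk hk1
    have hklt : k < ℓ := by omega
    rw [t_rec ℓ k hklt, ih (k+1) (by omega) (by omega),
      s_eq ℓ k hk1 hklt,
      mono_mul ℓ _ _ _ _ (tc_lt ℓ (k+1) (by omega) (by omega)),
      mono_mul ℓ _ _ _ _ (sf_lt ℓ k hk1 hklt)]
    apply mono_congr
    · intro x hx
      exact sf_tc_sf ℓ k hk1 hklt x hx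
    · intro x hx
      simp only [Function.comp, one_mul, mul_one, tsign]
      have := sf_mid ℓ k hk1 hklt x
      split_ifs with h1 h2 h2 <;> simp_all

/-- column map of the product `s_{p+1} ⋯ s_{p+r}`. -/
def pf (ℓ p r : ℕ) : ℕ → ℕ := fun x =>
  if p + 1 ≤ x + 1 ∧ x + 1 ≤ p + r then x + 1
  else if x + 1 = p + r + 1 then p
  else if 2*ℓ + 2 - (p + r) ≤ x + 1 ∧ x + 1 ≤ 2*ℓ + 1 - p then x - 1
  else if x + 1 = 2*ℓ + 1 - (p + r) ∧ 1 ≤ r then 2*ℓ - p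
  else x

noncomputable def Pmat (ℓ p r : ℕ) : Matrix (Fin (2*ℓ+1)) (Fin (2*ℓ+1)) ℂ :=
  (List.ofFn fun a : Fin r => s ℓ (p + a.val + 1)).prod

lemma pf_lt (ℓ p r : ℕ) (h : p + r + 1 ≤ ℓ) : ∀ x < 2*ℓ+1, pf ℓ p r x < 2*ℓ+1 := by
  intro x hx; unfold pf; split_ifs <;> omega

set_option maxHeartbeats 2000000 in
lemma Pmat_eq (ℓ p : ℕ) : ∀ r, p + r + 1 ≤ ℓ → Pmat ℓ p r = mono ℓ (pf ℓ p r) (fun _ => 1) := by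
  intro r
  induction r with
  | zero =>
    intro h
    unfold Pmat
    rw [show (List.ofFn fun a : Fin 0 => s ℓ (p + a.val + 1)) = [] by simp, List.prod_nil,
      ← mono_one ℓ]
    apply mono_congr
    · intro x hx; simp only [id_eq]; unfold pf; split_ifs <;> omega
    · intro x hx; rfl
  | succ r ih =>
    intro h
    have hPrev : Pmat ℓ p (r+1) = Pmat ℓ p r * s ℓ (p + r + 1) := by
      unfold Pmat
      rw [ofFn_nat_succ' (fun a => s ℓ (p + a + 1)) rfl, List.prod_append, List.prod_singleton]
    rw [hPrev, ih (by omega), s_eq ℓ (p+r+1) (by omega) (by omega),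
      mono_mul ℓ _ _ _ _ (sf_lt ℓ (p+r+1) (by omega) (by omega))]
    apply mono_congr
    · intro x hx
      set k := p + r + 1 with hk
      show pf ℓ p r (sf ℓ k x) = pf ℓ p (r+1) x
      rcases (by omega : x + 1 = k ∨ x + 1 = k + 1 ∨ x + 1 = 2*ℓ - k + 1 ∨
          x + 1 = 2*ℓ - k + 2 ∨ (x + 1 ≠ k ∧ x + 1 ≠ k + 1 ∧ x + 1 ≠ 2*ℓ - k + 1 ∧
          x + 1 ≠ 2*ℓ - k + 2)) with h5 | h5 | h5 | h5 | h5
      · rw [show sf ℓ k x = x + 1 by unfold sf; split_ifs <;> omega]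
        unfold pf; split_ifs <;> omega
      · rw [show sf ℓ k x = x - 1 by unfold sf; split_ifs <;> omega]
        unfold pf; split_ifs <;> omega
      · rw [show sf ℓ k x = x + 1 by unfold sf; split_ifs <;> omega]
        unfold pf; split_ifs <;> omega
      · rw [show sf ℓ k x = x - 1 by unfold sf; split_ifs <;> omega]
        unfold pf; split_ifs <;> omega
      · rw [show sf ℓ k x = x by unfold sf; split_ifs <;> omega]
        unfold pf; split_ifs <;> omega
    · intro x hx; simp

/-- the 2a-cycle map of a block at offset `p` with size `a`. -/
def blockCyc (ℓ p a : ℕ) : ℕ → ℕ := fun x =>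
  if p + 1 ≤ x + 1 ∧ x + 1 ≤ p + a - 1 then x + 1
  else if x + 1 = p + a then 2*ℓ - p
  else if x + 1 = 2*ℓ + 2 - (p + a) then p
  else if 2*ℓ + 2 - (p + a) < x + 1 ∧ x + 1 ≤ 2*ℓ + 1 - p then x - 1
  else x

noncomputable def Bmat (ℓ p a : ℕ) : Matrix (Fin (2*ℓ+1)) (Fin (2*ℓ+1)) ℂ :=
  Pmat ℓ p (a - 1) * t ℓ (p + a)

lemma blockCyc_lt (ℓ p a : ℕ) (h1 : 1 ≤ a) (h2 : p + a ≤ ℓ) :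
    ∀ x < 2*ℓ+1, blockCyc ℓ p a x < 2*ℓ+1 := by
  intro x hx; unfold blockCyc; split_ifs <;> omega

lemma blockCyc_mid (ℓ p a : ℕ) (h1 : 1 ≤ a) (h2 : p + a ≤ ℓ) (x : ℕ) (hx : x < 2*ℓ+1) :
    blockCyc ℓ p a x = ℓ ↔ x = ℓ := by
  unfold blockCyc; split_ifs <;> omega

set_option maxHeartbeats 2000000 in
lemma Bmat_eq (ℓ p a : ℕ) (h1 : 1 ≤ a) (h2 : p + a ≤ ℓ) :
    Bmat ℓ p a = mono ℓ (blockCyc ℓ p a) (tsign ℓ) := by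
  unfold Bmat
  rw [Pmat_eq ℓ p (a-1) (by omega), t_eq ℓ (ℓ - (p+a)) (p+a) (by omega) (by omega),
    mono_mul ℓ _ _ _ _ (tc_lt ℓ (p+a) (by omega) (by omega))]
  apply mono_congr
  · intro x hx
    show pf ℓ p (a-1) (tc ℓ (p+a) x) = blockCyc ℓ p a x
    rcases (by omega : x + 1 = p + a ∨ x + 1 = 2*ℓ + 2 - (p + a) ∨
        (x + 1 ≠ p + a ∧ x + 1 ≠ 2*ℓ + 2 - (p + a))) with h5 | h5 | h5
    · rw [show tc ℓ (p+a) x = 2*ℓ + 1 - (p + a) by unfold tc; split_ifs <;> omega]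
      unfold pf blockCyc; split_ifs <;> omega
    · rw [show tc ℓ (p+a) x = p + a - 1 by unfold tc; split_ifs <;> omega]
      unfold pf blockCyc; split_ifs <;> omega
    · rw [show tc ℓ (p+a) x = x by unfold tc; split_ifs <;> omega]
      unfold pf blockCyc; split_ifs <;> omega
  · intro x hx; simp [tsign]

def Cf (ℓ : ℕ) : ℕ → List ℕ → (ℕ → ℕ)
  | _, [] => id
  | p, a :: as => blockCyc ℓ p a ∘ Cf ℓ (p + a) as

noncomputable def nn (ℓ : ℕ) : ℕ → List ℕ → Matrix (Fin (2*ℓ+1)) (Fin (2*ℓ+1)) ℂ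
  | _, [] => 1
  | p, a :: as => Bmat ℓ p a * nn ℓ (p + a) as

lemma Cf_lt (ℓ : ℕ) : ∀ (as : List ℕ) (p : ℕ), (∀ b ∈ as, 1 ≤ b) → p + as.sum ≤ ℓ →
    ∀ x < 2*ℓ+1, Cf ℓ p as x < 2*ℓ+1 := by
  intro as
  induction as with
  | nil => intro p _ _ x hx; exact hx
  | cons a as ih =>
    intro p hpos hsum x hx
    have h1 : 1 ≤ a := hpos a (by simp)
    have hs : (a :: as).sum = a + as.sum := by simp
    show blockCyc ℓ p a (Cf ℓ (p+a) as x) < 2*ℓ+1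
    exact blockCyc_lt ℓ p a h1 (by omega) _
      (ih (p+a) (fun b hb => hpos b (by simp [hb])) (by omega) x hx)

lemma Cf_mid (ℓ : ℕ) : ∀ (as : List ℕ) (p : ℕ), (∀ b ∈ as, 1 ≤ b) → p + as.sum ≤ ℓ →
    ∀ x < 2*ℓ+1, (Cf ℓ p as x = ℓ ↔ x = ℓ) := by
  intro as
  induction as with
  | nil => intro p _ _ x hx; exact Iff.rfl
  | cons a as ih =>
    intro p hpos hsum x hx
    have h1 : 1 ≤ a := hpos a (by simp)
    have hs : (a :: as).sum = a + as.sum := by simp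
    have htail := ih (p+a) (fun b hb => hpos b (by simp [hb])) (by omega) x hx
    have hlt := Cf_lt ℓ as (p+a) (fun b hb => hpos b (by simp [hb])) (by omega) x hx
    show blockCyc ℓ p a (Cf ℓ (p+a) as x) = ℓ ↔ x = ℓ
    rw [blockCyc_mid ℓ p a h1 (by omega) _ hlt, htail]

lemma nn_eq (ℓ : ℕ) : ∀ (as : List ℕ) (p : ℕ), (∀ b ∈ as, 1 ≤ b) → p + as.sum ≤ ℓ →
    nn ℓ p as = mono ℓ (Cf ℓ p as) (fun x => if x = ℓ then (-1)^as.length else 1) := by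
  intro as
  induction as with
  | nil =>
    intro p _ _
    show (1 : Matrix (Fin (2*ℓ+1)) (Fin (2*ℓ+1)) ℂ) = _
    rw [← mono_one ℓ]
    apply mono_congr
    · intro x hx; rfl
    · intro x hx; simp
  | cons a as ih =>
    intro p hpos hsum
    have h1 : 1 ≤ a := hpos a (by simp)
    have hs : (a :: as).sum = a + as.sum := by simp
    have hpos' : ∀ b ∈ as, 1 ≤ b := fun b hb => hpos b (by simp [hb])
    show Bmat ℓ p a * nn ℓ (p+a) as = _
    rw [ih (p+a) hpos' (by omega), Bmat_eq ℓ p a h1 (by omega),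
      mono_mul ℓ _ _ _ _ (Cf_lt ℓ as (p+a) hpos' (by omega))]
    apply mono_congr
    · intro x hx; rfl
    · intro x hx
      have hmid := Cf_mid ℓ as (p+a) hpos' (by omega) x hx
      simp only [tsign, List.length_cons]
      by_cases hxm : x = ℓ
      · rw [if_pos hxm, if_pos (hmid.mpr hxm), if_pos hxm, pow_succ]
      · rw [if_neg hxm, if_neg (fun hc => hxm (hmid.mp hc)), if_neg hxm, one_mul]


/-- position `q` within the `2a`-cycle of the block at offset `p`. -/
def phi (ℓ p a q : ℕ) : ℕ := if q < a then p + q else 2*ℓ - p - (q - a)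

/-- `Blk p0 as p a` : the block decomposition starting at offset `p0` with sizes `as`
contains a block at offset `p` with size `a`. -/
def Blk : ℕ → List ℕ → ℕ → ℕ → Prop
  | _, [], _, _ => False
  | p0, b :: bs, p, a => (p = p0 ∧ a = b) ∨ Blk (p0 + b) bs p a

lemma Blk_bounds : ∀ (as : List ℕ) (p0 p a : ℕ), Blk p0 as p a → (∀ b ∈ as, 1 ≤ b) →
    p0 ≤ p ∧ 1 ≤ a ∧ p + a ≤ p0 + as.sum := by
  intro as
  induction as with
  | nil => intro p0 p a h _; exact absurd h id
  | cons b bs ih =>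
    intro p0 p a h hpos
    have hb : 1 ≤ b := hpos b (by simp)
    rcases h with ⟨rfl, rfl⟩ | h
    · simp; omega
    · have := ih (p0 + b) p a h (fun c hc => hpos c (by simp [hc]))
      simp only [List.sum_cons]; omega

lemma phi_lt (ℓ p a q : ℕ) (h1 : 1 ≤ a) (h2 : p + a ≤ ℓ) (hq : q < 2*a) :
    phi ℓ p a q < 2*ℓ+1 := by unfold phi; split_ifs <;> omega

lemma Cf_outside (ℓ : ℕ) : ∀ (as : List ℕ) (p0 : ℕ), (∀ b ∈ as, 1 ≤ b) →
    p0 + as.sum ≤ ℓ → ∀ x, (x + 1 ≤ p0 ∨ (p0 + as.sum < x + 1 ∧ x + 1 < 2*ℓ + 2 - (p0 + as.sum)) ∨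
      2*ℓ + 1 - p0 < x + 1) → Cf ℓ p0 as x = x := by
  intro as
  induction as with
  | nil => intro p0 _ _ x _; rfl
  | cons b bs ih =>
    intro p0 hpos hsum x hout
    have hb : 1 ≤ b := hpos b (by simp)
    have hs : (b :: bs).sum = b + bs.sum := by simp
    have htail : Cf ℓ (p0 + b) bs x = x := by
      apply ih (p0 + b) (fun c hc => hpos c (by simp [hc])) (by omega)
      omega
    show blockCyc ℓ p0 b (Cf ℓ (p0 + b) bs x) = x
    rw [htail]; unfold blockCyc; split_ifs <;> omega

lemma blockCyc_phi (ℓ p a q : ℕ) (h1 : 1 ≤ a) (h2 : p + a ≤ ℓ) (hq : q < 2*a) :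
    blockCyc ℓ p a (phi ℓ p a q) = phi ℓ p a ((q+1) % (2*a)) := by
  rcases Nat.lt_or_ge (q+1) (2*a) with hlt | hge
  · rw [Nat.mod_eq_of_lt hlt]; unfold blockCyc phi; split_ifs <;> omega
  · have he : q + 1 = 2*a := by omega
    rw [he, Nat.mod_self]; unfold blockCyc phi; split_ifs <;> omega

lemma blockCyc_fix_phi (ℓ p0 b p a q : ℕ) (hb : 1 ≤ b) (hp : p0 + b ≤ p) (h1 : 1 ≤ a)
    (h2 : p + a ≤ ℓ) (hq : q < 2*a) : blockCyc ℓ p0 b (phi ℓ p a q) = phi ℓ p a q := by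
  unfold blockCyc phi; split_ifs <;> omega

lemma Cf_phi (ℓ : ℕ) : ∀ (as : List ℕ) (p0 : ℕ), (∀ b ∈ as, 1 ≤ b) → p0 + as.sum ≤ ℓ →
    ∀ p a q, Blk p0 as p a → q < 2*a →
    Cf ℓ p0 as (phi ℓ p a q) = phi ℓ p a ((q+1) % (2*a)) := by
  intro as
  induction as with
  | nil => intro _ _ _ _ _ _ h; exact absurd h id
  | cons b bs ih =>
    intro p0 hpos hsum p a q hblk hq
    have hb : 1 ≤ b := hpos b (by simp)
    have hs : (b :: bs).sum = b + bs.sum := by simp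
    show blockCyc ℓ p0 b (Cf ℓ (p0 + b) bs (phi ℓ p a q)) = _
    rcases hblk with ⟨rfl, rfl⟩ | hblk
    · rw [Cf_outside ℓ bs (p + a) (fun c hc => hpos c (by simp [hc])) (by omega)]
      · exact blockCyc_phi ℓ p a q hb (by omega) hq
      · unfold phi; split_ifs <;> omega
    · have hbd := Blk_bounds bs (p0 + b) p a hblk (fun c hc => hpos c (by simp [hc]))
      rw [ih (p0 + b) (fun c hc => hpos c (by simp [hc])) (by omega) p a q hblk hq]
      exact blockCyc_fix_phi ℓ p0 b p a _ hb (by omega) (by omega) (by omega)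
        (Nat.mod_lt _ (by omega))

lemma Cf_iter (ℓ : ℕ) (as : List ℕ) (p0 : ℕ) (hpos : ∀ b ∈ as, 1 ≤ b)
    (hsum : p0 + as.sum ≤ ℓ) (p a : ℕ) (hblk : Blk p0 as p a) :
    ∀ (m q : ℕ), q < 2*a → (Cf ℓ p0 as)^[m] (phi ℓ p a q) = phi ℓ p a ((q+m) % (2*a)) := by
  have ha : 1 ≤ a := (Blk_bounds as p0 p a hblk hpos).2.1
  intro m
  induction m with
  | zero => intro q hq; simp [Nat.mod_eq_of_lt hq]
  | succ m ihm =>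
    intro q hq
    rw [Function.iterate_succ_apply', ihm q hq,
      Cf_phi ℓ as p0 hpos hsum p a _ hblk (Nat.mod_lt _ (by omega)), Nat.mod_add_mod]
    rw [Nat.add_assoc]

lemma mod_fix_iff (n q m : ℕ) (hn : 0 < n) (hq : q < n) : ((q + m) % n = q ↔ m % n = 0) := by
  constructor
  · intro h
    have hd := Nat.div_add_mod (q + m) n
    rw [h] at hd
    have : m = n * ((q + m) / n) := by omega
    rw [this, Nat.mul_mod_right]
  · intro h
    have hd := Nat.div_add_mod m n
    have hm : m = n * (m / n) := by omega
    rw [hm, Nat.add_mul_mod_self_left, Nat.mod_eq_of_lt hq]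

lemma phi_inj (ℓ p a : ℕ) (h2 : p + a ≤ ℓ) {q q' : ℕ} (hq : q < 2*a) (hq' : q' < 2*a)
    (h : phi ℓ p a q = phi ℓ p a q') : q = q' := by
  unfold phi at h; split_ifs at h <;> omega

lemma Cf_cover (ℓ : ℕ) : ∀ (as : List ℕ) (p0 : ℕ), (∀ b ∈ as, 1 ≤ b) → p0 + as.sum ≤ ℓ →
    ∀ x, ((p0 + 1 ≤ x + 1 ∧ x + 1 ≤ p0 + as.sum) ∨
      (2*ℓ + 2 - (p0 + as.sum) ≤ x + 1 ∧ x + 1 ≤ 2*ℓ + 1 - p0)) →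
    ∃ p a q, Blk p0 as p a ∧ q < 2*a ∧ x = phi ℓ p a q := by
  intro as
  induction as with
  | nil => intro p0 _ hsum x hx; simp only [List.sum_nil] at hx; omega
  | cons b bs ih =>
    intro p0 hpos hsum x hx
    have hb : 1 ≤ b := hpos b (by simp)
    have hs : (b :: bs).sum = b + bs.sum := by simp
    rcases (by omega : (p0 + 1 ≤ x + 1 ∧ x + 1 ≤ p0 + b) ∨
        (2*ℓ + 2 - (p0 + b) ≤ x + 1 ∧ x + 1 ≤ 2*ℓ + 1 - p0) ∨
        (p0 + b + 1 ≤ x + 1 ∧ x + 1 ≤ p0 + b + bs.sum) ∨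
        (2*ℓ + 2 - (p0 + b + bs.sum) ≤ x + 1 ∧ x + 1 ≤ 2*ℓ + 1 - (p0 + b))) with h | h | h | h
    · exact ⟨p0, b, x - p0, Or.inl ⟨rfl, rfl⟩, by omega, by unfold phi; split_ifs <;> omega⟩
    · exact ⟨p0, b, b + (2*ℓ - p0 - x), Or.inl ⟨rfl, rfl⟩, by omega,
        by unfold phi; split_ifs <;> omega⟩
    · obtain ⟨p, a, q, hblk, hq, hphi⟩ := ih (p0 + b) (fun c hc => hpos c (by simp [hc]))
        (by omega) x (by omega)
      exact ⟨p, a, q, Or.inr hblk, hq, hphi⟩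
    · obtain ⟨p, a, q, hblk, hq, hphi⟩ := ih (p0 + b) (fun c hc => hpos c (by simp [hc]))
        (by omega) x (by omega)
      exact ⟨p, a, q, Or.inr hblk, hq, hphi⟩

-- === new material ===

lemma Cf_iter_mid (ℓ : ℕ) (as : List ℕ) (hpos : ∀ b ∈ as, 1 ≤ b) (hsum : as.sum ≤ ℓ)
    (m : ℕ) : (Cf ℓ 0 as)^[m] ℓ = ℓ := by
  induction m with
  | zero => rfl
  | succ m ih =>
    rw [Function.iterate_succ_apply', ih]
    exact (Cf_mid ℓ as 0 hpos (by omega) ℓ (by omega)).mpr rfl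

lemma mono_pow_sign (ℓ : ℕ) (as : List ℕ) (hpos : ∀ b ∈ as, 1 ≤ b) (hsum : as.sum ≤ ℓ)
    (m : ℕ) :
    (mono ℓ (Cf ℓ 0 as) (fun x => if x = ℓ then (-1)^as.length else 1))^m =
      mono ℓ ((Cf ℓ 0 as)^[m]) (fun x => if x = ℓ then ((-1 : ℂ)^as.length)^m else 1) := by
  induction m with
  | zero =>
    rw [pow_zero, ← mono_one ℓ]
    apply mono_congr
    · intro x hx; simp
    · intro x hx; simp
  | succ m ih =>
    rw [pow_succ, ih, mono_mul ℓ _ _ _ _ (Cf_lt ℓ as 0 hpos (by omega)),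
      ← Function.iterate_succ]
    apply mono_congr
    · intro x hx; rfl
    · intro x hx
      by_cases hxm : x = ℓ
      · rw [if_pos hxm, if_pos ((Cf_mid ℓ as 0 hpos (by omega) x hx).mpr hxm),
          if_pos hxm, pow_succ]
        ring
      · rw [if_neg hxm, if_neg (fun hc => hxm ((Cf_mid ℓ as 0 hpos (by omega) x hx).mp hc)),
          if_neg hxm, one_mul]

/-- support finset of the blocks within `[p+1, p+s]` and its mirror. -/
def Fs (ℓ p s : ℕ) : Finset (Fin (2*ℓ+1)) :=
  Finset.univ.filter (fun x => (p + 1 ≤ (x:ℕ) + 1 ∧ (x:ℕ) + 1 ≤ p + s) ∨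
    (2*ℓ + 2 - (p + s) ≤ (x:ℕ) + 1 ∧ (x:ℕ) + 1 ≤ 2*ℓ + 1 - p))

lemma sum_fix_block (ℓ : ℕ) (as0 : List ℕ) (hpos0 : ∀ b ∈ as0, 1 ≤ b)
    (hsum0 : as0.sum ≤ ℓ) (p a m : ℕ) (hblk : Blk 0 as0 p a) :
    ∑ x ∈ Fs ℓ p a, (if (x:ℕ) = (Cf ℓ 0 as0)^[m] (x:ℕ) then (1:ℂ) else 0) =
      if 2*a ∣ m then ((2*a : ℕ) : ℂ) else 0 := by
  obtain ⟨-, ha, hpa⟩ := Blk_bounds as0 0 p a hblk hpos0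
  have hpa' : p + a ≤ ℓ := by omega
  have key : ∑ q ∈ Finset.range (2*a), (if 2*a ∣ m then (1:ℂ) else 0) =
      ∑ x ∈ Fs ℓ p a, (if (x:ℕ) = (Cf ℓ 0 as0)^[m] (x:ℕ) then (1:ℂ) else 0) := by
    refine Finset.sum_bij' (fun q hq => (⟨phi ℓ p a q,
        phi_lt ℓ p a q ha hpa' (Finset.mem_range.mp hq)⟩ : Fin (2*ℓ+1)))
      (fun x _ => if (x:ℕ) + 1 ≤ p + a then (x:ℕ) - p else a + (2*ℓ - p - (x:ℕ)))
      ?_ ?_ ?_ ?_ ?_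
    · intro q hq
      have hq' := Finset.mem_range.mp hq
      simp only [Fs, Finset.mem_filter, Finset.mem_univ, true_and]
      unfold phi; split_ifs <;> omega
    · intro x hx
      simp only [Fs, Finset.mem_filter, Finset.mem_univ, true_and] at hx
      rw [Finset.mem_range]
      split_ifs <;> omega
    · intro q hq
      have hq' := Finset.mem_range.mp hq
      simp only
      unfold phi; split_ifs <;> omega
    · intro x hx
      simp only [Fs, Finset.mem_filter, Finset.mem_univ, true_and] at hx
      apply Fin.ext
      simp only
      unfold phi; split_ifs <;> omega
    · intro q hq
      have hq' := Finset.mem_range.mp hq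
      have hiter := Cf_iter ℓ as0 0 hpos0 (by omega) p a hblk m q hq'
      have hcond : ((phi ℓ p a q : ℕ) = (Cf ℓ 0 as0)^[m] (phi ℓ p a q)) ↔ (2*a ∣ m) := by
        rw [hiter]
        constructor
        · intro h
          have hmod : (q + m) % (2*a) = q :=
            (phi_inj ℓ p a hpa' (Nat.mod_lt _ (by omega)) hq' h.symm)
          exact Nat.dvd_of_mod_eq_zero ((mod_fix_iff (2*a) q m (by omega) hq').mp hmod)
        · intro h
          obtain ⟨c, rfl⟩ := h
          rw [(mod_fix_iff (2*a) q (2*a*c) (by omega) hq').mpr (Nat.mul_mod_right _ _)]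
      show (if 2*a ∣ m then (1:ℂ) else 0) =
        (if (phi ℓ p a q : ℕ) = (Cf ℓ 0 as0)^[m] (phi ℓ p a q) then (1:ℂ) else 0)
      simp only [hcond]
  rw [← key, Finset.sum_const, Finset.card_range]
  split_ifs with h <;> simp

lemma Fs_empty (ℓ p : ℕ) : Fs ℓ p 0 = ∅ := by
  ext x
  simp only [Fs, Finset.mem_filter, Finset.mem_univ, true_and, Finset.notMem_empty, iff_false]
  omega

lemma Fs_split (ℓ p b s' : ℕ) (hb : 1 ≤ b) (hs : p + b + s' ≤ ℓ) :
    Fs ℓ p (b + s') = Fs ℓ p b ∪ Fs ℓ (p + b) s' ∧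
      Disjoint (Fs ℓ p b) (Fs ℓ (p + b) s') := by
  constructor
  · ext x
    simp only [Fs, Finset.mem_union, Finset.mem_filter, Finset.mem_univ, true_and]
    have := x.isLt
    omega
  · rw [Finset.disjoint_left]
    intro x hx hx'
    simp only [Fs, Finset.mem_filter, Finset.mem_univ, true_and] at hx hx'
    omega

lemma sum_fix_list (ℓ : ℕ) (as0 : List ℕ) (hpos0 : ∀ b ∈ as0, 1 ≤ b)
    (hsum0 : as0.sum ≤ ℓ) (m : ℕ) :
    ∀ (as : List ℕ) (p : ℕ), (∀ b ∈ as, 1 ≤ b) → p + as.sum ≤ ℓ →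
      (∀ p' a', Blk p as p' a' → Blk 0 as0 p' a') →
      ∑ x ∈ Fs ℓ p as.sum, (if (x:ℕ) = (Cf ℓ 0 as0)^[m] (x:ℕ) then (1:ℂ) else 0) =
        (as.map (fun a => if 2*a ∣ m then ((2*a : ℕ) : ℂ) else 0)).sum := by
  intro as
  induction as with
  | nil => intro p _ _ _; simp [Fs_empty]
  | cons b bs ih =>
    intro p hpos hsum htr
    have hb : 1 ≤ b := hpos b (by simp)
    have hs : (b :: bs).sum = b + bs.sum := by simp
    obtain ⟨hcup, hdisj⟩ := Fs_split ℓ p b bs.sum hb (by omega)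
    rw [hs, hcup, Finset.sum_union hdisj,
      sum_fix_block ℓ as0 hpos0 hsum0 p b m (htr p b (Or.inl ⟨rfl, rfl⟩)),
      ih (p + b) (fun c hc => hpos c (by simp [hc])) (by omega)
        (fun p' a' h => htr p' a' (Or.inr h)),
      List.map_cons, List.sum_cons]

lemma trace_pow (ℓ : ℕ) (as : List ℕ) (hpos : ∀ b ∈ as, 1 ≤ b) (hsum : as.sum = ℓ)
    (m : ℕ) :
    ((nn ℓ 0 as)^m).trace =
      ((-1 : ℂ)^as.length)^m + (as.map (fun a => if 2*a ∣ m then ((2*a : ℕ) : ℂ) else 0)).sum := by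
  have hsum' : (0:ℕ) + as.sum ≤ ℓ := by omega
  rw [nn_eq ℓ as 0 hpos hsum', mono_pow_sign ℓ as hpos (by omega), mono_trace]
  have hmid : ((⟨ℓ, by omega⟩ : Fin (2*ℓ+1)) : ℕ) = ℓ := rfl
  rw [← Finset.sum_erase_add _ _ (Finset.mem_univ (⟨ℓ, by omega⟩ : Fin (2*ℓ+1)))]
  have h1 : (if ((⟨ℓ, by omega⟩ : Fin (2*ℓ+1)) : ℕ) =
      (Cf ℓ 0 as)^[m] ((⟨ℓ, by omega⟩ : Fin (2*ℓ+1)) : ℕ)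
      then (if ((⟨ℓ, by omega⟩ : Fin (2*ℓ+1)) : ℕ) = ℓ then ((-1:ℂ)^as.length)^m else 1) else 0) =
      ((-1:ℂ)^as.length)^m := by
    rw [hmid, Cf_iter_mid ℓ as hpos (by omega) m, if_pos rfl, if_pos rfl]
  rw [h1]
  have h2 : Finset.univ.erase (⟨ℓ, by omega⟩ : Fin (2*ℓ+1)) = Fs ℓ 0 ℓ := by
    ext x
    simp only [Finset.mem_erase, Finset.mem_univ, and_true, Fs, Finset.mem_filter, true_and,
      ne_eq, Fin.ext_iff, hmid]
    have := x.isLt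
    omega
  rw [h2]
  have h3 : ∀ x ∈ Fs ℓ 0 ℓ,
      (if (x:ℕ) = (Cf ℓ 0 as)^[m] (x:ℕ)
        then (if (x:ℕ) = ℓ then ((-1:ℂ)^as.length)^m else 1) else 0) =
      (if (x:ℕ) = (Cf ℓ 0 as)^[m] (x:ℕ) then (1:ℂ) else 0) := by
    intro x hx
    simp only [Fs, Finset.mem_filter, Finset.mem_univ, true_and] at hx
    have hxne : (x:ℕ) ≠ ℓ := by omega
    rw [if_neg hxne]
  rw [Finset.sum_congr rfl h3, show Fs ℓ 0 ℓ = Fs ℓ 0 as.sum by rw [hsum],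
    sum_fix_list ℓ as hpos (by omega) m as 0 hpos (by omega) (fun _ _ h => h)]
  ring


-- ============ bridge n = nn ============
lemma sum_Iio_take {μ : ℕ} (L : Fin μ → ℕ) (ν : Fin μ) :
    ∑ j ∈ Finset.Iio ν, L j = ((List.ofFn L).take ν.val).sum := by
  rw [List.sum_take_ofFn]
  apply Finset.sum_congr _ (fun _ _ => rfl)
  ext j
  simp only [Finset.mem_Iio, Finset.mem_filter, Finset.mem_univ, true_and, Fin.lt_def]

lemma n_eq_nn_aux (ℓ : ℕ) : ∀ (μ : ℕ) (L : Fin μ → ℕ) (p : ℕ),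
    (List.ofFn fun ν : Fin μ =>
      (List.ofFn fun x : Fin (L ν - 1) =>
        s ℓ (p + (∑ j ∈ Finset.Iio ν, L j) + x.val + 1)).prod *
      t ℓ (p + (∑ j ∈ Finset.Iio ν, L j) + L ν)).prod = nn ℓ p (List.ofFn L) := by
  intro μ
  induction μ with
  | zero => intro L p; rw [List.ofFn_zero, List.ofFn_zero, List.prod_nil]; rfl
  | succ μ ih =>
    intro L p
    rw [List.ofFn_succ, List.prod_cons]
    rw [show List.ofFn L = L 0 :: List.ofFn (fun ν : Fin μ => L ν.succ) from List.ofFn_succ (f := L)]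
    show _ = Bmat ℓ p (L 0) * nn ℓ (p + L 0) (List.ofFn (fun ν : Fin μ => L ν.succ))
    have h0 : ∑ j ∈ Finset.Iio (0 : Fin (μ+1)), L j = 0 := by
      rw [sum_Iio_take]; simp
    have hsuc : ∀ ν : Fin μ, ∑ j ∈ Finset.Iio (Fin.succ ν), L j =
        L 0 + ∑ j ∈ Finset.Iio ν, L (Fin.succ j) := by
      intro ν
      rw [sum_Iio_take, sum_Iio_take (fun j => L (Fin.succ j)),
        show List.ofFn L = L 0 :: List.ofFn (fun ν : Fin μ => L ν.succ) from List.ofFn_succ (f := L),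
        Fin.val_succ, List.take_succ_cons, List.sum_cons]
    refine congrArg₂ (· * ·) ?_ ?_
    · -- head factor
      unfold Bmat Pmat
      simp only [h0, Nat.add_zero]
    · -- tail
      rw [← ih (fun ν => L ν.succ) (p + L 0)]
      simp only [hsuc, ← Nat.add_assoc]

lemma n_eq_nn (ℓ μ : ℕ) (L : Fin μ → ℕ) : n ℓ μ L = nn ℓ 0 (List.ofFn L) := by
  have h := n_eq_nn_aux ℓ μ L 0
  simp only [Nat.zero_add] at h
  unfold n
  exact h

-- ============ conjugation invariance ============
lemma conj_pow {N : ℕ} (g A : Matrix (Fin N) (Fin N) ℂ) (hg : IsUnit g.det) (m : ℕ) :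
    (g * A * g⁻¹)^m = g * A^m * g⁻¹ := by
  induction m with
  | zero => rw [pow_zero, pow_zero, mul_one, Matrix.mul_nonsing_inv g hg]
  | succ m ih =>
    rw [pow_succ, pow_succ, ih]
    calc g * A^m * g⁻¹ * (g * A * g⁻¹) = g * A^m * (g⁻¹ * g) * A * g⁻¹ := by
          noncomm_ring
      _ = g * (A^m * A) * g⁻¹ := by rw [Matrix.nonsing_inv_mul g hg]; noncomm_ring

lemma trace_conj {N : ℕ} (g B : Matrix (Fin N) (Fin N) ℂ) (hg : IsUnit g.det) :
    (g * B * g⁻¹).trace = B.trace := by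
  rw [Matrix.trace_mul_comm (g * B) g⁻¹, ← Matrix.mul_assoc,
    Matrix.nonsing_inv_mul g hg, Matrix.one_mul]

-- ============ endgame combinatorics ============
lemma map_sum_cast (k : ℕ) : ∀ as : List ℕ,
    ((as.map fun a => if 2*a ∣ 2*k then ((2*a : ℕ) : ℂ) else 0)).sum =
      (((as.map fun a => if a ∣ k then 2*a else 0).sum : ℕ) : ℂ) := by
  intro as
  induction as with
  | nil => simp
  | cons a as ih =>
    simp only [List.map_cons, List.sum_cons, ih, Nat.cast_add]
    congr 1
    by_cases h : a ∣ k
    · rw [if_pos h, if_pos (mul_dvd_mul_left 2 h)]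
    · rw [if_neg h, if_neg (fun hc => h ((mul_dvd_mul_iff_left (two_ne_zero)).mp hc))]
      simp

def Tn (as : List ℕ) (k : ℕ) : ℕ := (as.map fun a => if a ∣ k then 2*a else 0).sum

lemma Tn_divisors (d : ℕ) (hd : 1 ≤ d) : ∀ as : List ℕ,
    Tn as d = ∑ e ∈ d.divisors, 2 * e * (as.count e) := by
  intro as
  induction as with
  | nil => simp [Tn]
  | cons a as ih =>
    show (if a ∣ d then 2*a else 0) + Tn as d = _
    rw [ih]
    have hc : ∀ e, (a :: as).count e = as.count e + if a = e then 1 else 0 := by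
      intro e; simp [List.count_cons]
    have : ∑ e ∈ d.divisors, 2 * e * ((a :: as).count e) =
        ∑ e ∈ d.divisors, (2 * e * (as.count e) + if a = e then 2 * e else 0) := by
      apply Finset.sum_congr rfl
      intro e _
      rw [hc e]
      split_ifs <;> ring
    rw [this, Finset.sum_add_distrib]
    have : ∑ e ∈ d.divisors, (if a = e then 2 * e else 0) = if a ∣ d then 2 * a else 0 := by
      rw [Finset.sum_ite_eq d.divisors a (fun e => 2 * e)]
      by_cases h : a ∣ d
      · rw [if_pos (Nat.mem_divisors.mpr ⟨h, by omega⟩), if_pos h]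
      · rw [if_neg (fun hc => h (Nat.mem_divisors.mp hc).1), if_neg h]
    rw [this]
    omega

lemma count_eq_of_Tn (as as' : List ℕ) (hpos : ∀ b ∈ as, 1 ≤ b) (hpos' : ∀ b ∈ as', 1 ≤ b)
    (hT : ∀ k, Tn as k = Tn as' k) : ∀ d, as.count d = as'.count d := by
  intro d
  induction d using Nat.strong_induction_on with
  | _ d ih =>
    rcases Nat.eq_zero_or_pos d with rfl | hd
    · rw [List.count_eq_zero.mpr (fun hc => by have := hpos 0 hc; omega),
        List.count_eq_zero.mpr (fun hc => by have := hpos' 0 hc; omega)]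
    · have h1 := hT d
      rw [Tn_divisors d hd as, Tn_divisors d hd as'] at h1
      have hdd : d ∈ d.divisors := Nat.mem_divisors_self d (by omega)
      rw [← Finset.sum_erase_add _ _ hdd, ← Finset.sum_erase_add _ _ hdd] at h1
      have h2 : ∑ e ∈ d.divisors.erase d, 2 * e * (as.count e) =
          ∑ e ∈ d.divisors.erase d, 2 * e * (as'.count e) := by
        apply Finset.sum_congr rfl
        intro e he
        have he' := Finset.mem_erase.mp he
        have hed : e ∣ d := (Nat.mem_divisors.mp he'.2).1
        have : e < d := lt_of_le_of_ne (Nat.le_of_dvd hd hed) he'.1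
        rw [ih e this]
      rw [h2] at h1
      have hA : 2*d*(as.count d) = 2*d*(as'.count d) := by omega
      exact Nat.eq_of_mul_eq_mul_left (by omega) hA


/-- Let `ℓ ≥ 2` and let `ℓ⃗`, `ℓ⃗'` be partitions of `ℓ` into positive parts
with associated elements `n_{ℓ⃗}`, `n_{ℓ⃗'}` of `SO_{2ℓ+1}(ℂ)` (the `g ∈ SL_{2ℓ+1}(ℂ)` with
`g = (K g⁻¹ K)ᵀ`).  If some `g ∈ SO_{2ℓ+1}(ℂ)` satisfies `g n_{ℓ⃗} g⁻¹ = n_{ℓ⃗'}`, then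
`ℓ⃗ = ℓ⃗'`. -/
theorem stmt5 (ℓ : ℕ) (hℓ : 2 ≤ ℓ) (μ μ' : ℕ) (L : Fin μ → ℕ) (L' : Fin μ' → ℕ)
    (hpos : ∀ ν, 0 < L ν) (hmono : Monotone L) (hsum : ∑ ν, L ν = ℓ)
    (hpos' : ∀ ν, 0 < L' ν) (hmono' : Monotone L') (hsum' : ∑ ν, L' ν = ℓ)
    (g : Matrix (Fin (2*ℓ+1)) (Fin (2*ℓ+1)) ℂ)
    (hgdet : g.det = 1) (hgSO : g = (K ℓ * g⁻¹ * K ℓ)ᵀ)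
    (hconj : g * n ℓ μ L * g⁻¹ = n ℓ μ' L') :
    μ = μ' ∧ ∀ (ν : ℕ) (h1 : ν < μ) (h2 : ν < μ'), L ⟨ν, h1⟩ = L' ⟨ν, h2⟩ := by
  have hg : IsUnit g.det := by rw [hgdet]; exact isUnit_one
  set as : List ℕ := List.ofFn L with has
  set as' : List ℕ := List.ofFn L' with has'
  have hposl : ∀ b ∈ as, 1 ≤ b := by
    intro b hb
    obtain ⟨ν, hν⟩ := List.mem_ofFn.mp hb
    exact hν ▸ hpos ν
  have hposl' : ∀ b ∈ as', 1 ≤ b := by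
    intro b hb
    obtain ⟨ν, hν⟩ := List.mem_ofFn.mp hb
    exact hν ▸ hpos' ν
  have hsl : as.sum = ℓ := by rw [has, List.sum_ofFn]; exact hsum
  have hsl' : as'.sum = ℓ := by rw [has', List.sum_ofFn]; exact hsum'
  -- traces of powers agree
  have htr : ∀ m, ((nn ℓ 0 as')^m).trace = ((nn ℓ 0 as)^m).trace := by
    intro m
    rw [← n_eq_nn ℓ μ L, ← n_eq_nn ℓ μ' L', ← hconj, conj_pow g _ hg m, trace_conj _ _ hg]
  -- deduce the divisor sums agree
  have hT : ∀ k, Tn as k = Tn as' k := by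
    intro k
    have h := htr (2*k)
    rw [trace_pow ℓ as hposl hsl (2*k), trace_pow ℓ as' hposl' hsl' (2*k)] at h
    have hone : ∀ (m : ℕ), ((-1 : ℂ)^m)^(2*k) = 1 := by
      intro m
      rw [← pow_mul]
      exact Even.neg_one_pow ⟨m*k, by ring⟩
    rw [hone, hone, map_sum_cast k as, map_sum_cast k as'] at h
    have := add_left_cancel h
    exact_mod_cast this.symm
  have hcount := count_eq_of_Tn as as' hposl hposl' hT
  have hperm : List.Perm as as' := List.perm_iff_count.mpr (fun a => hcount a)
  have hsort : as.Pairwise (· ≤ ·) := (List.sortedLE_ofFn_iff.mpr hmono).pairwise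
  have hsort' : as'.Pairwise (· ≤ ·) := (List.sortedLE_ofFn_iff.mpr hmono').pairwise
  have he : as = as' := List.Perm.eq_of_pairwise' hsort hsort' hperm
  constructor
  · have := congrArg List.length he
    simpa [has, has'] using this
  · intro ν h1 h2
    have hl : ν < (List.ofFn L).length := by simpa using h1
    have hl' : ν < (List.ofFn L').length := by simpa using h2
    have hgete := List.getElem_of_eq he hl
    rwa [List.getElem_ofFn, List.getElem_ofFn] at hgete

end Stmt5
end

section
/- Let ℓ ≥ 2 and let ℓ⃗ = (ℓ_μ ≥ ⋯ ≥ ℓ_1) be a partition of ℓ into μ positive parts; set ℓ'_ν = ℓ_1 + ⋯ + ℓ_{ν-1} and n_{ℓ⃗} = ∏_{ν=1}^{μ} ( s_{ℓ'_ν+1} s_{ℓ'_ν+2} ⋯ s_{ℓ'_ν+ℓ_ν-1} · t_{ℓ'_ν+ℓ_ν} ) in Sp_{2ℓ}(ℂ). Then the characteristic polynomial of n_{ℓ⃗} acting on ℂ^{2ℓ} is ∏_{ν=1}^{μ} (t^{2ℓ_ν} + 1). -/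
set_option maxHeartbeats 1600000


open Polynomial Matrix

namespace Stmt6

/-- The matrix `s_k ∈ Sp_{2ℓ}(ℂ)` (1-based indices): `(s_k)_{ij} = 1` if `i = j` and
`i ∉ {k, k+1, 2ℓ-k, 2ℓ-k+1}`, or if `i ≠ j` and `{i,j} = {k, k+1}`, or if `i ≠ j` and
`{i,j} = {2ℓ-k, 2ℓ-k+1}`; all other entries are `0`. -/
noncomputable def s (ℓ k : ℕ) : Matrix (Fin (2*ℓ)) (Fin (2*ℓ)) ℂ :=
  Matrix.of fun i j =>
    if i = j ∧ i.val + 1 ≠ k ∧ i.val + 1 ≠ k + 1 ∧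
        i.val + 1 ≠ 2*ℓ - k ∧ i.val + 1 ≠ 2*ℓ - k + 1 then 1
    else if i ≠ j ∧ ((i.val + 1 = k ∧ j.val + 1 = k + 1) ∨
        (i.val + 1 = k + 1 ∧ j.val + 1 = k)) then 1
    else if i ≠ j ∧ ((i.val + 1 = 2*ℓ - k ∧ j.val + 1 = 2*ℓ - k + 1) ∨
        (i.val + 1 = 2*ℓ - k + 1 ∧ j.val + 1 = 2*ℓ - k)) then 1
    else 0

/-- The matrix `t_ℓ ∈ Sp_{2ℓ}(ℂ)`: `(t_ℓ)_{ij} = 1` if `1 ≤ i = j < ℓ` or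
`ℓ+1 < i = j ≤ 2ℓ`; `(t_ℓ)_{ℓ,ℓ+1} = 1`; `(t_ℓ)_{ℓ+1,ℓ} = -1`; other entries `0`. -/
noncomputable def tTop (ℓ : ℕ) : Matrix (Fin (2*ℓ)) (Fin (2*ℓ)) ℂ :=
  Matrix.of fun i j =>
    if i = j ∧ (i.val + 1 < ℓ ∨ ℓ + 1 < i.val + 1) then 1
    else if i.val + 1 = ℓ ∧ j.val + 1 = ℓ + 1 then 1
    else if i.val + 1 = ℓ + 1 ∧ j.val + 1 = ℓ then -1
    else 0

/-- `t_k = s_k s_{k+1} ⋯ s_{ℓ-1} · t_ℓ · s_{ℓ-1} ⋯ s_{k+1} s_k` (for `k = ℓ` this is `t_ℓ`). -/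
noncomputable def t (ℓ k : ℕ) : Matrix (Fin (2*ℓ)) (Fin (2*ℓ)) ℂ :=
  (List.ofFn fun a : Fin (ℓ - k) => s ℓ (k + a.val)).prod * tTop ℓ *
  (List.ofFn fun a : Fin (ℓ - k) => s ℓ (ℓ - 1 - a.val)).prod

/-- `n_{ℓ⃗} = ∏_{ν=1}^{μ} ( s_{ℓ'_ν+1} ⋯ s_{ℓ'_ν+ℓ_ν-1} · t_{ℓ'_ν+ℓ_ν} )`. -/
noncomputable def n (ℓ μ : ℕ) (L : Fin μ → ℕ) : Matrix (Fin (2*ℓ)) (Fin (2*ℓ)) ℂ :=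
  (List.ofFn fun ν : Fin μ =>
    (List.ofFn fun a : Fin (L ν - 1) =>
      s ℓ ((∑ j ∈ Finset.Iio ν, L j) + a.val + 1)).prod *
    t ℓ ((∑ j ∈ Finset.Iio ν, L j) + L ν)).prod


variable {N : ℕ}

/-- Monomial matrix: column `j` is `ε j • e_{f j}`. -/
noncomputable def mono (f : Fin N → Fin N) (ε : Fin N → ℂ) : Matrix (Fin N) (Fin N) ℂ :=
  Matrix.of fun i j => if i = f j then ε j else 0

lemma mono_mul (f g : Fin N → Fin N) (ε δ : Fin N → ℂ) :
    mono f ε * mono g δ = mono (f ∘ g) (fun j => ε (g j) * δ j) := by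
  ext i j
  simp only [mono, Matrix.mul_apply, Matrix.of_apply, Function.comp]
  rw [Finset.sum_eq_single (g j)]
  · by_cases h : i = f (g j) <;> simp [h]
  · intro b _ hb; simp [hb]
  · simp

lemma mono_id : mono (id : Fin N → Fin N) 1 = 1 := by
  ext i j
  simp [mono, Matrix.one_apply, eq_comm]

/-- fold of pairs (permutation part, sign part) corresponding to matrix product. -/
def comp2 (p q : (Fin N → Fin N) × (Fin N → ℂ)) : (Fin N → Fin N) × (Fin N → ℂ) :=
  (p.1 ∘ q.1, fun j => p.2 (q.1 j) * q.2 j)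

def big (l : List ((Fin N → Fin N) × (Fin N → ℂ))) : (Fin N → Fin N) × (Fin N → ℂ) :=
  l.foldr comp2 (id, 1)

lemma mono_big (l : List ((Fin N → Fin N) × (Fin N → ℂ))) :
    (l.map fun p => mono p.1 p.2).prod = mono (big l).1 (big l).2 := by
  induction l with
  | nil => simp [big, mono_id]
  | cons p l ih =>
      simp only [List.map_cons, List.prod_cons, ih, big, List.foldr_cons]
      rw [mono_mul]
      rfl

lemma big_fix (l : List ((Fin N → Fin N) × (Fin N → ℂ))) (j : Fin N)
    (h : ∀ q ∈ l, q.1 j = j ∧ q.2 j = 1) :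
    (big l).1 j = j ∧ (big l).2 j = 1 := by
  induction l with
  | nil => simp [big]
  | cons q l ih =>
      have hq := h q (by simp)
      have ih' := ih (fun q hq => h q (by simp [hq]))
      simp only [big, List.foldr_cons, comp2] at *
      simp [Function.comp, ih'.1, ih'.2, hq.1, hq.2]

lemma big_eval (l1 l2 : List ((Fin N → Fin N) × (Fin N → ℂ)))
    (p : (Fin N → Fin N) × (Fin N → ℂ)) (j : Fin N)
    (h2 : ∀ q ∈ l2, q.1 j = j ∧ q.2 j = 1)
    (h1 : ∀ q ∈ l1, q.1 (p.1 j) = p.1 j ∧ q.2 (p.1 j) = 1) :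
    (big (l1 ++ p :: l2)).1 j = p.1 j ∧ (big (l1 ++ p :: l2)).2 j = p.2 j := by
  have hsplit : big (l1 ++ p :: l2) = l1.foldr comp2 (comp2 p (big l2)) := by
    simp [big, List.foldr_append]
  have h2' := big_fix l2 j h2
  have hinner1 : (comp2 p (big l2)).1 j = p.1 j := by
    simp [comp2, h2'.1]
  have hinner2 : (comp2 p (big l2)).2 j = p.2 j := by
    simp [comp2, h2'.1, h2'.2]
  rw [hsplit]
  clear hsplit
  induction l1 with
  | nil => exact ⟨hinner1, hinner2⟩
  | cons q l1 ih =>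
      have hq := h1 q (by simp)
      have ih' := ih (fun r hr => h1 r (by simp [hr]))
      simp only [List.foldr_cons, comp2] at *
      simp [Function.comp, ih'.1, ih'.2, hq.1, hq.2]

open Fin.NatCast in
lemma charpoly_cycle (N' : ℕ) (hN : 1 ≤ N') (c : Fin (N' + 1) → ℂ) :
    (mono (finRotate (N' + 1)) c).charpoly = X ^ (N' + 1) - C (∏ j, c j) := by
  have hone : (1 : Fin (N' + 1)) ≠ 0 := by
    intro h; rw [Fin.one_eq_zero_iff] at h; omega
  have hrot_ne : ∀ i : Fin (N' + 1), finRotate (N' + 1) i ≠ i := by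
    intro i h
    rw [finRotate_succ_apply] at h
    have h0 : i + 1 = i + 0 := by simpa using h
    exact hone (add_left_cancel h0)
  have hperm_ne : (finRotate (N' + 1) : Equiv.Perm (Fin (N' + 1))) ≠ 1 := by
    intro h
    exact hrot_ne 0 (by rw [h]; rfl)
  set A := charmatrix (mono (finRotate (N' + 1)) c) with hA
  have hAdiag : ∀ i, A i i = X := by
    intro i
    have h0 : mono (finRotate (N' + 1)) c i i = 0 := by
      simp only [mono, Matrix.of_apply]
      exact if_neg (Ne.symm (hrot_ne i))
    rw [hA, charmatrix_apply_eq, h0, map_zero, sub_zero]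
  have hAoff : ∀ i j, i ≠ j → A i j = - C ((mono (finRotate (N' + 1)) c) i j) := by
    intro i j h
    rw [hA, charmatrix_apply_ne _ _ _ h]
  have hAzero : ∀ i j, i ≠ j → i ≠ finRotate (N' + 1) j → A i j = 0 := by
    intro i j h h'
    have h0 : mono (finRotate (N' + 1)) c i j = 0 := by
      simp only [mono, Matrix.of_apply]
      exact if_neg h'
    rw [hAoff i j h, h0, map_zero, neg_zero]
  have key : ∀ σ : Equiv.Perm (Fin (N' + 1)), σ ≠ 1 → σ ≠ (finRotate (N' + 1)) →
      ∃ i, σ i ≠ i ∧ σ i ≠ finRotate (N' + 1) i := by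
    intro σ h1 hr
    by_contra hcon
    push_neg at hcon
    have halt : ∀ i, σ i = i ∨ σ i = finRotate (N' + 1) i := by
      intro i
      by_cases h : σ i = i
      · exact Or.inl h
      · exact Or.inr (hcon i h)
    obtain ⟨i0, hi0⟩ : ∃ i, σ i ≠ i := by
      by_contra hc; push_neg at hc; exact h1 (Equiv.ext hc)
    have hi0' : σ i0 = finRotate (N' + 1) i0 := (halt i0).resolve_left hi0
    have step : ∀ i : Fin (N' + 1), σ i = finRotate (N' + 1) i →
        σ (i + 1) = finRotate (N' + 1) (i + 1) := by
      intro i hi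
      rcases halt (i + 1) with h | h
      · exfalso
        have heq : σ (i + 1) = σ i := by
          rw [h, hi, finRotate_succ_apply]
        have := σ.injective heq
        have h0 : i + 1 = i + 0 := by simpa using this
        exact hone (add_left_cancel h0)
      · exact h
    have all : ∀ k : ℕ, σ (i0 + (k : Fin (N' + 1))) = finRotate (N' + 1) (i0 + (k : Fin (N' + 1))) := by
      intro k
      induction k with
      | zero => simpa using hi0'
      | succ k ih =>
          have hcast : ((k + 1 : ℕ) : Fin (N' + 1)) = (k : Fin (N' + 1)) + 1 := by push_cast; ring
          rw [hcast, ← add_assoc]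
          exact step _ ih
    apply hr
    apply Equiv.ext
    intro j
    have := all (j - i0).val
    rwa [Fin.cast_val_eq_self, add_sub_cancel] at this
  rw [Matrix.charpoly, ← hA, Matrix.det_apply]
  have hvan : ∀ σ ∈ (Finset.univ : Finset (Equiv.Perm (Fin (N' + 1)))),
      σ ∉ ({1, finRotate (N' + 1)} : Finset (Equiv.Perm (Fin (N' + 1)))) →
      Equiv.Perm.sign σ • ∏ i, A (σ i) i = 0 := by
    intro σ _ hσ
    simp only [Finset.mem_insert, Finset.mem_singleton] at hσ
    push_neg at hσ
    obtain ⟨i, hi, hi'⟩ := key σ hσ.1 hσ.2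
    have h0 : A (σ i) i = 0 := hAzero _ _ hi hi'
    have hz : ∏ x : Fin (N' + 1), A (σ x) x = 0 := Finset.prod_eq_zero (Finset.mem_univ i) h0
    rw [hz, smul_zero]
  rw [← Finset.sum_subset (Finset.subset_univ ({1, finRotate (N' + 1)} : Finset (Equiv.Perm (Fin (N' + 1))))) hvan]
  rw [Finset.sum_pair hperm_ne.symm]
  have t1 : Equiv.Perm.sign (1 : Equiv.Perm (Fin (N' + 1))) •
        ∏ i, A ((1 : Equiv.Perm (Fin (N' + 1))) i) i = X ^ (N' + 1) := by
    simp only [Equiv.Perm.sign_one, one_smul, Equiv.Perm.one_apply]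
    rw [Finset.prod_congr rfl (fun i _ => hAdiag i)]
    simp
  have t2 : Equiv.Perm.sign (finRotate (N' + 1) : Equiv.Perm (Fin (N' + 1))) •
      ∏ i, A ((finRotate (N' + 1)) i) i = - C (∏ j, c j) := by
    rw [sign_finRotate]
    have hoff : ∀ i : Fin (N' + 1), A (finRotate (N' + 1) i) i = - C (c i) := by
      intro i
      rw [hAoff _ _ (hrot_ne i)]
      simp [mono]
    rw [Finset.prod_congr rfl (fun i _ => hoff i)]
    have hneg : ∏ i : Fin (N' + 1), (- C (c i)) = (-1 : ℂ[X]) ^ (N' + 1) * ∏ i, C (c i) := by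
      rw [Finset.prod_congr rfl (fun (i : Fin (N' + 1)) _ => (neg_one_mul (C (c i))).symm)]
      rw [Finset.prod_mul_distrib, Finset.prod_const, Finset.card_univ, Fintype.card_fin]
    rw [hneg, ← map_prod]
    have hsmul : ∀ (x : ℂ[X]), ((-1 : ℤˣ) ^ N') • x = (-1 : ℂ[X]) ^ N' * x := by
      intro x
      rcases Nat.even_or_odd N' with he | ho
      · rw [he.neg_one_pow, he.neg_one_pow, one_smul, one_mul]
      · rw [ho.neg_one_pow, ho.neg_one_pow, Units.smul_def]
        simp
    rw [Nat.add_sub_cancel, hsmul, ← mul_assoc, ← pow_add]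
    have hexp : N' + (N' + 1) = 2 * N' + 1 := by ring
    rw [hexp, pow_succ, pow_mul, neg_one_sq, one_pow, one_mul, neg_one_mul]
  rw [t1, t2]
  ring


lemma charpoly_cycle' {N : ℕ} (hN : 2 ≤ N) (c : Fin N → ℂ) :
    (mono (finRotate N) c).charpoly = X ^ N - C (∏ j, c j) := by
  obtain ⟨N', rfl⟩ : ∃ N', N = N' + 1 := ⟨N - 1, by omega⟩
  exact charpoly_cycle N' (by omega) c
def sFun (ℓ k : ℕ) (j : Fin (2*ℓ)) : Fin (2*ℓ) :=
  if h : j.val + 1 = k ∧ 1 ≤ k ∧ k < ℓ then ⟨j.val + 1, by omega⟩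
  else if h : j.val = k ∧ 1 ≤ k ∧ k < ℓ then ⟨j.val - 1, by omega⟩
  else if h : j.val + 1 = 2*ℓ - k ∧ 1 ≤ k ∧ k < ℓ then ⟨j.val + 1, by omega⟩
  else if h : j.val = 2*ℓ - k ∧ 1 ≤ k ∧ k < ℓ then ⟨j.val - 1, by omega⟩
  else j

lemma s_eq (ℓ k : ℕ) (hk : 1 ≤ k) (hk' : k < ℓ) : s ℓ k = mono (sFun ℓ k) 1 := by
  ext i j
  have hi := i.isLt
  have hj := j.isLt
  simp only [s, mono, sFun, Matrix.of_apply, Pi.one_apply, Fin.ext_iff, ne_eq,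
    apply_dite Fin.val]
  split_ifs <;> first | rfl | omega

/-- `tTop` permutation: swap (0-based) `ℓ-1 ↔ ℓ`, sign `-1` on column `ℓ-1`. -/
def tFun (ℓ : ℕ) (j : Fin (2*ℓ)) : Fin (2*ℓ) :=
  if h : j.val + 1 = ℓ then ⟨j.val + 1, by omega⟩
  else if h : j.val = ℓ ∧ 1 ≤ ℓ then ⟨j.val - 1, by omega⟩
  else j

noncomputable def tEps (ℓ : ℕ) (j : Fin (2*ℓ)) : ℂ :=
  if j.val + 1 = ℓ then -1 else 1

lemma tTop_eq (ℓ : ℕ) (hℓ : 1 ≤ ℓ) : tTop ℓ = mono (tFun ℓ) (tEps ℓ) := by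
  ext i j
  have hi := i.isLt
  have hj := j.isLt
  simp only [tTop, mono, tFun, tEps, Matrix.of_apply, Fin.ext_iff, ne_eq,
    apply_dite Fin.val]
  split_ifs <;> first | rfl | omega

/-- permutation of `s_k s_{k+1} ⋯ s_{k+r-1}` (valid for `1 ≤ k`, `k + r ≤ ℓ`); 1-based:
`j ↦ j+1` on `[k, k+r)`, `k+r ↦ k`, mirrored on the bottom. -/
def upFun (ℓ k r : ℕ) (j : Fin (2*ℓ)) : Fin (2*ℓ) :=
  if h : 1 ≤ k ∧ k + r ≤ ℓ ∧ k ≤ j.val + 1 ∧ j.val + 1 < k + r then ⟨j.val + 1, by omega⟩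
  else if h : 1 ≤ k ∧ k + r ≤ ℓ ∧ j.val + 1 = k + r ∧ 1 ≤ r then ⟨k - 1, by omega⟩
  else if h : 1 ≤ k ∧ k + r ≤ ℓ ∧ 2*ℓ + 2 ≤ j.val + 1 + k + r ∧ j.val + 1 + k ≤ 2*ℓ + 1
      then ⟨j.val - 1, by omega⟩
  else if h : 1 ≤ k ∧ k + r ≤ ℓ ∧ j.val + 1 + k + r = 2*ℓ + 1 ∧ 1 ≤ r then ⟨2*ℓ - k, by omega⟩
  else j

lemma sFun_val (ℓ k : ℕ) (j : Fin (2*ℓ)) : (sFun ℓ k j).val =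
    if j.val + 1 = k ∧ 1 ≤ k ∧ k < ℓ then j.val + 1
    else if j.val = k ∧ 1 ≤ k ∧ k < ℓ then j.val - 1
    else if j.val + 1 = 2*ℓ - k ∧ 1 ≤ k ∧ k < ℓ then j.val + 1
    else if j.val = 2*ℓ - k ∧ 1 ≤ k ∧ k < ℓ then j.val - 1
    else j.val := by
  simp only [sFun, apply_dite Fin.val, dite_eq_ite]

lemma upFun_val (ℓ k r : ℕ) (j : Fin (2*ℓ)) : (upFun ℓ k r j).val =
    if 1 ≤ k ∧ k + r ≤ ℓ ∧ k ≤ j.val + 1 ∧ j.val + 1 < k + r then j.val + 1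
    else if 1 ≤ k ∧ k + r ≤ ℓ ∧ j.val + 1 = k + r ∧ 1 ≤ r then k - 1
    else if 1 ≤ k ∧ k + r ≤ ℓ ∧ 2*ℓ + 2 ≤ j.val + 1 + k + r ∧ j.val + 1 + k ≤ 2*ℓ + 1
      then j.val - 1
    else if 1 ≤ k ∧ k + r ≤ ℓ ∧ j.val + 1 + k + r = 2*ℓ + 1 ∧ 1 ≤ r then 2*ℓ - k
    else j.val := by
  simp only [upFun, apply_dite Fin.val, dite_eq_ite]

lemma upFun_id (ℓ k : ℕ) : upFun ℓ k 0 = id := by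
  funext j
  apply Fin.val_injective
  simp only [id_eq]
  rw [upFun_val]
  split_ifs <;> omega

set_option maxHeartbeats 1600000 in
lemma upChain (ℓ : ℕ) : ∀ r k, 1 ≤ k → k + r ≤ ℓ →
    (List.ofFn fun a : Fin r => s ℓ (k + a.val)).prod = mono (upFun ℓ k r) 1 := by
  intro r
  induction r with
  | zero =>
      intro k hk hkr
      simp only [List.ofFn_zero, List.prod_nil, upFun_id, mono_id]
  | succ r ih =>
      intro k hk hkr
      rw [List.ofFn_succ]
      simp only [Fin.val_zero, Nat.add_zero, Fin.val_succ, List.prod_cons]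
      have htail : (fun i : Fin r => s ℓ (k + (i.val + 1))) = fun i : Fin r => s ℓ ((k+1) + i.val) := by
        funext i
        have h1 : k + (i.val + 1) = (k+1) + i.val := by omega
        rw [h1]
      rw [htail, ih (k+1) (by omega) (by omega), s_eq ℓ k hk (by omega), mono_mul]
      have hfun : sFun ℓ k ∘ upFun ℓ (k+1) r = upFun ℓ k (r+1) := by
        funext j
        apply Fin.val_injective
        have hj := j.isLt
        simp only [Function.comp_apply, sFun_val, upFun_val]
        split_ifs <;> omega
      have heps : (fun j => (1 : Fin (2*ℓ) → ℂ) (upFun ℓ (k+1) r j) * (1 : Fin (2*ℓ) → ℂ) j)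
          = (1 : Fin (2*ℓ) → ℂ) := by
        funext j; simp
      rw [hfun, heps]

/-- permutation of `s_{ℓ-1} s_{ℓ-2} ⋯ s_{ℓ-r}` (valid for `r < ℓ`); 1-based with `k = ℓ-r`:
`k ↦ ℓ`, `j ↦ j-1` on `(k, ℓ]`, mirrored. -/
def downFun (ℓ r : ℕ) (j : Fin (2*ℓ)) : Fin (2*ℓ) :=
  if h : r < ℓ ∧ j.val + 1 + r = ℓ ∧ 1 ≤ r then ⟨ℓ - 1, by omega⟩
  else if h : r < ℓ ∧ ℓ - r < j.val + 1 ∧ j.val + 1 ≤ ℓ then ⟨j.val - 1, by omega⟩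
  else if h : r < ℓ ∧ ℓ + 1 ≤ j.val + 1 ∧ j.val + 1 ≤ ℓ + r then ⟨j.val + 1, by omega⟩
  else if h : r < ℓ ∧ j.val + 1 + (ℓ - r) = 2*ℓ + 1 ∧ 1 ≤ r then ⟨ℓ, by omega⟩
  else j

lemma downFun_val (ℓ r : ℕ) (j : Fin (2*ℓ)) : (downFun ℓ r j).val =
    if r < ℓ ∧ j.val + 1 + r = ℓ ∧ 1 ≤ r then ℓ - 1
    else if r < ℓ ∧ ℓ - r < j.val + 1 ∧ j.val + 1 ≤ ℓ then j.val - 1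
    else if r < ℓ ∧ ℓ + 1 ≤ j.val + 1 ∧ j.val + 1 ≤ ℓ + r then j.val + 1
    else if r < ℓ ∧ j.val + 1 + (ℓ - r) = 2*ℓ + 1 ∧ 1 ≤ r then ℓ
    else j.val := by
  simp only [downFun, apply_dite Fin.val, apply_ite Fin.val, dite_eq_ite]

lemma downFun_id (ℓ : ℕ) : downFun ℓ 0 = id := by
  funext j
  apply Fin.val_injective
  simp only [id_eq]
  rw [downFun_val]
  split_ifs <;> omega

lemma downChain (ℓ : ℕ) : ∀ r, r < ℓ →
    (List.ofFn fun a : Fin r => s ℓ (ℓ - 1 - a.val)).prod = mono (downFun ℓ r) 1 := by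
  intro r
  induction r with
  | zero =>
      intro _
      simp only [List.ofFn_zero, List.prod_nil, downFun_id, mono_id]
  | succ r ih =>
      intro hr
      rw [List.ofFn_succ']
      simp only [Fin.coe_castSucc, Fin.val_last, List.concat_eq_append, List.prod_append,
        List.prod_cons, List.prod_nil, mul_one]
      rw [ih (by omega), s_eq ℓ (ℓ - 1 - r) (by omega) (by omega), mono_mul]
      have hfun : downFun ℓ r ∘ sFun ℓ (ℓ - 1 - r) = downFun ℓ (r+1) := by
        funext j
        apply Fin.val_injective
        have hj := j.isLt
        simp only [Function.comp_apply, downFun_val, sFun_val]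
        split_ifs <;> omega
      have heps : (fun j => (1 : Fin (2*ℓ) → ℂ) (sFun ℓ (ℓ - 1 - r) j) * (1 : Fin (2*ℓ) → ℂ) j)
          = (1 : Fin (2*ℓ) → ℂ) := by
        funext j; simp
      rw [hfun, heps]

lemma tFun_val (ℓ : ℕ) (j : Fin (2*ℓ)) : (tFun ℓ j).val =
    if j.val + 1 = ℓ then j.val + 1
    else if j.val = ℓ ∧ 1 ≤ ℓ then j.val - 1
    else j.val := by
  simp only [tFun, apply_dite Fin.val, apply_ite Fin.val, dite_eq_ite]

def tF (ℓ k : ℕ) (j : Fin (2*ℓ)) : Fin (2*ℓ) :=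
  if h : j.val + 1 = k ∧ 1 ≤ k ∧ k ≤ ℓ then ⟨2*ℓ - k, by omega⟩
  else if h : j.val + 1 + k = 2*ℓ + 1 ∧ 1 ≤ k ∧ k ≤ ℓ then ⟨k - 1, by omega⟩
  else j

lemma tF_val (ℓ k : ℕ) (j : Fin (2*ℓ)) : (tF ℓ k j).val =
    if j.val + 1 = k ∧ 1 ≤ k ∧ k ≤ ℓ then 2*ℓ - k
    else if j.val + 1 + k = 2*ℓ + 1 ∧ 1 ≤ k ∧ k ≤ ℓ then k - 1
    else j.val := by
  simp only [tF, apply_dite Fin.val, apply_ite Fin.val, dite_eq_ite]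

noncomputable def tE (ℓ k : ℕ) (j : Fin (2*ℓ)) : ℂ :=
  if j.val + 1 = k then -1 else 1

lemma mono_congr {N : ℕ} {f g : Fin N → Fin N} {ε δ : Fin N → ℂ} (h1 : f = g) (h2 : ε = δ) :
    mono f ε = mono g δ := by rw [h1, h2]

def midFun (ℓ k : ℕ) (j : Fin (2*ℓ)) : Fin (2*ℓ) :=
  if h : j.val + 1 = k ∧ 1 ≤ k ∧ k ≤ ℓ then ⟨ℓ, by omega⟩
  else if h : k < j.val + 1 ∧ j.val + 1 ≤ ℓ ∧ 1 ≤ k then ⟨j.val - 1, by omega⟩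
  else if h : ℓ + 1 ≤ j.val + 1 ∧ j.val + 1 + k ≤ 2*ℓ ∧ 1 ≤ k ∧ k ≤ ℓ then ⟨j.val + 1, by omega⟩
  else if h : j.val + 1 + k = 2*ℓ + 1 ∧ 1 ≤ k ∧ k ≤ ℓ then ⟨ℓ - 1, by omega⟩
  else j

lemma midFun_val (ℓ k : ℕ) (j : Fin (2*ℓ)) : (midFun ℓ k j).val =
    if j.val + 1 = k ∧ 1 ≤ k ∧ k ≤ ℓ then ℓ
    else if k < j.val + 1 ∧ j.val + 1 ≤ ℓ ∧ 1 ≤ k then j.val - 1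
    else if ℓ + 1 ≤ j.val + 1 ∧ j.val + 1 + k ≤ 2*ℓ ∧ 1 ≤ k ∧ k ≤ ℓ then j.val + 1
    else if j.val + 1 + k = 2*ℓ + 1 ∧ 1 ≤ k ∧ k ≤ ℓ then ℓ - 1
    else j.val := by
  simp only [midFun, apply_dite Fin.val, apply_ite Fin.val, dite_eq_ite]

lemma mid_eq (ℓ k : ℕ) (hk : 1 ≤ k) (hk' : k ≤ ℓ) (j : Fin (2*ℓ)) :
    tFun ℓ (downFun ℓ (ℓ - k) j) = midFun ℓ k j := by
  apply Fin.val_injective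
  have hj := j.isLt
  simp only [tFun_val, downFun_val, midFun_val]
  split_ifs <;> omega

lemma up_mid_eq (ℓ k : ℕ) (hk : 1 ≤ k) (hk' : k ≤ ℓ) (j : Fin (2*ℓ)) :
    upFun ℓ k (ℓ - k) (midFun ℓ k j) = tF ℓ k j := by
  apply Fin.val_injective
  have hj := j.isLt
  simp only [upFun_val, midFun_val, tF_val]
  split_ifs <;> omega

lemma t_eq (ℓ k : ℕ) (hk : 1 ≤ k) (hk' : k ≤ ℓ) : t ℓ k = mono (tF ℓ k) (tE ℓ k) := by
  rw [t, upChain ℓ (ℓ - k) k hk (by omega), tTop_eq ℓ (by omega),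
    downChain ℓ (ℓ - k) (by omega), mono_mul, mono_mul]
  apply mono_congr
  · funext j
    simp only [Function.comp_apply]
    rw [mid_eq ℓ k hk hk', up_mid_eq ℓ k hk hk']
  · funext j
    have hj := j.isLt
    simp only [tEps, tE, Pi.one_apply, one_mul, mul_one]
    rw [downFun_val]
    split_ifs <;> first | rfl | (exfalso; omega)

def Fb (ℓ p m : ℕ) (j : Fin (2*ℓ)) : Fin (2*ℓ) :=
  if h : p + m ≤ ℓ ∧ 1 ≤ m ∧ p + 1 ≤ j.val + 1 ∧ j.val + 1 < p + m then ⟨j.val + 1, by omega⟩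
  else if h : p + m ≤ ℓ ∧ 1 ≤ m ∧ j.val + 1 = p + m then ⟨2*ℓ - p - 1, by omega⟩
  else if h : p + m ≤ ℓ ∧ 1 ≤ m ∧ 2*ℓ + 2 ≤ j.val + 1 + p + m ∧ j.val + 1 + p ≤ 2*ℓ then
    ⟨j.val - 1, by omega⟩
  else if h : p + m ≤ ℓ ∧ 1 ≤ m ∧ j.val + 1 + p + m = 2*ℓ + 1 then ⟨p, by omega⟩
  else j

lemma Fb_val (ℓ p m : ℕ) (j : Fin (2*ℓ)) : (Fb ℓ p m j).val =
    if p + m ≤ ℓ ∧ 1 ≤ m ∧ p + 1 ≤ j.val + 1 ∧ j.val + 1 < p + m then j.val + 1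
    else if p + m ≤ ℓ ∧ 1 ≤ m ∧ j.val + 1 = p + m then 2*ℓ - p - 1
    else if p + m ≤ ℓ ∧ 1 ≤ m ∧ 2*ℓ + 2 ≤ j.val + 1 + p + m ∧ j.val + 1 + p ≤ 2*ℓ then j.val - 1
    else if p + m ≤ ℓ ∧ 1 ≤ m ∧ j.val + 1 + p + m = 2*ℓ + 1 then p
    else j.val := by
  simp only [Fb, apply_dite Fin.val, apply_ite Fin.val, dite_eq_ite]

noncomputable def Eb (ℓ p m : ℕ) (j : Fin (2*ℓ)) : ℂ :=
  if j.val + 1 = p + m then -1 else 1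

lemma factor_eq (ℓ p m : ℕ) (hm : 1 ≤ m) (hpm : p + m ≤ ℓ) :
    (List.ofFn fun a : Fin (m - 1) => s ℓ (p + a.val + 1)).prod * t ℓ (p + m)
      = mono (Fb ℓ p m) (Eb ℓ p m) := by
  have hidx : (fun a : Fin (m - 1) => s ℓ (p + a.val + 1))
      = fun a : Fin (m - 1) => s ℓ ((p + 1) + a.val) := by
    funext a
    have h1 : p + a.val + 1 = (p + 1) + a.val := by omega
    rw [h1]
  rw [hidx, upChain ℓ (m - 1) (p + 1) (by omega) (by omega),
    t_eq ℓ (p + m) (by omega) (by omega), mono_mul]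
  apply mono_congr
  · funext j
    apply Fin.val_injective
    have hj := j.isLt
    simp only [Function.comp_apply, upFun_val, tF_val, Fb_val]
    split_ifs <;> omega
  · funext j
    have hj := j.isLt
    simp only [tE, Eb, Pi.one_apply, one_mul]

/-! ### partition machinery -/

def Part (μ : ℕ) (L : Fin μ → ℕ) (ν : Fin μ) : ℕ := ∑ j ∈ Finset.Iio ν, L j

lemma Part_lt_le {μ : ℕ} (L : Fin μ → ℕ) {ν ν' : Fin μ} (h : ν < ν') :
    Part μ L ν + L ν ≤ Part μ L ν' := by
  have hsub : insert ν (Finset.Iio ν) ⊆ Finset.Iio ν' := by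
    intro x hx
    simp only [Finset.mem_insert, Finset.mem_Iio] at *
    rcases hx with rfl | hx
    · exact h
    · exact lt_trans hx h
  have h1 := Finset.sum_le_sum_of_subset (f := L) hsub
  rw [Finset.sum_insert (by simp)] at h1
  unfold Part
  omega

lemma Part_add_le {μ : ℕ} (L : Fin μ → ℕ) (ν : Fin μ) : Part μ L ν + L ν ≤ ∑ j, L j := by
  have h1 := Finset.sum_le_sum_of_subset (f := L) (Finset.subset_univ (insert ν (Finset.Iio ν)))
  rw [Finset.sum_insert (by simp)] at h1
  unfold Part
  omega

def emb (ℓ μ : ℕ) (L : Fin μ → ℕ) (hP : ∀ ν, Part μ L ν + L ν ≤ ℓ)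
    (x : Σ ν : Fin μ, Fin (2 * L ν)) : Fin (2*ℓ) :=
  if h : x.2.val < L x.1 then ⟨Part μ L x.1 + x.2.val, by have := hP x.1; omega⟩
  else ⟨2*ℓ - 1 - (Part μ L x.1 + (x.2.val - L x.1)),
    by have := hP x.1; have := x.2.isLt; omega⟩

lemma emb_val (ℓ μ : ℕ) (L : Fin μ → ℕ) (hP : ∀ ν, Part μ L ν + L ν ≤ ℓ)
    (x : Σ ν : Fin μ, Fin (2 * L ν)) : (emb ℓ μ L hP x).val =
    if x.2.val < L x.1 then Part μ L x.1 + x.2.val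
    else 2*ℓ - 1 - (Part μ L x.1 + (x.2.val - L x.1)) := by
  simp only [emb, apply_dite Fin.val, apply_ite Fin.val, dite_eq_ite]

lemma emb_inj (ℓ μ : ℕ) (L : Fin μ → ℕ) (hP : ∀ ν, Part μ L ν + L ν ≤ ℓ) :
    Function.Injective (emb ℓ μ L hP) := by
  rintro ⟨ν, a⟩ ⟨ν', b⟩ h
  have hv := congrArg Fin.val h
  rw [emb_val, emb_val] at hv
  dsimp only at hv
  have ha := a.isLt
  have hb := b.isLt
  have h2 := hP ν
  have h3 := hP ν'
  have hνν' : ν = ν' := by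
    by_contra hne
    rcases Ne.lt_or_gt hne with hlt | hlt
    · have h1 := Part_lt_le L hlt
      split_ifs at hv <;> omega
    · have h1 := Part_lt_le L hlt
      split_ifs at hv <;> omega
  subst hνν'
  have hab : a = b := by
    apply Fin.val_injective
    split_ifs at hv <;> omega
  rw [hab]

lemma finRotate_val {n : ℕ} (hn : 1 ≤ n) (b : Fin n) :
    (finRotate n b).val = if b.val + 1 = n then 0 else b.val + 1 := by
  obtain ⟨n', rfl⟩ : ∃ n', n = n' + 1 := ⟨n - 1, by omega⟩
  rw [finRotate_succ_apply, Fin.val_add_one]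
  have hb := b.isLt
  split_ifs with h1 h2 h2
  · rfl
  · exfalso; rw [Fin.ext_iff] at h1; simp only [Fin.val_last] at h1; omega
  · exfalso; apply h1; apply Fin.val_injective; simp only [Fin.val_last]; omega
  · rfl

lemma Fb_emb_same (ℓ μ : ℕ) (L : Fin μ → ℕ) (hP : ∀ ν, Part μ L ν + L ν ≤ ℓ)
    (hpos : ∀ ν, 0 < L ν) (ν : Fin μ) (b : Fin (2 * L ν)) :
    Fb ℓ (Part μ L ν) (L ν) (emb ℓ μ L hP ⟨ν, b⟩)
      = emb ℓ μ L hP ⟨ν, finRotate (2 * L ν) b⟩ := by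
  have hb := b.isLt
  have h2 := hP ν
  have h3 := hpos ν
  apply Fin.val_injective
  rw [Fb_val, emb_val, emb_val]
  dsimp only
  rw [finRotate_val (by omega)]
  split_ifs <;> omega

lemma Eb_emb_same (ℓ μ : ℕ) (L : Fin μ → ℕ) (hP : ∀ ν, Part μ L ν + L ν ≤ ℓ)
    (hpos : ∀ ν, 0 < L ν) (ν : Fin μ) (b : Fin (2 * L ν)) :
    Eb ℓ (Part μ L ν) (L ν) (emb ℓ μ L hP ⟨ν, b⟩)
      = (if b.val + 1 = L ν then -1 else 1 : ℂ) := by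
  have hb := b.isLt
  have h2 := hP ν
  have h3 := hpos ν
  unfold Eb
  rw [emb_val]
  dsimp only
  split_ifs <;> first | rfl | (exfalso; omega)

lemma FbEb_emb_other (ℓ μ : ℕ) (L : Fin μ → ℕ) (hP : ∀ ν, Part μ L ν + L ν ≤ ℓ)
    (hpos : ∀ ν, 0 < L ν) (ν ν' : Fin μ) (hne : ν' ≠ ν) (b : Fin (2 * L ν)) :
    Fb ℓ (Part μ L ν') (L ν') (emb ℓ μ L hP ⟨ν, b⟩) = emb ℓ μ L hP ⟨ν, b⟩
      ∧ Eb ℓ (Part μ L ν') (L ν') (emb ℓ μ L hP ⟨ν, b⟩) = 1 := by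
  have hb := b.isLt
  have h2 := hP ν
  have h3 := hpos ν
  have h4 := hP ν'
  have h5 := hpos ν'
  have hord : Part μ L ν' + L ν' ≤ Part μ L ν ∨ Part μ L ν + L ν ≤ Part μ L ν' := by
    rcases Ne.lt_or_gt hne with hlt | hlt
    · exact Or.inl (Part_lt_le L hlt)
    · exact Or.inr (Part_lt_le L hlt)
  constructor
  · apply Fin.val_injective
    rw [Fb_val, emb_val]
    dsimp only
    split_ifs <;> omega
  · unfold Eb
    rw [emb_val]
    dsimp only
    split_ifs <;> first | rfl | (exfalso; omega)

def fibEquiv {μ : ℕ} (L : Fin μ → ℕ) (ν : Fin μ) :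
    Fin (2 * L ν) ≃ {x : Σ ν' : Fin μ, Fin (2 * L ν') // x.1 = ν} where
  toFun a := ⟨⟨ν, a⟩, rfl⟩
  invFun x := Fin.cast (by rw [x.2]) x.1.2
  left_inv a := rfl
  right_inv x := by
    rcases x with ⟨⟨ν', a⟩, h⟩
    dsimp only at h
    subst h
    rfl


/-- For `ℓ ≥ 2` and a partition `ℓ⃗ = (ℓ_μ ≥ ⋯ ≥ ℓ_1)` of `ℓ` into `μ`
positive parts, the characteristic polynomial of `n_{ℓ⃗}` acting on `ℂ^{2ℓ}` is
`∏_{ν=1}^{μ} (t^{2ℓ_ν} + 1)`. -/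
theorem stmt6 (ℓ μ : ℕ) (hℓ : 2 ≤ ℓ) (L : Fin μ → ℕ)
    (hpos : ∀ ν, 0 < L ν) (hmono : Monotone L) (hsum : ∑ ν, L ν = ℓ) :
    (n ℓ μ L).charpoly = ∏ ν : Fin μ, (X ^ (2 * L ν) + 1) := by
  classical
  have hP : ∀ ν, Part μ L ν + L ν ≤ ℓ := fun ν => by
    have := Part_add_le L ν; omega
  set g : Fin μ → (Fin (2*ℓ) → Fin (2*ℓ)) × (Fin (2*ℓ) → ℂ) :=
    fun ν => (Fb ℓ (Part μ L ν) (L ν), Eb ℓ (Part μ L ν) (L ν)) with hg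
  have hn : n ℓ μ L = mono (big (List.ofFn g)).1 (big (List.ofFn g)).2 := by
    have hterm : (fun ν : Fin μ =>
        (List.ofFn fun a : Fin (L ν - 1) =>
          s ℓ ((∑ j ∈ Finset.Iio ν, L j) + a.val + 1)).prod *
          t ℓ ((∑ j ∈ Finset.Iio ν, L j) + L ν)) = fun ν => mono (g ν).1 (g ν).2 := by
      funext ν
      exact factor_eq ℓ (Part μ L ν) (L ν) (hpos ν) (hP ν)
    have hcomp : (fun ν => mono (g ν).1 (g ν).2)
        = (fun p : (Fin (2*ℓ) → Fin (2*ℓ)) × (Fin (2*ℓ) → ℂ) => mono p.1 p.2) ∘ g := rfl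
    rw [n, hterm, hcomp, ← List.map_ofFn, mono_big]
  -- the bijection
  have hbij : Function.Bijective (emb ℓ μ L hP) := by
    rw [Fintype.bijective_iff_injective_and_card]
    refine ⟨emb_inj ℓ μ L hP, ?_⟩
    simp only [Fintype.card_sigma, Fintype.card_fin]
    rw [← Finset.mul_sum, hsum]
  set e := Equiv.ofBijective _ hbij with he
  have he_app : ∀ x, e x = emb ℓ μ L hP x := fun _ => rfl
  set bfun : Fin (2*ℓ) → Fin μ := fun j => (e.symm j).1 with hbfun
  -- evaluation of the fold at block points
  have heval : ∀ (ν : Fin μ) (b : Fin (2 * L ν)),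
      (big (List.ofFn g)).1 (emb ℓ μ L hP ⟨ν, b⟩)
          = emb ℓ μ L hP ⟨ν, finRotate (2 * L ν) b⟩ ∧
      (big (List.ofFn g)).2 (emb ℓ μ L hP ⟨ν, b⟩)
          = (if b.val + 1 = L ν then -1 else 1 : ℂ) := by
    intro ν b
    have hlen : (List.ofFn g).length = μ := by simp
    have hget : (List.ofFn g)[ν.val]'(by rw [hlen]; exact ν.isLt) = g ν := by
      simp [List.getElem_ofFn]
    have hsplit : List.ofFn g
        = (List.ofFn g).take ν.val ++ g ν :: (List.ofFn g).drop (ν.val + 1) := by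
      rw [← hget, ← List.drop_eq_getElem_cons, List.take_append_drop]
    have hmem1 : ∀ q ∈ (List.ofFn g).take ν.val, ∃ ν' : Fin μ, ν' ≠ ν ∧ q = g ν' := by
      intro q hq
      rw [List.mem_iff_getElem] at hq
      obtain ⟨i, hi, rfl⟩ := hq
      have hi2 : i < ν.val := by
        rw [List.length_take, hlen] at hi; omega
      refine ⟨⟨i, by omega⟩, ?_, ?_⟩
      · intro hc; rw [Fin.ext_iff] at hc; simp only at hc; omega
      · rw [List.getElem_take]
        simp [List.getElem_ofFn]
    have hmem2 : ∀ q ∈ (List.ofFn g).drop (ν.val + 1), ∃ ν' : Fin μ, ν' ≠ ν ∧ q = g ν' := by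
      intro q hq
      rw [List.mem_iff_getElem] at hq
      obtain ⟨i, hi, rfl⟩ := hq
      have hi2 : ν.val + 1 + i < μ := by
        rw [List.length_drop, hlen] at hi; omega
      refine ⟨⟨ν.val + 1 + i, hi2⟩, ?_, ?_⟩
      · intro hc; rw [Fin.ext_iff] at hc; simp only at hc; omega
      · rw [List.getElem_drop]
        simp [List.getElem_ofFn]
    have h2 : ∀ q ∈ (List.ofFn g).drop (ν.val + 1),
        q.1 (emb ℓ μ L hP ⟨ν, b⟩) = emb ℓ μ L hP ⟨ν, b⟩ ∧ q.2 (emb ℓ μ L hP ⟨ν, b⟩) = 1 := by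
      intro q hq
      obtain ⟨ν', hne, rfl⟩ := hmem2 q hq
      exact FbEb_emb_other ℓ μ L hP hpos ν ν' hne b
    have h1 : ∀ q ∈ (List.ofFn g).take ν.val,
        q.1 ((g ν).1 (emb ℓ μ L hP ⟨ν, b⟩)) = (g ν).1 (emb ℓ μ L hP ⟨ν, b⟩)
          ∧ q.2 ((g ν).1 (emb ℓ μ L hP ⟨ν, b⟩)) = 1 := by
      intro q hq
      obtain ⟨ν', hne, rfl⟩ := hmem1 q hq
      have hb1 : (g ν).1 (emb ℓ μ L hP ⟨ν, b⟩)
          = emb ℓ μ L hP ⟨ν, finRotate (2 * L ν) b⟩ := Fb_emb_same ℓ μ L hP hpos ν b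
      rw [hb1]
      exact FbEb_emb_other ℓ μ L hP hpos ν ν' hne (finRotate (2 * L ν) b)
    have hres := big_eval ((List.ofFn g).take ν.val) ((List.ofFn g).drop (ν.val + 1))
      (g ν) (emb ℓ μ L hP ⟨ν, b⟩) h2 h1
    rw [← hsplit] at hres
    refine ⟨?_, ?_⟩
    · rw [hres.1]
      exact Fb_emb_same ℓ μ L hP hpos ν b
    · rw [hres.2]
      exact Eb_emb_same ℓ μ L hP hpos ν b
  -- entries of n
  have hent : ∀ (ν : Fin μ) (a b : Fin (2 * L ν)),
      n ℓ μ L (emb ℓ μ L hP ⟨ν, a⟩) (emb ℓ μ L hP ⟨ν, b⟩)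
        = mono (finRotate (2 * L ν))
            (fun c : Fin (2 * L ν) => if c.val + 1 = L ν then -1 else 1) a b := by
    intro ν a b
    rw [hn]
    simp only [mono, Matrix.of_apply]
    rw [(heval ν b).1, (heval ν b).2]
    by_cases hab : a = finRotate (2 * L ν) b
    · rw [if_pos (by rw [hab]), if_pos hab]
    · rw [if_neg, if_neg hab]
      intro hc
      apply hab
      have hinj := emb_inj ℓ μ L hP hc
      rw [Sigma.mk.inj_iff] at hinj
      exact eq_of_heq hinj.2
  have hoff : ∀ i j : Fin (2*ℓ), bfun i ≠ bfun j → n ℓ μ L i j = 0 := by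
    intro i j hbne
    rw [hn]
    simp only [mono, Matrix.of_apply]
    rw [if_neg]
    intro hc
    apply hbne
    have hj : j = emb ℓ μ L hP ⟨(e.symm j).1, (e.symm j).2⟩ := (e.apply_symm_apply j).symm
    rw [hj] at hc
    rw [(heval (e.symm j).1 (e.symm j).2).1] at hc
    have h1 : e.symm i = ⟨(e.symm j).1, finRotate (2 * L (e.symm j).1) (e.symm j).2⟩ := by
      rw [hc]
      exact e.symm_apply_apply _
    rw [hbfun]
    show (e.symm i).1 = (e.symm j).1
    rw [h1]
  -- block triangularity of the charmatrix
  have hbt : (n ℓ μ L).charmatrix.BlockTriangular bfun := by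
    intro i j hlt
    have hbne : bfun i ≠ bfun j := (ne_of_lt hlt).symm
    have hij : i ≠ j := fun hc => hbne (by rw [hc])
    rw [charmatrix_apply_ne _ _ _ hij, hoff i j hbne, map_zero, neg_zero]
  rw [Matrix.charpoly, hbt.det_fintype]
  apply Finset.prod_congr rfl
  intro ν _
  -- reindex the block
  let βe : Fin (2 * L ν) ≃ {j : Fin (2*ℓ) // bfun j = ν} :=
    (fibEquiv L ν).trans (e.subtypeEquiv (fun x => by
      rw [hbfun]
      simp only [Equiv.symm_apply_apply]))
  have hβ : ∀ a : Fin (2 * L ν), (βe a : Fin (2*ℓ)) = emb ℓ μ L hP ⟨ν, a⟩ := fun a => rfl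
  rw [← Matrix.det_submatrix_equiv_self βe]
  have hsub : (((n ℓ μ L).charmatrix.toSquareBlock bfun ν).submatrix βe βe)
      = charmatrix (mono (finRotate (2 * L ν))
          (fun c : Fin (2 * L ν) => if c.val + 1 = L ν then -1 else 1)) := by
    ext a b
    have hentry : (((n ℓ μ L).charmatrix.toSquareBlock bfun ν).submatrix βe βe) a b
        = (n ℓ μ L).charmatrix (emb ℓ μ L hP ⟨ν, a⟩) (emb ℓ μ L hP ⟨ν, b⟩) := by
      rfl
    by_cases hab : a = b
    · subst hab
      rw [hentry, charmatrix_apply_eq, charmatrix_apply_eq, hent ν a a]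
    · have hne1 : emb ℓ μ L hP ⟨ν, a⟩ ≠ emb ℓ μ L hP ⟨ν, b⟩ := by
        intro hc
        have hinj := emb_inj ℓ μ L hP hc
        rw [Sigma.mk.inj_iff] at hinj
        exact hab (eq_of_heq hinj.2)
      rw [hentry, charmatrix_apply_ne _ _ _ hne1, charmatrix_apply_ne _ _ _ hab, hent ν a b]
  rw [hsub]
  rw [show (charmatrix (mono (finRotate (2 * L ν))
      (fun c : Fin (2 * L ν) => if c.val + 1 = L ν then -1 else 1))).det
    = (mono (finRotate (2 * L ν))
      (fun c : Fin (2 * L ν) => if c.val + 1 = L ν then -1 else 1)).charpoly from rfl]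
  rw [charpoly_cycle' (by have := hpos ν; omega)]
  have hprod : (∏ c : Fin (2 * L ν), (if c.val + 1 = L ν then (-1 : ℂ) else 1)) = -1 := by
    have hlt : L ν - 1 < 2 * L ν := by have := hpos ν; omega
    rw [Finset.prod_eq_single (⟨L ν - 1, hlt⟩ : Fin (2 * L ν))]
    · rw [if_pos (by simp only; have := hpos ν; omega)]
    · intro c _ hbne
      rw [if_neg]
      intro hc
      apply hbne
      apply Fin.val_injective
      simp only
      omega
    · intro hmem; exact absurd (Finset.mem_univ _) hmem
  rw [hprod]
  rw [show ((C (-1 : ℂ)) : ℂ[X]) = -1 by simp]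
  rw [sub_neg_eq_add]


end Stmt6
end

section
/- Let ℓ⃗ = (ℓ_μ ≥ ⋯ ≥ ℓ_1) and ℓ⃗' = (ℓ'_{μ'} ≥ ⋯ ≥ ℓ'_1) be partitions of the same integer ℓ ≥ 1 into positive parts. If ∏_{ν=1}^{μ} (t^{2ℓ_ν} + 1) = ∏_{ν=1}^{μ'} (t^{2ℓ'_ν} + 1) as polynomials in ℂ[t], then μ = μ' and ℓ_ν = ℓ'_ν for all ν. -/
open Polynomial

noncomputable def pp (s : Multiset ℕ) : ℂ[X] :=
  (s.map (fun a => (X : ℂ[X]) ^ (2 * a) + 1)).prod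

lemma pp_cons (a : ℕ) (s : Multiset ℕ) :
    pp (a ::ₘ s) = ((X : ℂ[X]) ^ (2 * a) + 1) * pp s := by
  simp [pp]

lemma pp_coeff (m : ℕ) (hm : 0 < m) :
    ∀ s : Multiset ℕ, (∀ a ∈ s, m ≤ a) →
      (pp s).coeff 0 = 1 ∧ (∀ k, 0 < k → k < 2 * m → (pp s).coeff k = 0) ∧
        (pp s).coeff (2 * m) = (s.count m : ℂ) := by
  intro s
  induction s using Multiset.induction with
  | empty =>
    intro _
    refine ⟨by simp [pp], fun k h1 h2 => ?_, ?_⟩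
    · simp only [pp, Multiset.map_zero, Multiset.prod_zero, coeff_one]
      rw [if_neg (by omega)]
    · simp only [pp, Multiset.map_zero, Multiset.prod_zero, coeff_one,
        Multiset.count_zero, Nat.cast_zero]
      rw [if_neg (by omega)]
  | cons a s ih =>
    intro h
    have ha : m ≤ a := h a (Multiset.mem_cons_self a s)
    obtain ⟨h0, hk, hcm⟩ := ih (fun b hb => h b (Multiset.mem_cons_of_mem hb))
    have key : ((X : ℂ[X]) ^ (2 * a) + 1) * pp s
        = pp s * X ^ (2 * a) + pp s := by ring
    have coeff_eq : ∀ k, (pp (a ::ₘ s)).coeff k =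
        (if 2 * a ≤ k then (pp s).coeff (k - 2 * a) else 0) + (pp s).coeff k := by
      intro k
      rw [pp_cons, key, coeff_add, coeff_mul_X_pow']
    refine ⟨?_, ?_, ?_⟩
    · rw [coeff_eq 0, if_neg (by omega), zero_add, h0]
    · intro k hk1 hk2
      rw [coeff_eq k, if_neg (by omega), zero_add, hk k hk1 hk2]
    · rw [coeff_eq (2 * m)]
      rcases eq_or_lt_of_le ha with rfl | hlt
      · rw [if_pos le_rfl, Nat.sub_self, h0, hcm, Multiset.count_cons_self]
        push_cast; ring
      · rw [if_neg (by omega), zero_add, hcm,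
          Multiset.count_cons_of_ne (by omega) ]

lemma exists_min (s : Multiset ℕ) (hs : s ≠ 0) : ∃ m ∈ s, ∀ a ∈ s, m ≤ a := by
  obtain ⟨m, hm, hmin⟩ := Finset.exists_min_image s.toFinset id
    (by simpa [Multiset.toFinset_nonempty] using hs)
  exact ⟨m, Multiset.mem_toFinset.mp hm,
    fun a ha => hmin a (Multiset.mem_toFinset.mpr ha)⟩

lemma pp_inj : ∀ n : ℕ, ∀ s t : Multiset ℕ, Multiset.card s ≤ n →
    (∀ a ∈ s, 0 < a) → (∀ a ∈ t, 0 < a) → pp s = pp t → s = t := by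
  intro n
  induction n with
  | zero =>
    intro s t hcard hs ht heq
    have hs0 : s = 0 := Multiset.card_eq_zero.mp (Nat.le_zero.mp hcard)
    subst hs0
    by_contra h
    obtain ⟨m, hm, hmin⟩ := exists_min t (fun h0 => h h0.symm)
    have hmpos : 0 < m := ht m hm
    obtain ⟨_, _, hc⟩ := pp_coeff m hmpos t hmin
    have : (pp (0 : Multiset ℕ)).coeff (2 * m) = 0 := by
      simp [pp, coeff_one]; omega
    rw [heq, hc] at this
    have : t.count m = 0 := by exact_mod_cast this
    simp [Multiset.count_eq_zero_of_notMem, Multiset.count_eq_zero] at this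
    exact this hm
  | succ n ih =>
    intro s t hcard hs ht heq
    rcases eq_or_ne s 0 with rfl | hs0
    · by_contra h
      obtain ⟨m, hm, hmin⟩ := exists_min t (fun h0 => h h0.symm)
      obtain ⟨_, _, hc⟩ := pp_coeff m (ht m hm) t hmin
      have h2 : (pp (0 : Multiset ℕ)).coeff (2 * m) = 0 := by
        have := ht m hm; simp [pp, coeff_one]; omega
      rw [heq, hc] at h2
      have : t.count m = 0 := by exact_mod_cast h2
      rw [Multiset.count_eq_zero] at this
      exact this hm
    rcases eq_or_ne t 0 with rfl | ht0
    · obtain ⟨m, hm, hmin⟩ := exists_min s hs0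
      obtain ⟨_, _, hc⟩ := pp_coeff m (hs m hm) s hmin
      have h2 : (pp (0 : Multiset ℕ)).coeff (2 * m) = 0 := by
        have := hs m hm; simp [pp, coeff_one]; omega
      rw [← heq, hc] at h2
      have : s.count m = 0 := by exact_mod_cast h2
      rw [Multiset.count_eq_zero] at this
      exact absurd hm this
    -- both nonempty
    obtain ⟨m, hm, hmin⟩ := exists_min s hs0
    obtain ⟨m', hm', hmin'⟩ := exists_min t ht0
    obtain ⟨hs0c, hsk, hsc⟩ := pp_coeff m (hs m hm) s hmin
    obtain ⟨ht0c, htk, htc⟩ := pp_coeff m' (ht m' hm') t hmin'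
    have hmm : m = m' := by
      by_contra hne
      rcases Nat.lt_or_ge m m' with hlt | hge
      · have := htk (2 * m) (by have := hs m hm; omega) (by omega)
        rw [← heq, hsc] at this
        have : s.count m = 0 := by exact_mod_cast this
        rw [Multiset.count_eq_zero] at this; exact this hm
      · have hlt : m' < m := by omega
        have := hsk (2 * m') (by have := ht m' hm'; omega) (by omega)
        rw [heq, htc] at this
        have : t.count m' = 0 := by exact_mod_cast this
        rw [Multiset.count_eq_zero] at this; exact this hm'
    subst hmm
    have hcount : s.count m = t.count m := by
      have h3 : (s.count m : ℂ) = (t.count m : ℂ) := by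
        rw [← hsc, heq, htc]
      exact_mod_cast h3
    -- split off copies of m
    have hsplit : ∀ u : Multiset ℕ,
        pp u = ((X : ℂ[X]) ^ (2 * m) + 1) ^ (u.count m) * pp (u.filter (¬ · = m)) := by
      intro u
      conv_lhs => rw [← Multiset.filter_add_not (· = m) u]
      rw [pp, Multiset.map_add, Multiset.prod_add, Multiset.filter_eq']
      simp [pp, Multiset.map_replicate, Multiset.prod_replicate]
    rw [hsplit s, hsplit t, ← hcount] at heq
    have hne : ((X : ℂ[X]) ^ (2 * m) + 1) ^ (s.count m) ≠ 0 := by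
      apply pow_ne_zero
      intro h0
      have hmpos : 0 < m := hs m hm
      have h1 := congrArg (fun p => p.coeff 0) h0
      simp only [coeff_add, coeff_X_pow, coeff_one, coeff_zero] at h1
      rw [if_neg (by omega)] at h1
      norm_num at h1
    have heq2 := mul_left_cancel₀ hne heq
    have hfilter := ih (s.filter (¬ · = m)) (t.filter (¬ · = m))
      (by
        have hlt : s.filter (¬ · = m) < s := by
          refine lt_of_le_of_ne (Multiset.filter_le _ s) (fun hEq => ?_)
          have := hm
          rw [← hEq, Multiset.mem_filter] at this
          exact this.2 rfl
        have := Multiset.card_lt_card hlt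
        exact Nat.lt_succ_iff.mp (lt_of_lt_of_le this hcard))
      (fun a ha => hs a (Multiset.mem_of_mem_filter ha))
      (fun a ha => ht a (Multiset.mem_of_mem_filter ha)) heq2
    calc s = s.filter (· = m) + s.filter (¬ · = m) := (Multiset.filter_add_not _ s).symm
      _ = t.filter (· = m) + t.filter (¬ · = m) := by
          rw [Multiset.filter_eq', Multiset.filter_eq', hcount, hfilter]

      _ = t := Multiset.filter_add_not _ t

/-- If `ℓ⃗ = (ℓ_μ ≥ ⋯ ≥ ℓ_1)` and `ℓ⃗' = (ℓ'_{μ'} ≥ ⋯ ≥ ℓ'_1)` are partitions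
of the same integer `ℓ ≥ 1` into positive parts and
`∏_ν (t^{2ℓ_ν} + 1) = ∏_ν (t^{2ℓ'_ν} + 1)` in `ℂ[t]`, then `μ = μ'` and `ℓ_ν = ℓ'_ν` for
all `ν`. -/
theorem stmt7 (ℓ μ μ' : ℕ) (hℓ : 1 ≤ ℓ) (L : Fin μ → ℕ) (L' : Fin μ' → ℕ)
    (hpos : ∀ ν, 0 < L ν) (hmono : Monotone L) (hsum : ∑ ν, L ν = ℓ)
    (hpos' : ∀ ν, 0 < L' ν) (hmono' : Monotone L') (hsum' : ∑ ν, L' ν = ℓ)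
    (heq : ∏ ν : Fin μ, ((X : ℂ[X]) ^ (2 * L ν) + 1) =
           ∏ ν : Fin μ', ((X : ℂ[X]) ^ (2 * L' ν) + 1)) :
    μ = μ' ∧ ∀ (ν : ℕ) (h1 : ν < μ) (h2 : ν < μ'), L ⟨ν, h1⟩ = L' ⟨ν, h2⟩ := by
  have hpp : pp (↑(List.ofFn L)) = pp (↑(List.ofFn L')) := by
    rw [pp, pp, ← Fin.univ_val_map, ← Fin.univ_val_map,
      Multiset.map_map, Multiset.map_map]
    exact heq
  have hmul : (↑(List.ofFn L) : Multiset ℕ) = ↑(List.ofFn L') :=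
    pp_inj (Multiset.card (Multiset.ofList (List.ofFn L))) _ _ le_rfl
      (by simp only [Multiset.mem_coe, List.mem_ofFn]; rintro a ⟨ν, rfl⟩; exact hpos ν)
      (by simp only [Multiset.mem_coe, List.mem_ofFn]; rintro a ⟨ν, rfl⟩; exact hpos' ν)
      hpp
  have hperm : List.Perm (List.ofFn L) (List.ofFn L') := Multiset.coe_eq_coe.mp hmul
  have hlist : List.ofFn L = List.ofFn L' :=
    List.Perm.eq_of_sortedLE hmono.sortedLE_ofFn hmono'.sortedLE_ofFn hperm
  have hμ : μ = μ' := by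
    have := congrArg List.length hlist
    simpa using this
  refine ⟨hμ, fun ν h1 h2 => ?_⟩
  have h3 := List.get_of_eq hlist ⟨ν, by simpa using h1⟩
  simpa using h3
end

section
/- Let ℓ ≥ 3 and let ℓ⃗ = (ℓ_μ ≥ ⋯ ≥ ℓ_1) be a partition of ℓ into an even number μ of positive parts; set ℓ'_ν = ℓ_1 + ⋯ + ℓ_{ν-1} and n_{ℓ⃗} = ∏_{ν=1}^{μ} ( s_{ℓ'_ν+1} s_{ℓ'_ν+2} ⋯ s_{ℓ'_ν+ℓ_ν-1} · t_{ℓ'_ν+ℓ_ν} ). Then n_{ℓ⃗} ∈ SO_{2ℓ}(ℂ) and the characteristic polynomial of n_{ℓ⃗} acting on ℂ^{2ℓ} is ∏_{ν=1}^{μ} (t^{2ℓ_ν} - 1). -/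
open Polynomial Matrix

namespace Stmt9

open Fin.NatCast Fin.CommRing

/-- The anti-diagonal matrix `K` with ones on the anti-diagonal. -/
noncomputable def K (ℓ : ℕ) : Matrix (Fin (2*ℓ)) (Fin (2*ℓ)) ℂ :=
  Matrix.of fun i j => if (i.val + 1) + (j.val + 1) = 2*ℓ + 1 then 1 else 0

/-- The matrix `t_k ∈ O_{2ℓ}(ℂ)` (1-based indices): `(t_k)_{ij} = 1` if `i = j` and
`i ∉ {k, 2ℓ-k+1}`, or if `i ≠ j` and `{i,j} = {k, 2ℓ-k+1}`; other entries `0`. -/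
noncomputable def t (ℓ k : ℕ) : Matrix (Fin (2*ℓ)) (Fin (2*ℓ)) ℂ :=
  Matrix.of fun i j =>
    if i = j ∧ i.val + 1 ≠ k ∧ i.val + 1 ≠ 2*ℓ - k + 1 then 1
    else if i ≠ j ∧ ((i.val + 1 = k ∧ j.val + 1 = 2*ℓ - k + 1) ∨
        (i.val + 1 = 2*ℓ - k + 1 ∧ j.val + 1 = k)) then 1
    else 0

/-- The matrix `s_k ∈ SO_{2ℓ}(ℂ)` (1-based indices): `(s_k)_{ij} = 1` if `i = j` and
`i ∉ {k, k+1, 2ℓ-k, 2ℓ-k+1}`, or if `i ≠ j` and `{i,j} = {k, k+1}`, or if `i ≠ j` and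
`{i,j} = {2ℓ-k, 2ℓ-k+1}`; other entries `0`. -/
noncomputable def s (ℓ k : ℕ) : Matrix (Fin (2*ℓ)) (Fin (2*ℓ)) ℂ :=
  Matrix.of fun i j =>
    if i = j ∧ i.val + 1 ≠ k ∧ i.val + 1 ≠ k + 1 ∧
        i.val + 1 ≠ 2*ℓ - k ∧ i.val + 1 ≠ 2*ℓ - k + 1 then 1
    else if i ≠ j ∧ ((i.val + 1 = k ∧ j.val + 1 = k + 1) ∨
        (i.val + 1 = k + 1 ∧ j.val + 1 = k)) then 1
    else if i ≠ j ∧ ((i.val + 1 = 2*ℓ - k ∧ j.val + 1 = 2*ℓ - k + 1) ∨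
        (i.val + 1 = 2*ℓ - k + 1 ∧ j.val + 1 = 2*ℓ - k)) then 1
    else 0

/-- `n_{ℓ⃗} = ∏_{ν=1}^{μ} ( s_{ℓ'_ν+1} ⋯ s_{ℓ'_ν+ℓ_ν-1} · t_{ℓ'_ν+ℓ_ν} )`. -/
noncomputable def n (ℓ μ : ℕ) (L : Fin μ → ℕ) : Matrix (Fin (2*ℓ)) (Fin (2*ℓ)) ℂ :=
  (List.ofFn fun ν : Fin μ =>
    (List.ofFn fun a : Fin (L ν - 1) =>
      s ℓ ((∑ j ∈ Finset.Iio ν, L j) + a.val + 1)).prod *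
    t ℓ ((∑ j ∈ Finset.Iio ν, L j) + L ν)).prod


/-! ### Auxiliary machinery -/

set_option maxHeartbeats 1600000

/-- Matrix attached to a function on `ℕ` (column `j` maps to row `f j`). -/
noncomputable def M (ℓ : ℕ) (f : ℕ → ℕ) : Matrix (Fin (2*ℓ)) (Fin (2*ℓ)) ℂ :=
  Matrix.of fun i j => if i.val = f j.val then 1 else 0

lemma M_congr {ℓ : ℕ} {f g : ℕ → ℕ} (h : ∀ v < 2*ℓ, f v = g v) : M ℓ f = M ℓ g := by
  ext i j
  simp only [M, Matrix.of_apply, h j.val j.isLt]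

lemma M_one {ℓ : ℕ} : M ℓ id = 1 := by
  ext i j
  simp [M, Matrix.one_apply, Fin.ext_iff]

lemma M_mul {ℓ : ℕ} {f g : ℕ → ℕ} (hg : ∀ v < 2*ℓ, g v < 2*ℓ) :
    M ℓ f * M ℓ g = M ℓ (f ∘ g) := by
  ext i j
  rw [Matrix.mul_apply]
  rw [Finset.sum_eq_single (⟨g j.val, hg j.val j.isLt⟩ : Fin (2*ℓ))]
  · simp [M]
  · intro k _ hk
    have : k.val ≠ g j.val := by
      intro h; exact hk (Fin.ext h)
    simp [M, this]
  · simp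

lemma M_list_prod {ℓ : ℕ} : ∀ (fs : List (ℕ → ℕ)), (∀ f ∈ fs, ∀ v < 2*ℓ, f v < 2*ℓ) →
    (fs.map (M ℓ)).prod = M ℓ (fs.foldr (· ∘ ·) id)
  | [], _ => by simp [M_one.symm]
  | f :: fs, h => by
    have hfs : ∀ f ∈ fs, ∀ v < 2*ℓ, f v < 2*ℓ := fun f hf => h f (List.mem_cons_of_mem _ hf)
    have hfold : ∀ v < 2*ℓ, (fs.foldr (· ∘ ·) id) v < 2*ℓ := by
      clear h
      induction fs with
      | nil => intro v hv; simpa using hv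
      | cons g gs ih =>
        intro v hv
        simp only [List.foldr_cons, Function.comp_apply]
        exact hfs g (by simp) _ (ih (fun f hf => hfs f (List.mem_cons_of_mem _ hf)) v hv)
    simp only [List.map_cons, List.prod_cons, List.foldr_cons]
    rw [M_list_prod fs hfs, M_mul hfold]

lemma foldr_comp_fixes {fs : List (ℕ → ℕ)} {v : ℕ} (h : ∀ f ∈ fs, f v = v) :
    fs.foldr (· ∘ ·) id v = v := by
  induction fs with
  | nil => rfl
  | cons f fs ih =>
    simp only [List.foldr_cons, Function.comp_apply]
    rw [ih (fun f hf => h f (List.mem_cons_of_mem _ hf)), h f (by simp)]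

lemma foldr_comp_single : ∀ (fs : List (ℕ → ℕ)) (k : ℕ) (hk : k < fs.length) (v : ℕ),
    (∀ i (hi : i < fs.length), i ≠ k → fs[i] v = v ∧ fs[i] (fs[k] v) = fs[k] v) →
    fs.foldr (· ∘ ·) id v = fs[k] v
  | f :: fs, 0, _, v, h => by
    simp only [List.foldr_cons, Function.comp_apply, List.getElem_cons_zero]
    rw [foldr_comp_fixes]
    intro g hg
    obtain ⟨i, hi, rfl⟩ := List.mem_iff_getElem.mp hg
    exact (h (i+1) (by simpa using Nat.succ_lt_succ hi) (by omega)).1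
  | f :: fs, k + 1, hk, v, h => by
    simp only [List.foldr_cons, Function.comp_apply, List.getElem_cons_succ]
    rw [foldr_comp_single fs k (by simpa using hk) v
      (fun i hi hik => h (i+1) (by simpa using Nat.succ_lt_succ hi) (by omega))]
    exact (h 0 (by simp) (by omega)).2

/-! ### The cyclic shift matrix and its characteristic polynomial -/

/-- The cyclic shift matrix on `Fin m`. -/
noncomputable def Cm (m : ℕ) [NeZero m] : Matrix (Fin m) (Fin m) ℂ :=
  Matrix.of fun i j => if i = j + 1 then 1 else 0

lemma Cm_pow (m : ℕ) [NeZero m] : ∀ (r : ℕ),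
    (Cm m) ^ r = Matrix.of fun i j => if i = j + (r : Fin m) then 1 else 0
  | 0 => by
    ext i j
    simp [Matrix.one_apply, eq_comm]
  | r + 1 => by
    rw [pow_succ, Cm_pow m r]
    ext i j
    rw [Matrix.mul_apply]
    rw [Finset.sum_eq_single (j + 1)]
    · simp only [Matrix.of_apply, Cm, if_pos rfl, mul_one]
      have h1 : ((r + 1 : ℕ) : Fin m) = (r : Fin m) + 1 := by push_cast; ring
      rw [h1]
      have h2 : j + 1 + (r : Fin m) = j + ((r : Fin m) + 1) := by ring
      rw [h2]
      simp
    · intro k _ hk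
      have : (Cm m) k j = 0 := by
        simp only [Cm, Matrix.of_apply]
        exact if_neg (fun h => hk (by rw [h]))
      rw [this, mul_zero]
    · intro hmem
      exact absurd (Finset.mem_univ _) hmem

lemma Cm_pow_self (m : ℕ) [NeZero m] : (Cm m) ^ m = 1 := by
  rw [Cm_pow]
  ext i j
  simp [Matrix.one_apply, Fin.natCast_self, eq_comm]

lemma Cm_mul_transpose (m : ℕ) [NeZero m] : Cm m * (Cm m)ᵀ = 1 := by
  ext i j
  rw [Matrix.mul_apply]
  rw [Finset.sum_eq_single (i - 1)]
  · simp only [Matrix.transpose_apply, Cm, Matrix.of_apply, sub_add_cancel, if_pos rfl, one_mul,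
      Matrix.one_apply]
    simp [eq_comm]
  · intro k _ hk
    have : (Cm m) i k = 0 := by
      simp only [Cm, Matrix.of_apply]
      exact if_neg (fun h => hk (by rw [h, add_sub_cancel_right]))
    rw [this, zero_mul]
  · intro hmem
    exact absurd (Finset.mem_univ _) hmem

lemma aeval_Cm_eq_zero_imp (m : ℕ) [NeZero m] (q : ℂ[X])
    (h : aeval (Cm m) q = 0) (hd : ∀ d, m ≤ d → q.coeff d = 0) : q = 0 := by
  have hm : 0 < m := Nat.pos_of_ne_zero (NeZero.ne m)
  ext d
  simp only [coeff_zero]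
  by_cases hdm : m ≤ d
  · exact hd d hdm
  push_neg at hdm
  by_cases hdn : q.natDegree < d
  · exact coeff_eq_zero_of_natDegree_lt hdn
  push_neg at hdn
  have hsum := Polynomial.aeval_eq_sum_range (R := ℂ) (p := q) (Cm m)
  rw [h] at hsum
  have key := congrArg (fun A : Matrix (Fin m) (Fin m) ℂ => A ⟨d, hdm⟩ 0) hsum.symm
  simp only [Matrix.zero_apply] at key
  rw [Matrix.sum_apply] at key
  rw [Finset.sum_eq_single d] at key
  · rw [Matrix.smul_apply, Cm_pow] at key
    simp only [Matrix.of_apply, zero_add] at key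
    rw [if_pos (by ext; simp [Fin.val_natCast, Nat.mod_eq_of_lt hdm]), smul_eq_mul,
      mul_one] at key
    exact key
  · intro i _ hi
    rw [Matrix.smul_apply, Cm_pow]
    simp only [Matrix.of_apply, zero_add]
    by_cases him : i < m
    · rw [if_neg ?_, smul_zero]
      intro hh
      have hval := congrArg Fin.val hh
      simp only [Fin.val_natCast] at hval
      rw [Nat.mod_eq_of_lt him] at hval
      exact hi (by omega)
    · rw [hd i (by omega)]
      simp
  · intro hdmem
    exact absurd (Finset.mem_range.mpr (by omega)) hdmem

lemma charpoly_Cm (m : ℕ) (hm : 0 < m) [NeZero m] : (Cm m).charpoly = X ^ m - 1 := by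
  have h1 : aeval (Cm m) ((Cm m).charpoly - (X ^ m - 1)) = 0 := by
    rw [map_sub, Matrix.aeval_self_charpoly, map_sub, map_pow, aeval_X]
    rw [Cm_pow_self]
    simp
  have hdeg : (Cm m).charpoly.natDegree = m := by
    simp [Matrix.charpoly_natDegree_eq_dim]
  have h2 : ∀ d, m ≤ d → ((Cm m).charpoly - (X ^ m - 1)).coeff d = 0 := by
    intro d hdm
    rw [coeff_sub, coeff_sub, coeff_X_pow, coeff_one]
    rcases eq_or_lt_of_le hdm with rfl | hlt
    · rw [if_pos rfl, if_neg (by omega)]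
      have hc := (Cm m).charpoly_monic.coeff_natDegree
      rw [hdeg] at hc
      rw [hc]; ring
    · rw [if_neg (by omega), if_neg (by omega)]
      rw [coeff_eq_zero_of_natDegree_lt (by omega)]
      ring
  have h0 := aeval_Cm_eq_zero_imp m _ h1 h2
  exact sub_eq_zero.mp h0

/-! ### Block diagonal matrices -/

/-- Split-off equiv for sigma over `Fin (μ+1)`. -/
def sigmaSuccEquiv (μ : ℕ) (β : Fin (μ+1) → ℕ) :
    (Σ i : Fin (μ+1), Fin (β i)) ≃ (Fin (β 0) ⊕ Σ i : Fin μ, Fin (β i.succ)) where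
  toFun p := Fin.cases (motive := fun i => Fin (β i) → (Fin (β 0) ⊕ Σ i : Fin μ, Fin (β i.succ)))
    (fun b => Sum.inl b) (fun j b => Sum.inr ⟨j, b⟩) p.1 p.2
  invFun q := Sum.elim (fun b => ⟨0, b⟩) (fun p => ⟨p.1.succ, p.2⟩) q
  left_inv := by
    rintro ⟨i, b⟩
    induction i using Fin.cases with
    | zero => simp
    | succ j => simp
  right_inv := by
    rintro (b | ⟨j, b⟩)
    · simp
    · simp

lemma det_blockDiagonal'_fin {R : Type*} [CommRing R] :
    ∀ (μ : ℕ) (β : Fin μ → ℕ) (d : ∀ i, Matrix (Fin (β i)) (Fin (β i)) R),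
      (Matrix.blockDiagonal' d).det = ∏ i, (d i).det
  | 0, β, d => by
    have : IsEmpty (Σ i : Fin 0, Fin (β i)) := by
      constructor; rintro ⟨i, _⟩; exact i.elim0
    simp [Matrix.det_isEmpty]
  | μ + 1, β, d => by
    set E := sigmaSuccEquiv μ β
    have hre : Matrix.blockDiagonal' d =
        Matrix.reindex E.symm E.symm
          (Matrix.fromBlocks (d 0) 0 0 (Matrix.blockDiagonal' (fun i : Fin μ => d i.succ))) := by
      ext p q
      rw [Matrix.reindex_apply, Matrix.submatrix_apply, Equiv.symm_symm]
      obtain ⟨i, b⟩ := p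
      obtain ⟨i', b'⟩ := q
      induction i using Fin.cases with
      | zero =>
        induction i' using Fin.cases with
        | zero =>
          simp [E, sigmaSuccEquiv, Matrix.blockDiagonal'_apply_eq]
        | succ j' =>
          simp [E, sigmaSuccEquiv,
            Matrix.blockDiagonal'_apply_ne _ _ _ (show (0 : Fin (μ+1)) ≠ j'.succ from
              (Fin.succ_ne_zero j').symm)]
      | succ j =>
        induction i' using Fin.cases with
        | zero =>
          simp [E, sigmaSuccEquiv,
            Matrix.blockDiagonal'_apply_ne _ _ _ (Fin.succ_ne_zero j)]
        | succ j' =>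
          simp only [E, sigmaSuccEquiv, Equiv.coe_fn_mk, Fin.cases_succ,
            Matrix.fromBlocks_apply₂₂]
          by_cases h : j = j'
          · subst h
            rw [Matrix.blockDiagonal'_apply_eq, Matrix.blockDiagonal'_apply_eq]
          · rw [Matrix.blockDiagonal'_apply_ne _ _ _ h,
              Matrix.blockDiagonal'_apply_ne _ _ _ (fun hh => h (Fin.succ_injective _ hh))]
    rw [hre, Matrix.det_reindex_self, Matrix.det_fromBlocks_zero₁₂,
      det_blockDiagonal'_fin μ _ _, Fin.prod_univ_succ]

lemma charmatrix_blockDiagonal' {μ : ℕ} (β : Fin μ → ℕ)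
    (d : ∀ i, Matrix (Fin (β i)) (Fin (β i)) ℂ) :
    Matrix.charmatrix (Matrix.blockDiagonal' d) =
      Matrix.blockDiagonal' (fun i => Matrix.charmatrix (d i)) := by
  apply Matrix.ext
  rintro ⟨i, b⟩ ⟨i', b'⟩
  by_cases h : i = i'
  · subst h
    by_cases hb : b = b'
    · subst hb
      simp [Matrix.blockDiagonal'_apply_eq]
    · have hne : (⟨i, b⟩ : Σ i, Fin (β i)) ≠ ⟨i, b'⟩ := by
        intro hh; exact hb (by simpa using hh)
      rw [Matrix.charmatrix_apply_ne _ _ _ hne, Matrix.blockDiagonal'_apply_eq,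
        Matrix.blockDiagonal'_apply_eq, Matrix.charmatrix_apply_ne _ _ _ hb]
  · have hne : (⟨i, b⟩ : Σ i, Fin (β i)) ≠ ⟨i', b'⟩ := by
      intro hh; exact h (by simpa using congrArg Sigma.fst hh)
    rw [Matrix.charmatrix_apply_ne _ _ _ hne, Matrix.blockDiagonal'_apply_ne _ _ _ h,
      Matrix.blockDiagonal'_apply_ne _ _ _ h]
    simp

lemma charpoly_blockDiagonal'_fin {μ : ℕ} (β : Fin μ → ℕ)
    (d : ∀ i, Matrix (Fin (β i)) (Fin (β i)) ℂ) :
    (Matrix.blockDiagonal' d).charpoly = ∏ i, (d i).charpoly := by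
  rw [Matrix.charpoly, charmatrix_blockDiagonal', det_blockDiagonal'_fin]
  rfl

/-! ### The generators as function matrices -/

def tf (ℓ k : ℕ) : ℕ → ℕ := fun v =>
  if v + 1 = k then 2*ℓ - k else if v + 1 = 2*ℓ - k + 1 then k - 1 else v

def sf (ℓ k : ℕ) : ℕ → ℕ := fun v =>
  if v + 1 = k then k
  else if v + 1 = k + 1 then k - 1
  else if v + 1 = 2*ℓ - k then 2*ℓ - k
  else if v + 1 = 2*ℓ - k + 1 then 2*ℓ - k - 1
  else v

lemma t_eq {ℓ k : ℕ} (h1 : 1 ≤ k) (h2 : k ≤ ℓ) : t ℓ k = M ℓ (tf ℓ k) := by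
  ext ⟨i, hi⟩ ⟨j, hj⟩
  simp only [t, M, tf, Matrix.of_apply, Fin.mk.injEq, ne_eq]
  split_ifs <;> first | rfl | omega

lemma s_eq {ℓ k : ℕ} (h1 : 1 ≤ k) (h2 : k + 1 ≤ ℓ) : s ℓ k = M ℓ (sf ℓ k) := by
  ext ⟨i, hi⟩ ⟨j, hj⟩
  simp only [s, M, sf, Matrix.of_apply, Fin.mk.injEq, ne_eq]
  split_ifs <;> first | rfl | omega

def T (ℓ a r : ℕ) : ℕ → ℕ := fun v =>
  if a ≤ v ∧ v < a + r then v + 1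
  else if v = a + r then a
  else if 2*ℓ - a - r ≤ v ∧ v < 2*ℓ - a then v - 1
  else if v = 2*ℓ - a - r - 1 then 2*ℓ - 1 - a
  else v

def G (ℓ a m : ℕ) : ℕ → ℕ := fun v =>
  if a ≤ v ∧ v + 1 < a + m then v + 1
  else if v + 1 = a + m then 2*ℓ - 1 - a
  else if 2*ℓ - a - m < v ∧ v < 2*ℓ - a then v - 1
  else if v = 2*ℓ - a - m then a
  else v

lemma tf_bounded {ℓ k : ℕ} (h1 : 1 ≤ k) (h2 : k ≤ ℓ) : ∀ v < 2*ℓ, tf ℓ k v < 2*ℓ := by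
  intro v hv; unfold tf; split_ifs <;> omega

lemma sf_bounded {ℓ k : ℕ} (h1 : 1 ≤ k) (h2 : k + 1 ≤ ℓ) : ∀ v < 2*ℓ, sf ℓ k v < 2*ℓ := by
  intro v hv; unfold sf; split_ifs <;> omega

lemma G_bounded {ℓ a m : ℕ} (hm : 1 ≤ m) (hle : a + m ≤ ℓ) : ∀ v < 2*ℓ, G ℓ a m v < 2*ℓ := by
  intro v hv; unfold G; split_ifs <;> omega

lemma G_fix {ℓ a m : ℕ} (hm : 1 ≤ m) (hle : a + m ≤ ℓ) :
    ∀ v < 2*ℓ, (v < a ∨ (a + m ≤ v ∧ v < 2*ℓ - a - m) ∨ 2*ℓ - a ≤ v) → G ℓ a m v = v := by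
  intro v hv h; unfold G; split_ifs <;> omega

lemma T_zero {ℓ a : ℕ} : ∀ v < 2*ℓ, T ℓ a 0 v = v := by
  intro v hv; unfold T; split_ifs <;> omega

lemma sf_spec {ℓ k v : ℕ} :
    (v + 1 = k ∧ sf ℓ k v = k) ∨ (v + 1 = k + 1 ∧ sf ℓ k v = k - 1) ∨
    (v + 1 = 2*ℓ - k ∧ sf ℓ k v = 2*ℓ - k) ∨ (v + 1 = 2*ℓ - k + 1 ∧ sf ℓ k v = 2*ℓ - k - 1) ∨
    (v + 1 ≠ k ∧ v + 1 ≠ k + 1 ∧ v + 1 ≠ 2*ℓ - k ∧ v + 1 ≠ 2*ℓ - k + 1 ∧ sf ℓ k v = v) := by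
  unfold sf; split_ifs with h1 h2 h3 h4
  · exact Or.inl ⟨h1, rfl⟩
  · exact Or.inr (Or.inl ⟨h2, rfl⟩)
  · exact Or.inr (Or.inr (Or.inl ⟨h3, rfl⟩))
  · exact Or.inr (Or.inr (Or.inr (Or.inl ⟨h4, rfl⟩)))
  · exact Or.inr (Or.inr (Or.inr (Or.inr ⟨h1, h2, h3, h4, rfl⟩)))

lemma T_spec {ℓ a r v : ℕ} :
    (a ≤ v ∧ v < a + r ∧ T ℓ a r v = v + 1) ∨
    (¬(a ≤ v ∧ v < a + r) ∧ v = a + r ∧ T ℓ a r v = a) ∨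
    (¬(a ≤ v ∧ v < a + r) ∧ v ≠ a + r ∧ 2*ℓ - a - r ≤ v ∧ v < 2*ℓ - a ∧ T ℓ a r v = v - 1) ∨
    (¬(a ≤ v ∧ v < a + r) ∧ v ≠ a + r ∧ ¬(2*ℓ - a - r ≤ v ∧ v < 2*ℓ - a) ∧
      v = 2*ℓ - a - r - 1 ∧ T ℓ a r v = 2*ℓ - 1 - a) ∨
    (¬(a ≤ v ∧ v < a + r) ∧ v ≠ a + r ∧ ¬(2*ℓ - a - r ≤ v ∧ v < 2*ℓ - a) ∧
      v ≠ 2*ℓ - a - r - 1 ∧ T ℓ a r v = v) := by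
  unfold T; split_ifs with h1 h2 h3 h4
  · exact Or.inl ⟨h1.1, h1.2, rfl⟩
  · exact Or.inr (Or.inl ⟨h1, h2, rfl⟩)
  · exact Or.inr (Or.inr (Or.inl ⟨h1, h2, h3.1, h3.2, rfl⟩))
  · exact Or.inr (Or.inr (Or.inr (Or.inl ⟨h1, h2, h3, h4, rfl⟩)))
  · exact Or.inr (Or.inr (Or.inr (Or.inr ⟨h1, h2, h3, h4, rfl⟩)))

lemma T_succ {ℓ a r : ℕ} (h : a + r + 1 + 1 ≤ ℓ) :
    ∀ v < 2*ℓ, T ℓ a (r+1) v = T ℓ a r (sf ℓ (a+r+1) v) := by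
  intro v hv
  have h1 := T_spec (ℓ := ℓ) (a := a) (r := r+1) (v := v)
  have h2 := sf_spec (ℓ := ℓ) (k := a+r+1) (v := v)
  have h3 := T_spec (ℓ := ℓ) (a := a) (r := r) (v := sf ℓ (a+r+1) v)
  omega

lemma tf_spec {ℓ k v : ℕ} :
    (v + 1 = k ∧ tf ℓ k v = 2*ℓ - k) ∨
    (v + 1 ≠ k ∧ v + 1 = 2*ℓ - k + 1 ∧ tf ℓ k v = k - 1) ∨
    (v + 1 ≠ k ∧ v + 1 ≠ 2*ℓ - k + 1 ∧ tf ℓ k v = v) := by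
  unfold tf; split_ifs with h1 h2
  · exact Or.inl ⟨h1, rfl⟩
  · exact Or.inr (Or.inl ⟨h1, h2, rfl⟩)
  · exact Or.inr (Or.inr ⟨h1, h2, rfl⟩)

lemma T_tf_eq_G {ℓ a m : ℕ} (hm : 1 ≤ m) (hle : a + m ≤ ℓ) :
    ∀ v < 2*ℓ, T ℓ a (m-1) (tf ℓ (a+m) v) = G ℓ a m v := by
  intro v hv
  have h1 := T_spec (ℓ := ℓ) (a := a) (r := m-1) (v := tf ℓ (a+m) v)
  have h2 := tf_spec (ℓ := ℓ) (k := a+m) (v := v)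
  unfold G
  split_ifs <;> omega

lemma sList_prod {ℓ a : ℕ} : ∀ (r : ℕ), a + r + 1 ≤ ℓ →
    (List.ofFn fun x : Fin r => s ℓ (a + x.val + 1)).prod = M ℓ (T ℓ a r)
  | 0, h => by
    simp only [List.ofFn_zero, List.prod_nil]
    rw [← M_one]
    exact (M_congr T_zero).symm
  | r+1, h => by
    rw [List.ofFn_succ', List.concat_eq_append, List.prod_append, List.prod_cons,
      List.prod_nil, mul_one]
    have hc : (List.ofFn fun x : Fin r => s ℓ (a + (Fin.castSucc x).val + 1)).prod
        = M ℓ (T ℓ a r) := sList_prod r (by omega)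
    rw [hc, Fin.val_last, s_eq (by omega) (by omega), M_mul (sf_bounded (by omega) (by omega))]
    exact M_congr (f := (T ℓ a r) ∘ (sf ℓ (a+r+1))) (g := T ℓ a (r+1))
      (fun v hv => (T_succ (show a+r+1+1 ≤ ℓ by omega) v hv).symm)

/-- The 0-based position of the `b`-th element of the `ν`-th cycle. -/
def ev (ℓ a m b : ℕ) : ℕ := if b < m then a + b else 2*ℓ - 1 - a - (b - m)

lemma ev_spec {ℓ a m b : ℕ} :
    (b < m ∧ ev ℓ a m b = a + b) ∨ (m ≤ b ∧ ev ℓ a m b = 2*ℓ - 1 - a - (b - m)) := by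
  unfold ev; split_ifs <;> omega

lemma G_spec {ℓ a m v : ℕ} :
    (a ≤ v ∧ v + 1 < a + m ∧ G ℓ a m v = v + 1) ∨
    (¬(a ≤ v ∧ v + 1 < a + m) ∧ v + 1 = a + m ∧ G ℓ a m v = 2*ℓ - 1 - a) ∨
    (¬(a ≤ v ∧ v + 1 < a + m) ∧ v + 1 ≠ a + m ∧ (2*ℓ - a - m < v ∧ v < 2*ℓ - a) ∧
      G ℓ a m v = v - 1) ∨
    (¬(a ≤ v ∧ v + 1 < a + m) ∧ v + 1 ≠ a + m ∧ ¬(2*ℓ - a - m < v ∧ v < 2*ℓ - a) ∧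
      v = 2*ℓ - a - m ∧ G ℓ a m v = a) ∨
    (¬(a ≤ v ∧ v + 1 < a + m) ∧ v + 1 ≠ a + m ∧ ¬(2*ℓ - a - m < v ∧ v < 2*ℓ - a) ∧
      v ≠ 2*ℓ - a - m ∧ G ℓ a m v = v) := by
  unfold G; split_ifs with h1 h2 h3 h4
  · exact Or.inl ⟨h1.1, h1.2, rfl⟩
  · exact Or.inr (Or.inl ⟨h1, h2, rfl⟩)
  · exact Or.inr (Or.inr (Or.inl ⟨h1, h2, h3, rfl⟩))
  · exact Or.inr (Or.inr (Or.inr (Or.inl ⟨h1, h2, h3, h4, rfl⟩)))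
  · exact Or.inr (Or.inr (Or.inr (Or.inr ⟨h1, h2, h3, h4, rfl⟩)))

/-- For `ℓ ≥ 3` and a partition `ℓ⃗ = (ℓ_μ ≥ ⋯ ≥ ℓ_1)` of `ℓ` into an even
number `μ` of positive parts, the element `n_{ℓ⃗}` lies in `SO_{2ℓ}(ℂ)` (i.e. it satisfies
`g = (K g⁻¹ K)ᵀ` and `det g = 1`) and its characteristic polynomial acting on `ℂ^{2ℓ}` is
`∏_{ν=1}^{μ} (t^{2ℓ_ν} - 1)`. -/
theorem stmt9 (ℓ μ : ℕ) (hℓ : 3 ≤ ℓ) (hμ : Even μ) (L : Fin μ → ℕ)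
    (hpos : ∀ ν, 0 < L ν) (hmono : Monotone L) (hsum : ∑ ν, L ν = ℓ) :
    (n ℓ μ L).det = 1 ∧ n ℓ μ L = (K ℓ * (n ℓ μ L)⁻¹ * K ℓ)ᵀ ∧
    (n ℓ μ L).charpoly = ∏ ν : Fin μ, (X ^ (2 * L ν) - 1) := by
  classical
  haveI : ∀ ν : Fin μ, NeZero (2 * L ν) := fun ν => ⟨by have := hpos ν; omega⟩
  set A : Fin μ → ℕ := fun ν => ∑ j ∈ Finset.Iio ν, L j with hA
  -- basic facts about partial sums
  have hAle : ∀ ν, A ν + L ν ≤ ℓ := by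
    intro ν
    have h1 : Finset.Iic ν = insert ν (Finset.Iio ν) := (Finset.Iio_insert ν).symm
    have h2 : ∑ j ∈ Finset.Iic ν, L j = L ν + A ν := by
      rw [h1, Finset.sum_insert (by simp)]
    have h3 : ∑ j ∈ Finset.Iic ν, L j ≤ ∑ j, L j :=
      Finset.sum_le_sum_of_subset (Finset.subset_univ _)
    omega
  have hAmono : ∀ ν ν' : Fin μ, ν < ν' → A ν + L ν ≤ A ν' := by
    intro ν ν' hlt
    have h1 : Finset.Iic ν = insert ν (Finset.Iio ν) := (Finset.Iio_insert ν).symm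
    have h2 : ∑ j ∈ Finset.Iic ν, L j = L ν + A ν := by
      rw [h1, Finset.sum_insert (by simp)]
    have h3 : ∑ j ∈ Finset.Iic ν, L j ≤ ∑ j ∈ Finset.Iio ν', L j :=
      Finset.sum_le_sum_of_subset (fun x hx => by
        simp only [Finset.mem_Iic] at hx
        simp only [Finset.mem_Iio]
        exact lt_of_le_of_lt hx hlt)
    have h4 : A ν' = ∑ j ∈ Finset.Iio ν', L j := rfl
    omega
  -- the sigma type indexing the blocks
  have hbound : ∀ p : (Σ ν : Fin μ, Fin (2 * L ν)), ev ℓ (A p.1) (L p.1) p.2.val < 2*ℓ := by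
    rintro ⟨ν, b⟩
    dsimp only
    have hb := b.isLt
    have h1 := hAle ν
    have := ev_spec (ℓ := ℓ) (a := A ν) (m := L ν) (b := b.val)
    omega
  let emap : (Σ ν : Fin μ, Fin (2 * L ν)) → Fin (2*ℓ) := fun p => ⟨_, hbound p⟩
  have hemapval : ∀ p, (emap p).val = ev ℓ (A p.1) (L p.1) p.2.val := fun p => rfl
  have hinj : Function.Injective emap := by
    rintro ⟨ν, b⟩ ⟨ν', b'⟩ hpq
    have hval : ev ℓ (A ν) (L ν) b.val = ev ℓ (A ν') (L ν') b'.val := congrArg Fin.val hpq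
    have hb := b.isLt
    have hb' := b'.isLt
    have h1 := hAle ν
    have h2 := hAle ν'
    rcases lt_trichotomy ν ν' with hlt | heq | hgt
    · exfalso
      have h3 := hAmono ν ν' hlt
      have hp1 := hpos ν
      have hp2 := hpos ν'
      unfold ev at hval
      split_ifs at hval <;> omega
    · subst heq
      have hbb : b = b' := by
        apply Fin.ext
        unfold ev at hval
        split_ifs at hval <;> omega
      rw [hbb]
    · exfalso
      have h3 := hAmono ν' ν hgt
      have hp1 := hpos ν
      have hp2 := hpos ν'
      unfold ev at hval
      split_ifs at hval <;> omega
  have hcard : Fintype.card (Σ ν : Fin μ, Fin (2 * L ν)) = Fintype.card (Fin (2*ℓ)) := by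
    rw [Fintype.card_sigma]
    simp only [Fintype.card_fin]
    rw [← Finset.mul_sum, hsum]
  have hbij : Function.Bijective emap :=
    (Fintype.bijective_iff_injective_and_card emap).mpr ⟨hinj, hcard⟩
  let e : (Σ ν : Fin μ, Fin (2 * L ν)) ≃ Fin (2*ℓ) := Equiv.ofBijective emap hbij
  have heval : ∀ p, (e p).val = ev ℓ (A p.1) (L p.1) p.2.val := fun p => rfl
  have hsurj : ∀ v : Fin (2*ℓ), ∃ p, e p = v := fun v => ⟨e.symm v, e.apply_symm_apply v⟩
  -- n as a function matrix
  set FF : ℕ → ℕ := (List.ofFn fun ν : Fin μ => G ℓ (A ν) (L ν)).foldr (· ∘ ·) id with hFF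
  have hn : n ℓ μ L = M ℓ FF := by
    rw [n]
    have hfac : (fun ν : Fin μ =>
        (List.ofFn fun a : Fin (L ν - 1) =>
          s ℓ ((∑ j ∈ Finset.Iio ν, L j) + a.val + 1)).prod *
        t ℓ ((∑ j ∈ Finset.Iio ν, L j) + L ν)) = fun ν : Fin μ => M ℓ (G ℓ (A ν) (L ν)) := by
      funext ν
      have hp := hpos ν
      have hle := hAle ν
      rw [show (∑ j ∈ Finset.Iio ν, L j) = A ν from rfl]
      rw [sList_prod (L ν - 1) (by omega), t_eq (by omega) (by omega),
        M_mul (tf_bounded (by omega) (by omega))]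
      exact M_congr (fun v hv => by
        have := T_tf_eq_G (ℓ := ℓ) (a := A ν) (m := L ν) (by omega) (by omega) v hv
        simpa [Nat.sub_add_cancel] using this)
    rw [hfac]
    rw [show (List.ofFn fun ν : Fin μ => M ℓ (G ℓ (A ν) (L ν)))
        = (List.ofFn fun ν : Fin μ => G ℓ (A ν) (L ν)).map (M ℓ) by
      rw [List.map_ofFn]; rfl]
    rw [M_list_prod]
    intro f hf
    rw [List.mem_ofFn] at hf
    obtain ⟨ν, rfl⟩ := hf
    exact G_bounded (hpos ν) (hAle ν)
  -- the key cycle computation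
  have hGmain : ∀ (ν : Fin μ) (b : Fin (2 * L ν)),
      G ℓ (A ν) (L ν) (ev ℓ (A ν) (L ν) b.val) = ev ℓ (A ν) (L ν) ((b + 1).val) := by
    intro ν b
    have hb := b.isLt
    have hp := hpos ν
    have hle := hAle ν
    have hb1 : ((b + 1 : Fin (2 * L ν))).val = (b.val + 1) % (2 * L ν) := by
      have h1 : ((1 : Fin (2 * L ν))).val = 1 := by
        rw [Fin.val_one']
        exact Nat.mod_eq_of_lt (by omega)
      rw [Fin.add_def, h1]
    have hcases : ((b + 1 : Fin (2 * L ν))).val = b.val + 1 ∧ b.val + 1 < 2 * L ν ∨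
        ((b + 1 : Fin (2 * L ν))).val = 0 ∧ b.val + 1 = 2 * L ν := by
      rcases Nat.lt_or_ge (b.val + 1) (2 * L ν) with hlt | hge
      · left; exact ⟨by rw [hb1, Nat.mod_eq_of_lt hlt], hlt⟩
      · right
        have : b.val + 1 = 2 * L ν := by omega
        exact ⟨by rw [hb1, this, Nat.mod_self], this⟩
    have e1 := ev_spec (ℓ := ℓ) (a := A ν) (m := L ν) (b := b.val)
    have e2 := ev_spec (ℓ := ℓ) (a := A ν) (m := L ν) (b := ((b + 1 : Fin (2 * L ν))).val)
    have g1 := G_spec (ℓ := ℓ) (a := A ν) (m := L ν) (v := ev ℓ (A ν) (L ν) b.val)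
    omega
  have hlist_len : (List.ofFn fun ν : Fin μ => G ℓ (A ν) (L ν)).length = μ :=
    List.length_ofFn
  have hgetElem : ∀ (i : ℕ) (hi : i < μ),
      (List.ofFn fun ν : Fin μ => G ℓ (A ν) (L ν))[i]'(by omega) = G ℓ (A ⟨i, hi⟩) (L ⟨i, hi⟩) := by
    intro i hi
    rw [List.getElem_ofFn]
  have hloc : ∀ (ν : Fin μ) (b : Fin (2 * L ν)),
      (A ν ≤ ev ℓ (A ν) (L ν) b.val ∧ ev ℓ (A ν) (L ν) b.val < A ν + L ν) ∨
      (2*ℓ - A ν - L ν ≤ ev ℓ (A ν) (L ν) b.val ∧ ev ℓ (A ν) (L ν) b.val < 2*ℓ - A ν) := by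
    intro ν b
    have hb := b.isLt
    have hp := hpos ν
    have hle := hAle ν
    have := ev_spec (ℓ := ℓ) (a := A ν) (m := L ν) (b := b.val)
    omega
  have hkey : ∀ (ν : Fin μ) (b : Fin (2 * L ν)),
      FF ((e ⟨ν, b⟩).val) = (e ⟨ν, b + 1⟩).val := by
    intro ν b
    rw [heval, heval]
    rw [hFF]
    rw [foldr_comp_single _ ν.val (by omega) _ ?cond]
    case _ =>
      rw [hgetElem ν.val ν.isLt]
      simp only [Fin.eta]
      exact hGmain ν b
    case cond =>
      intro i hi hik
      rw [hlist_len] at hi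
      rw [hgetElem i hi, hgetElem ν.val ν.isLt]
      simp only [Fin.eta]
      set w := ev ℓ (A ν) (L ν) b.val with hw
      have hig : (⟨i, hi⟩ : Fin μ) ≠ ν := fun hh => hik (by rw [← hh])
      have hord : A ⟨i, hi⟩ + L ⟨i, hi⟩ ≤ A ν ∨ A ν + L ν ≤ A ⟨i, hi⟩ := by
        rcases lt_or_gt_of_ne hig with hlt | hgt
        · left; exact hAmono _ _ hlt
        · right; exact hAmono _ _ hgt
      have hle1 := hAle (⟨i, hi⟩ : Fin μ)
      have hle2 := hAle ν
      have hp1 := hpos (⟨i, hi⟩ : Fin μ)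
      have hp2 := hpos ν
      have hloc1 := hloc ν b
      rw [← hw] at hloc1
      have hwlt : w < 2*ℓ := by omega
      have hG := hGmain ν b
      rw [← hw] at hG
      have hloc2 := hloc ν (b + 1)
      rw [← hG] at hloc2
      constructor
      · exact G_fix hp1 hle1 w hwlt (by omega)
      · exact G_fix hp1 hle1 _ (by omega) (by omega)
  -- identification with the block diagonal matrix
  set B : Matrix (Σ ν : Fin μ, Fin (2 * L ν)) (Σ ν : Fin μ, Fin (2 * L ν)) ℂ :=
    Matrix.blockDiagonal' (fun ν : Fin μ => Cm (2 * L ν)) with hB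
  have hnB : n ℓ μ L = Matrix.reindex e e B := by
    rw [hn]
    ext i j
    obtain ⟨p, rfl⟩ := hsurj i
    obtain ⟨q, rfl⟩ := hsurj j
    rw [Matrix.reindex_apply, Matrix.submatrix_apply, e.symm_apply_apply, e.symm_apply_apply]
    obtain ⟨ν, b⟩ := p
    obtain ⟨ν', b'⟩ := q
    rw [show M ℓ FF (e ⟨ν, b⟩) (e ⟨ν', b'⟩)
        = if (e ⟨ν, b⟩).val = FF ((e ⟨ν', b'⟩).val) then 1 else 0 from rfl]
    rw [hkey ν' b']
    by_cases hνν : ν = ν'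
    · subst hνν
      rw [hB, Matrix.blockDiagonal'_apply_eq]
      rw [show Cm (2 * L ν) b b' = if b = b' + 1 then 1 else 0 from rfl]
      by_cases hbb : b = b' + 1
      · rw [if_pos hbb, if_pos (by rw [hbb])]
      · rw [if_neg hbb, if_neg ?_]
        intro hh
        have := hinj (Fin.ext hh : e ⟨ν, b⟩ = e ⟨ν, b' + 1⟩)
        exact hbb (by simpa using this)
    · rw [hB, Matrix.blockDiagonal'_apply_ne _ _ _ hνν]
      rw [if_neg ?_]
      intro hh
      have := hinj (Fin.ext hh : e ⟨ν, b⟩ = e ⟨ν', b' + 1⟩)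
      exact hνν (congrArg Sigma.fst this)
  -- characteristic polynomial
  have hchar : (n ℓ μ L).charpoly = ∏ ν : Fin μ, (X ^ (2 * L ν) - 1) := by
    rw [hnB, Matrix.charpoly_reindex, hB, charpoly_blockDiagonal'_fin]
    exact Finset.prod_congr rfl fun ν _ => charpoly_Cm (2 * L ν) (by have := hpos ν; omega)
  -- determinant
  have hdet : (n ℓ μ L).det = 1 := by
    rw [Matrix.det_eq_sign_charpoly_coeff, hchar]
    rw [Polynomial.coeff_zero_eq_eval_zero, Polynomial.eval_prod]
    have heval0 : ∀ ν : Fin μ, Polynomial.eval (0 : ℂ) (X ^ (2 * L ν) - 1) = -1 := by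
      intro ν
      have := hpos ν
      simp [Polynomial.eval_pow, zero_pow (by omega : 2 * L ν ≠ 0)]
    rw [Finset.prod_congr rfl fun ν _ => heval0 ν]
    rw [Finset.prod_const, Finset.card_univ, Fintype.card_fin, Fintype.card_fin]
    rw [Even.neg_one_pow hμ, Even.neg_one_pow (⟨ℓ, by ring⟩ : Even (2*ℓ)), mul_one]
  -- orthogonality: n * nᵀ = 1
  have hBB : B * Bᵀ = 1 := by
    rw [hB, Matrix.blockDiagonal'_transpose, ← Matrix.blockDiagonal'_mul]
    have hone : (fun k : Fin μ => Cm (2 * L k) * (Cm (2 * L k))ᵀ)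
        = fun k : Fin μ => (1 : Matrix (Fin (2 * L k)) (Fin (2 * L k)) ℂ) :=
      funext fun k => Cm_mul_transpose (2 * L k)
    rw [hone]
    exact Matrix.blockDiagonal'_one
  have hortho : n ℓ μ L * (n ℓ μ L)ᵀ = 1 := by
    rw [hnB, Matrix.reindex_apply, Matrix.transpose_submatrix, Matrix.submatrix_mul_equiv,
      hBB, Matrix.submatrix_one_equiv]
  have hinv : (n ℓ μ L)⁻¹ = (n ℓ μ L)ᵀ := Matrix.inv_eq_right_inv hortho
  -- the mirror map
  have hKM : K ℓ = M ℓ (fun v => 2*ℓ - 1 - v) := by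
    ext ⟨i, hi⟩ ⟨j, hj⟩
    simp only [K, M, Matrix.of_apply]
    split_ifs <;> first | rfl | omega
  have hKT : (K ℓ)ᵀ = K ℓ := by
    ext ⟨i, hi⟩ ⟨j, hj⟩
    simp only [Matrix.transpose_apply, K, Matrix.of_apply]
    split_ifs <;> first | rfl | omega
  have hFFb : ∀ v < 2*ℓ, FF v < 2*ℓ := by
    intro v hv
    obtain ⟨p, hp⟩ := hsurj ⟨v, hv⟩
    have : FF v = FF ((e p).val) := by rw [hp]
    rw [this]
    obtain ⟨ν, b⟩ := p
    rw [hkey ν b]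
    exact (e ⟨ν, b + 1⟩).isLt
  -- mirror symmetry of the cycle structure
  have hmir : ∀ (ν : Fin μ) (b : Fin (2 * L ν)),
      2*ℓ - 1 - (e ⟨ν, b⟩).val = (e ⟨ν, b + (L ν : Fin (2 * L ν))⟩).val := by
    intro ν b
    rw [heval, heval]
    dsimp only
    have hb := b.isLt
    have hp := hpos ν
    have hle := hAle ν
    have hval : ((b + (L ν : Fin (2 * L ν)))).val = (b.val + L ν % (2 * L ν)) % (2 * L ν) := by
      rw [Fin.add_def, Fin.val_natCast]
    rw [Nat.mod_eq_of_lt (by omega : L ν < 2 * L ν)] at hval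
    have hcases : ((b + (L ν : Fin (2 * L ν)))).val = b.val + L ν ∧ b.val + L ν < 2 * L ν ∨
        ((b + (L ν : Fin (2 * L ν)))).val = b.val - L ν ∧ 2 * L ν ≤ b.val + L ν := by
      rcases Nat.lt_or_ge (b.val + L ν) (2 * L ν) with hlt | hge
      · left; exact ⟨by rw [hval, Nat.mod_eq_of_lt hlt], hlt⟩
      · right
        constructor
        · rw [hval, Nat.mod_eq_sub_mod hge, Nat.mod_eq_of_lt (by omega)]
          omega
        · exact hge
    have e1 := ev_spec (ℓ := ℓ) (a := A ν) (m := L ν) (b := b.val)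
    have e2 := ev_spec (ℓ := ℓ) (a := A ν) (m := L ν)
      (b := ((b + (L ν : Fin (2 * L ν)))).val)
    omega
  have hrho : ∀ (ν : Fin μ) (b : Fin (2 * L ν)),
      (b + (L ν : Fin (2 * L ν)) + 1) + (L ν : Fin (2 * L ν)) = b + 1 := by
    intro ν b
    have hz : (L ν : Fin (2 * L ν)) + (L ν : Fin (2 * L ν)) = 0 := by
      rw [← Nat.cast_add]
      rw [show L ν + L ν = 2 * L ν by ring]
      exact Fin.natCast_self _
    calc b + (L ν : Fin (2 * L ν)) + 1 + (L ν : Fin (2 * L ν))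
        = b + 1 + ((L ν : Fin (2 * L ν)) + (L ν : Fin (2 * L ν))) := by ring
      _ = b + 1 := by rw [hz, add_zero]
  have hmirFF : ∀ v < 2*ℓ, (2*ℓ - 1 - FF (2*ℓ - 1 - v)) = FF v := by
    intro v hv
    obtain ⟨p, hp⟩ := hsurj ⟨v, hv⟩
    obtain ⟨ν, b⟩ := p
    have hv' : v = (e ⟨ν, b⟩).val := by rw [hp]
    rw [hv']
    rw [hmir ν b, hkey ν _, hmir ν _, hkey ν b, hrho ν b]
  -- the SO condition
  have hKnK : K ℓ * n ℓ μ L * K ℓ = n ℓ μ L := by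
    rw [hKM, hn]
    rw [M_mul hFFb, M_mul (g := fun v => 2*ℓ - 1 - v)
      (fun v hv => by show 2*ℓ - 1 - v < 2*ℓ; omega)]
    apply M_congr
    intro v hv
    exact hmirFF v hv
  have hso : n ℓ μ L = (K ℓ * (n ℓ μ L)⁻¹ * K ℓ)ᵀ := by
    rw [hinv]
    rw [Matrix.transpose_mul, Matrix.transpose_mul, Matrix.transpose_transpose, hKT]
    rw [← Matrix.mul_assoc]
    exact (hKnK).symm
  exact ⟨hdet, hso, hchar⟩

end Stmt9
end

section
/- Let ℓ ≥ 3 and let ℓ⃗ and ℓ⃗' be partitions of ℓ, each into an even number of positive parts, with associated elements n_{ℓ⃗} and n_{ℓ⃗'} of SO_{2ℓ}(ℂ). If there exists g ∈ SO_{2ℓ}(ℂ) with g n_{ℓ⃗} g⁻¹ = n_{ℓ⃗'}, then ℓ⃗ = ℓ⃗'. -/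
open Matrix

namespace Stmt11

/-- The anti-diagonal matrix `K` with ones on the anti-diagonal. -/
noncomputable def K (ℓ : ℕ) : Matrix (Fin (2*ℓ)) (Fin (2*ℓ)) ℂ :=
  Matrix.of fun i j => if (i.val + 1) + (j.val + 1) = 2*ℓ + 1 then 1 else 0

/-- The matrix `t_k ∈ O_{2ℓ}(ℂ)` (1-based indices). -/
noncomputable def t (ℓ k : ℕ) : Matrix (Fin (2*ℓ)) (Fin (2*ℓ)) ℂ :=
  Matrix.of fun i j =>
    if i = j ∧ i.val + 1 ≠ k ∧ i.val + 1 ≠ 2*ℓ - k + 1 then 1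
    else if i ≠ j ∧ ((i.val + 1 = k ∧ j.val + 1 = 2*ℓ - k + 1) ∨
        (i.val + 1 = 2*ℓ - k + 1 ∧ j.val + 1 = k)) then 1
    else 0

/-- The matrix `s_k ∈ SO_{2ℓ}(ℂ)` (1-based indices). -/
noncomputable def s (ℓ k : ℕ) : Matrix (Fin (2*ℓ)) (Fin (2*ℓ)) ℂ :=
  Matrix.of fun i j =>
    if i = j ∧ i.val + 1 ≠ k ∧ i.val + 1 ≠ k + 1 ∧
        i.val + 1 ≠ 2*ℓ - k ∧ i.val + 1 ≠ 2*ℓ - k + 1 then 1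
    else if i ≠ j ∧ ((i.val + 1 = k ∧ j.val + 1 = k + 1) ∨
        (i.val + 1 = k + 1 ∧ j.val + 1 = k)) then 1
    else if i ≠ j ∧ ((i.val + 1 = 2*ℓ - k ∧ j.val + 1 = 2*ℓ - k + 1) ∨
        (i.val + 1 = 2*ℓ - k + 1 ∧ j.val + 1 = 2*ℓ - k)) then 1
    else 0

/-- `n_{ℓ⃗} = ∏_{ν=1}^{μ} ( s_{ℓ'_ν+1} ⋯ s_{ℓ'_ν+ℓ_ν-1} · t_{ℓ'_ν+ℓ_ν} )`. -/
noncomputable def n (ℓ μ : ℕ) (L : Fin μ → ℕ) : Matrix (Fin (2*ℓ)) (Fin (2*ℓ)) ℂ :=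
  (List.ofFn fun ν : Fin μ =>
    (List.ofFn fun a : Fin (L ν - 1) =>
      s ℓ ((∑ j ∈ Finset.Iio ν, L j) + a.val + 1)).prod *
    t ℓ ((∑ j ∈ Finset.Iio ν, L j) + L ν)).prod

/- ================= auxiliary machinery ================= -/

section Aux

/-- Matrix of a self-map of `ℕ` restricted to `Fin N`. -/
noncomputable def Mof (N : ℕ) (f : ℕ → ℕ) : Matrix (Fin N) (Fin N) ℂ :=
  Matrix.of fun i j => if f i.val = j.val then 1 else 0

lemma Mof_mul {N : ℕ} {f g : ℕ → ℕ} (hf : ∀ x, x < N → f x < N) :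
    Mof N f * Mof N g = Mof N (fun x => g (f x)) := by
  ext i j
  simp only [Mof, Matrix.mul_apply, Matrix.of_apply]
  rw [Finset.sum_eq_single (⟨f i.val, hf _ i.isLt⟩ : Fin N)]
  · simp
  · intro b _ hb
    rw [if_neg, zero_mul]
    intro h; exact hb (by exact Fin.ext h.symm)
  · simp

lemma Mof_congr {N : ℕ} {f g : ℕ → ℕ} (h : ∀ x, x < N → f x = g x) :
    Mof N f = Mof N g := by
  ext i j
  simp only [Mof, Matrix.of_apply, h i.val i.isLt]

lemma Mof_pow {N : ℕ} {f : ℕ → ℕ} (hf : ∀ x, x < N → f x < N) (k : ℕ) :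
    Mof N f ^ k = Mof N (f^[k]) := by
  induction k with
  | zero =>
    ext i j
    simp only [pow_zero, Mof, Function.iterate_zero, id_eq, Matrix.one_apply, Matrix.of_apply,
      Fin.val_eq_val]
  | succ k ih =>
    have hfk : ∀ x, x < N → f^[k] x < N := by
      clear ih
      induction k with
      | zero => simp
      | succ k ih2 =>
        intro x hx
        rw [Function.iterate_succ', Function.comp_apply]
        exact hf _ (ih2 _ hx)
    rw [pow_succ, ih, Mof_mul hfk]
    apply Mof_congr
    intro x hx
    rw [Function.iterate_succ', Function.comp_apply]

lemma trace_Mof {N : ℕ} (f : ℕ → ℕ) :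
    (Mof N f).trace = ((Finset.univ.filter fun i : Fin N => f i.val = i.val).card : ℂ) := by
  rw [Matrix.trace]
  simp only [Matrix.diag, Mof, Matrix.of_apply]
  rw [Finset.card_filter]
  push_cast
  rfl

/-- 0-based function of `s ℓ k`: swaps `(k-1,k)` and `(N-k-1,N-k)`. -/
def sf (N k : ℕ) : ℕ → ℕ := fun x =>
  if x + 1 = k then x + 1
  else if x + 1 = k + 1 then x - 1
  else if x + 1 = N - k then x + 1
  else if x + 1 = N - k + 1 then x - 1
  else x

/-- 0-based function of `t ℓ k`: swaps `(k-1, N-k)`. -/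
def tf (N k : ℕ) : ℕ → ℕ := fun x =>
  if x + 1 = k then N - k
  else if x + 1 = N - k + 1 then k - 1
  else x

lemma s_eq_Mof {ℓ k : ℕ} (h1 : 1 ≤ k) (h2 : k < ℓ) :
    s ℓ k = Mof (2*ℓ) (sf (2*ℓ) k) := by
  ext i j
  have hi := i.isLt
  have hj := j.isLt
  simp only [s, Mof, sf, Matrix.of_apply, Fin.ext_iff, ne_eq]
  split_ifs <;> first | rfl | omega

lemma t_eq_Mof {ℓ k : ℕ} (h1 : 1 ≤ k) (h2 : k ≤ ℓ) :
    t ℓ k = Mof (2*ℓ) (tf (2*ℓ) k) := by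
  ext i j
  have hi := i.isLt
  have hj := j.isLt
  simp only [t, Mof, tf, Matrix.of_apply, Fin.ext_iff, ne_eq]
  split_ifs <;> first | rfl | omega

/-- partial composition `sf (a+j) ∘ ⋯ ∘ sf (a+1)`. -/
def partialf (N a j : ℕ) : ℕ → ℕ := fun x =>
  if a ≤ x ∧ x ≤ a + j then (if x = a then a + j else x - 1)
  else if N - a - 1 - j ≤ x ∧ x ≤ N - a - 1 then (if x = N - a - 1 then N - a - 1 - j else x + 1)
  else x

/-- the 2m-cycle of a block at offset a, size m. -/
def blockf (N a m : ℕ) : ℕ → ℕ := fun x =>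
  if a ≤ x ∧ x < a + m then (if x = a then N - a - m else x - 1)
  else if N - a - m ≤ x ∧ x < N - a then (if x = N - a - 1 then a + m - 1 else x + 1)
  else x

lemma partialf_zero {ℓ a : ℕ} (ha : a < ℓ) (x : ℕ) :
    partialf (2*ℓ) a 0 x = x := by
  simp only [partialf]
  split_ifs <;> omega

lemma partialf_succ {ℓ a j : ℕ} (h : a + j + 1 ≤ ℓ - 1) (x : ℕ) (hx : x < 2*ℓ) :
    sf (2*ℓ) (a + j + 1) (partialf (2*ℓ) a j x) = partialf (2*ℓ) a (j+1) x := by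
  simp only [partialf, sf]
  split_ifs <;> omega

lemma blockf_eq {ℓ a m : ℕ} (hm : 1 ≤ m) (h : a + m ≤ ℓ) (x : ℕ) (hx : x < 2*ℓ) :
    tf (2*ℓ) (a + m) (partialf (2*ℓ) a (m-1) x) = blockf (2*ℓ) a m x := by
  simp only [partialf, tf, blockf]
  split_ifs <;> omega

lemma partialf_lt {ℓ a j : ℕ} (h : a + j < ℓ) :
    ∀ x, x < 2*ℓ → partialf (2*ℓ) a j x < 2*ℓ := by
  intro x hx; simp only [partialf]; split_ifs <;> omega

lemma sprod_eq {ℓ a : ℕ} (ha : a < ℓ) (p : ℕ) (hp : a + p < ℓ) :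
    (List.ofFn fun i : Fin p => s ℓ (a + i.val + 1)).prod = Mof (2*ℓ) (partialf (2*ℓ) a p) := by
  induction p with
  | zero =>
    simp only [List.ofFn_zero, List.prod_nil]
    ext i j
    simp only [Mof, Matrix.of_apply, Matrix.one_apply, Fin.val_eq_val,
      partialf_zero ha i.val, Fin.val_eq_val]
  | succ p ih =>
    rw [List.ofFn_succ', List.concat_eq_append, List.prod_append, List.prod_singleton]
    simp only [Fin.coe_castSucc, Fin.val_last]
    rw [ih (by omega), s_eq_Mof (by omega) (by omega),
      Mof_mul (partialf_lt (show a + p < ℓ by omega))]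
    exact Mof_congr fun x hx => partialf_succ (by omega) x hx

lemma block_eq {ℓ a m : ℕ} (hm : 1 ≤ m) (h : a + m ≤ ℓ) :
    (List.ofFn fun i : Fin (m-1) => s ℓ (a + i.val + 1)).prod * t ℓ (a + m)
      = Mof (2*ℓ) (blockf (2*ℓ) a m) := by
  rw [sprod_eq (by omega) (m-1) (by omega), t_eq_Mof (by omega) h,
    Mof_mul (partialf_lt (show a + (m-1) < ℓ by omega))]
  exact Mof_congr fun x hx => blockf_eq hm h x hx

/-! composition over blocks -/

def Pgen (b : ℕ → ℕ → ℕ) : ℕ → ℕ → ℕ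
  | 0 => id
  | p + 1 => b p ∘ Pgen b p

lemma Pgen_lt {N : ℕ} {b : ℕ → ℕ → ℕ} {p : ℕ} (hb : ∀ q, q < p → ∀ x, x < N → b q x < N) :
    ∀ x, x < N → Pgen b p x < N := by
  induction p with
  | zero => intro x hx; exact hx
  | succ p ih =>
    intro x hx
    exact hb p (by omega) _ (ih (fun q hq => hb q (by omega)) x hx)

lemma prod_Mof {N : ℕ} (b : ℕ → ℕ → ℕ) (p : ℕ)
    (hb : ∀ q, q < p → ∀ x, x < N → b q x < N) :
    (List.ofFn fun ν : Fin p => Mof N (b ν.val)).prod = Mof N (Pgen b p) := by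
  induction p with
  | zero =>
    simp only [List.ofFn_zero, List.prod_nil]
    ext i j
    simp [Mof, Matrix.one_apply, Pgen, Fin.val_eq_val]
  | succ p ih =>
    rw [List.ofFn_succ', List.concat_eq_append, List.prod_append, List.prod_singleton]
    simp only [Fin.coe_castSucc, Fin.val_last]
    rw [ih (fun q hq => hb q (by omega)),
      Mof_mul (Pgen_lt (fun q hq => hb q (by omega)))]
    rfl

section PgenEval
variable {b : ℕ → ℕ → ℕ} {S : ℕ → ℕ → Prop}
variable (hdisj : ∀ q q' x, q ≠ q' → S q x → ¬ S q' x)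
variable (hmaps : ∀ q x, S q x → S q (b q x))
variable (hfix : ∀ q x, ¬ S q x → b q x = x)

include hfix in
lemma Pgen_fix : ∀ p x, (∀ q, q < p → ¬ S q x) → Pgen b p x = x := by
  intro p
  induction p with
  | zero => intro x _; rfl
  | succ p ih =>
    intro x hx
    show b p (Pgen b p x) = x
    rw [ih x (fun q hq => hx q (by omega))]
    exact hfix p x (hx p (by omega))

include hdisj hmaps hfix in
lemma Pgen_eval : ∀ p ν x, ν < p → S ν x → Pgen b p x = b ν x := by
  intro p
  induction p with
  | zero => omega
  | succ p ih =>
    intro ν x hν hx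
    show b p (Pgen b p x) = b ν x
    rcases Nat.lt_or_ge ν p with h | h
    · rw [ih ν x h hx]
      exact hfix p _ (hdisj ν p _ (by omega) (hmaps ν x hx))
    · have hνp : ν = p := by omega
      subst hνp
      rw [Pgen_fix hfix ν x (fun q hq hS => hdisj ν q x (by omega) hx hS)]

include hmaps in
lemma S_iterate : ∀ k ν x, S ν x → S ν ((b ν)^[k] x) := by
  intro k
  induction k with
  | zero => intro ν x hx; exact hx
  | succ k ih =>
    intro ν x hx
    rw [Function.iterate_succ', Function.comp_apply]
    exact hmaps ν _ (ih ν x hx)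

include hdisj hmaps hfix in
lemma Pgen_iterate {p : ℕ} : ∀ k ν x, ν < p → S ν x → (Pgen b p)^[k] x = (b ν)^[k] x := by
  intro k
  induction k with
  | zero => intro ν x _ _; rfl
  | succ k ih =>
    intro ν x hν hx
    rw [Function.iterate_succ', Function.iterate_succ', Function.comp_apply,
      Function.comp_apply, ih ν x hν hx]
    exact Pgen_eval hdisj hmaps hfix p ν _ hν (S_iterate hmaps k ν x hx)

end PgenEval

/-! cycle structure of a block -/

/-- block membership predicate -/
def Sb (N a m : ℕ) : ℕ → Prop := fun x =>
  (a ≤ x ∧ x < a + m) ∨ (N - a - m ≤ x ∧ x < N - a)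

def ψ (ℓ a m : ℕ) : ℕ → ℕ := fun x =>
  if x < ℓ then a + m - 1 - x else x - (2*ℓ - a - m) + m

def ρf (ℓ a m : ℕ) : ℕ → ℕ := fun r =>
  if r < m then a + m - 1 - r else 2*ℓ - a - m + (r - m)

section Blockf
variable {ℓ a m : ℕ} (hm : 1 ≤ m) (ha : a + m ≤ ℓ)

include hm ha in
lemma Sb_blockf {x : ℕ} (hx : Sb (2*ℓ) a m x) : Sb (2*ℓ) a m (blockf (2*ℓ) a m x) := by
  simp only [Sb, blockf] at *
  split_ifs <;> omega

include hm ha in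
lemma ψ_lt {x : ℕ} (hx : Sb (2*ℓ) a m x) : ψ ℓ a m x < 2*m := by
  simp only [Sb, ψ] at *
  split_ifs <;> omega

include hm ha in
lemma ψ_inj {x y : ℕ} (hx : Sb (2*ℓ) a m x) (hy : Sb (2*ℓ) a m y)
    (h : ψ ℓ a m x = ψ ℓ a m y) : x = y := by
  simp only [Sb, ψ] at *
  split_ifs at h <;> omega

include hm ha in
lemma ψ_step {x : ℕ} (hx : Sb (2*ℓ) a m x) :
    ψ ℓ a m (blockf (2*ℓ) a m x) = if ψ ℓ a m x + 1 = 2*m then 0 else ψ ℓ a m x + 1 := by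
  simp only [Sb, ψ, blockf] at *
  split_ifs <;> omega

include hm ha in
lemma Sb_iter {x : ℕ} (hx : Sb (2*ℓ) a m x) (k : ℕ) :
    Sb (2*ℓ) a m ((blockf (2*ℓ) a m)^[k] x) := by
  induction k with
  | zero => exact hx
  | succ k ih =>
    rw [Function.iterate_succ', Function.comp_apply]
    exact Sb_blockf hm ha ih

include hm ha in
lemma ψ_iter {x : ℕ} (hx : Sb (2*ℓ) a m x) (k : ℕ) :
    ψ ℓ a m ((blockf (2*ℓ) a m)^[k] x) ≡ ψ ℓ a m x + k [MOD 2*m] := by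
  induction k with
  | zero => rfl
  | succ k ih =>
    rw [Function.iterate_succ', Function.comp_apply]
    have hSk := Sb_iter hm ha hx k
    rw [ψ_step hm ha hSk]
    have hlt := ψ_lt hm ha hSk
    split_ifs with h
    · calc (0 : ℕ) ≡ 2*m [MOD 2*m] := (Nat.modEq_iff_dvd' (by omega)).mpr ⟨1, by omega⟩
        _ = ψ ℓ a m ((blockf (2*ℓ) a m)^[k] x) + 1 := h.symm
        _ ≡ ψ ℓ a m x + k + 1 [MOD 2*m] := ih.add_right 1
        _ = ψ ℓ a m x + (k+1) := by omega
    · calc ψ ℓ a m ((blockf (2*ℓ) a m)^[k] x) + 1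
          ≡ ψ ℓ a m x + k + 1 [MOD 2*m] := ih.add_right 1
        _ = ψ ℓ a m x + (k+1) := by omega

include hm ha in
lemma blockf_iter_fix_iff {x : ℕ} (hx : Sb (2*ℓ) a m x) (k : ℕ) :
    (blockf (2*ℓ) a m)^[k] x = x ↔ 2*m ∣ k := by
  constructor
  · intro h
    have h2 := ψ_iter hm ha hx k
    rw [h] at h2
    have h3 : (ψ ℓ a m x + 0) ≡ ψ ℓ a m x + k [MOD 2*m] := by simpa using h2
    have h4 : (0 : ℕ) ≡ k [MOD 2*m] := Nat.ModEq.add_left_cancel' _ h3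
    exact (Nat.modEq_zero_iff_dvd).mp h4.symm
  · intro h
    have h2 := ψ_iter hm ha hx k
    have h3 : ψ ℓ a m ((blockf (2*ℓ) a m)^[k] x) ≡ ψ ℓ a m x [MOD 2*m] := by
      calc ψ ℓ a m ((blockf (2*ℓ) a m)^[k] x) ≡ ψ ℓ a m x + k [MOD 2*m] := h2
        _ ≡ ψ ℓ a m x + 0 [MOD 2*m] := Nat.ModEq.add_left _ ((Nat.modEq_zero_iff_dvd).mpr h)
        _ = ψ ℓ a m x := by omega
    have hSk := Sb_iter hm ha hx k
    have h4 : ψ ℓ a m ((blockf (2*ℓ) a m)^[k] x) = ψ ℓ a m x := by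
      have l1 := ψ_lt hm ha hSk
      have l2 := ψ_lt hm ha hx
      have h5 : ψ ℓ a m ((blockf (2*ℓ) a m)^[k] x) % (2*m) = ψ ℓ a m x % (2*m) := h3
      rw [Nat.mod_eq_of_lt l1, Nat.mod_eq_of_lt l2] at h5
      exact h5
    exact ψ_inj hm ha hSk hx h4

include hm ha in
lemma ρψ {x : ℕ} (hx : Sb (2*ℓ) a m x) : ρf ℓ a m (ψ ℓ a m x) = x := by
  simp only [Sb, ψ, ρf] at *; split_ifs <;> omega

include hm ha in
lemma ψρ {r : ℕ} (hr : r < 2*m) : ψ ℓ a m (ρf ℓ a m r) = r := by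
  simp only [ψ, ρf] at *; split_ifs <;> omega

include hm ha in
lemma Sb_ρ {r : ℕ} (hr : r < 2*m) : Sb (2*ℓ) a m (ρf ℓ a m r) := by
  simp only [Sb, ρf] at *; split_ifs <;> omega

include hm ha in
lemma ρ_lt {r : ℕ} (hr : r < 2*m) : ρf ℓ a m r < 2*ℓ := by
  simp only [ρf] at *; split_ifs <;> omega

end Blockf

lemma Sb_empty {N a x : ℕ} : ¬ Sb N a 0 x := by
  simp only [Sb]; omega

lemma blockf_fix {N a m x : ℕ} (h : ¬ Sb N a m x) : blockf N a m x = x := by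
  simp only [Sb] at h
  simp only [blockf]
  split_ifs <;> omega

/-! partition bookkeeping -/

def Lx (μ : ℕ) (L : Fin μ → ℕ) : ℕ → ℕ := fun j => if h : j < μ then L ⟨j, h⟩ else 0
def Off (μ : ℕ) (L : Fin μ → ℕ) : ℕ → ℕ := fun p => ∑ j ∈ Finset.range p, Lx μ L j
def bb (ℓ μ : ℕ) (L : Fin μ → ℕ) : ℕ → ℕ → ℕ := fun q => blockf (2*ℓ) (Off μ L q) (Lx μ L q)

section Partition
variable {ℓ μ : ℕ} {L : Fin μ → ℕ} (hpos : ∀ ν, 0 < L ν) (hsum : ∑ ν, L ν = ℓ)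

lemma Off_mono {p q : ℕ} (h : p ≤ q) : Off μ L p ≤ Off μ L q :=
  Finset.sum_le_sum_of_subset (Finset.range_subset_range.mpr h)

lemma Off_succ (p : ℕ) : Off μ L (p+1) = Off μ L p + Lx μ L p :=
  Finset.sum_range_succ _ p

include hsum in
lemma Off_top : Off μ L μ = ℓ := by
  rw [← hsum, Off, ← Fin.sum_univ_eq_sum_range]
  refine Finset.sum_congr rfl fun ν _ => ?_
  simp [Lx]

include hpos in
lemma Lx_pos {q : ℕ} (hq : q < μ) : 1 ≤ Lx μ L q := by
  simp only [Lx, dif_pos hq]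
  exact hpos _

include hsum in
lemma Off_add_le {q : ℕ} (hq : q < μ) : Off μ L q + Lx μ L q ≤ ℓ := by
  rw [← Off_succ, ← Off_top hsum]
  exact Off_mono (by omega)

lemma sum_Iio_eq (ν : Fin μ) : ∑ j ∈ Finset.Iio ν, L j = Off μ L ν.val := by
  have himg : (Finset.Iio ν).image Fin.val = Finset.range ν.val := by
    ext b
    simp only [Finset.mem_image, Finset.mem_Iio, Finset.mem_range]
    constructor
    · rintro ⟨c, hc, rfl⟩; exact hc
    · intro hb; exact ⟨⟨b, lt_trans hb ν.isLt⟩, hb, rfl⟩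
  rw [Off, ← himg, Finset.sum_image (by intro x _ y _ h; exact Fin.ext h)]
  refine Finset.sum_congr rfl fun j _ => ?_
  simp [Lx]

lemma Off_cover : ∀ p y, y < Off μ L p → ∃ q < p, Off μ L q ≤ y ∧ y < Off μ L (q+1) := by
  intro p
  induction p with
  | zero => intro y hy; simp [Off] at hy
  | succ p ih =>
    intro y hy
    rcases Nat.lt_or_ge y (Off μ L p) with h | h
    · rcases ih y h with ⟨q, hq, h1, h2⟩
      exact ⟨q, by omega, h1, h2⟩
    · exact ⟨p, by omega, h, hy⟩

include hsum in
lemma SS_cover {x : ℕ} (hx : x < 2*ℓ) : ∃ q < μ, Sb (2*ℓ) (Off μ L q) (Lx μ L q) x := by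
  set y := if x < ℓ then x else 2*ℓ - 1 - x with hy
  have hyl : y < Off μ L μ := by rw [Off_top hsum, hy]; split_ifs <;> omega
  rcases Off_cover μ y hyl with ⟨q, hq, h1, h2⟩
  rw [Off_succ] at h2
  refine ⟨q, hq, ?_⟩
  have hle := Off_add_le hsum hq
  simp only [Sb]
  by_cases hc : x < ℓ
  · left; rw [hy] at h1 h2; simp only [if_pos hc] at h1 h2; omega
  · right; rw [hy] at h1 h2; simp only [if_neg hc] at h1 h2; omega

include hsum in
lemma SS_disj_lt {q q' x : ℕ} (hlt : q < q') (h : Sb (2*ℓ) (Off μ L q) (Lx μ L q) x) :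
    ¬ Sb (2*ℓ) (Off μ L q') (Lx μ L q') x := by
  intro h'
  by_cases hq' : q' < μ
  · have h1 : Off μ L q + Lx μ L q ≤ Off μ L q' := by
      rw [← Off_succ]; exact Off_mono (by omega)
    have h2 := Off_add_le hsum hq'
    simp only [Sb] at h h'
    omega
  · have : Lx μ L q' = 0 := by simp [Lx, hq']
    rw [this] at h'
    exact Sb_empty h'

include hsum in
lemma SS_disj {q q' x : ℕ} (hne : q ≠ q') (h : Sb (2*ℓ) (Off μ L q) (Lx μ L q) x) :
    ¬ Sb (2*ℓ) (Off μ L q') (Lx μ L q') x := by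
  rcases Nat.lt_or_ge q q' with hlt | hge
  · exact SS_disj_lt hsum hlt h
  · intro h'
    exact SS_disj_lt hsum (by omega) h' h

include hsum in
lemma bb_lt {q : ℕ} (hq : q < μ) : ∀ x, x < 2*ℓ → bb ℓ μ L q x < 2*ℓ := by
  intro x hx
  have := Off_add_le hsum hq
  simp only [bb, blockf]
  split_ifs <;> omega

include hpos hsum in
lemma bb_maps : ∀ q x, Sb (2*ℓ) (Off μ L q) (Lx μ L q) x →
    Sb (2*ℓ) (Off μ L q) (Lx μ L q) (bb ℓ μ L q x) := by
  intro q x hx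
  by_cases hq : q < μ
  · exact Sb_blockf (Lx_pos hpos hq) (Off_add_le hsum hq) hx
  · have : Lx μ L q = 0 := by simp [Lx, hq]
    rw [this] at hx
    exact absurd hx Sb_empty

lemma bb_fix : ∀ q x, ¬ Sb (2*ℓ) (Off μ L q) (Lx μ L q) x → bb ℓ μ L q x = x :=
  fun _ _ h => blockf_fix h

include hpos hsum in
lemma n_eq : n ℓ μ L = Mof (2*ℓ) (Pgen (bb ℓ μ L) μ) := by
  have hentry : (fun ν : Fin μ =>
      (List.ofFn fun a : Fin (L ν - 1) =>
        s ℓ ((∑ j ∈ Finset.Iio ν, L j) + a.val + 1)).prod *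
      t ℓ ((∑ j ∈ Finset.Iio ν, L j) + L ν))
      = fun ν : Fin μ => Mof (2*ℓ) (bb ℓ μ L ν.val) := by
    funext ν
    have hL : Lx μ L ν.val = L ν := by simp [Lx]
    have hb : Off μ L ν.val + L ν ≤ ℓ := by
      have := Off_add_le hsum ν.isLt
      omega
    rw [sum_Iio_eq ν, block_eq (hpos ν) hb]
    simp only [bb, hL]
  rw [n, hentry]
  exact prod_Mof _ μ (fun q hq => bb_lt hsum hq)

include hpos hsum in
lemma count_fix (k : ℕ) :
    (Finset.univ.filter fun i : Fin (2*ℓ) => (Pgen (bb ℓ μ L) μ)^[k] i.val = i.val).card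
      = ∑ ν : Fin μ, if 2 * L ν ∣ k then 2 * L ν else 0 := by
  classical
  set T : Fin μ → Finset (Fin (2*ℓ)) := fun ν =>
    Finset.univ.filter fun i => Sb (2*ℓ) (Off μ L ν.val) (Lx μ L ν.val) i.val with hT
  have hdisj : ∀ q q' x, q ≠ q' → Sb (2*ℓ) (Off μ L q) (Lx μ L q) x →
      ¬ Sb (2*ℓ) (Off μ L q') (Lx μ L q') x := fun q q' x hne => SS_disj hsum hne
  have hmaps := bb_maps hpos hsum
  have hfix := bb_fix (ℓ := ℓ) (L := L)
  have hsplit : (Finset.univ.filter fun i : Fin (2*ℓ) => (Pgen (bb ℓ μ L) μ)^[k] i.val = i.val)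
      = Finset.univ.biUnion (fun ν : Fin μ =>
          (T ν).filter fun i => (Pgen (bb ℓ μ L) μ)^[k] i.val = i.val) := by
    ext i
    simp only [Finset.mem_filter, Finset.mem_biUnion, Finset.mem_univ, true_and, hT]
    constructor
    · intro hP
      rcases SS_cover hsum i.isLt with ⟨q, hq, hS⟩
      refine ⟨⟨q, hq⟩, ?_, hP⟩
      exact hS
    · rintro ⟨ν, -, hP⟩
      exact hP
  rw [hsplit, Finset.card_biUnion]
  · refine Finset.sum_congr rfl fun ν _ => ?_
    have hm : 1 ≤ Lx μ L ν.val := Lx_pos hpos ν.isLt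
    have ha : Off μ L ν.val + Lx μ L ν.val ≤ ℓ := Off_add_le hsum ν.isLt
    have hL : Lx μ L ν.val = L ν := by simp [Lx]
    have hfix_iff : ∀ i ∈ T ν,
        ((Pgen (bb ℓ μ L) μ)^[k] i.val = i.val ↔ 2 * L ν ∣ k) := by
      intro i hi
      have hS : Sb (2*ℓ) (Off μ L ν.val) (Lx μ L ν.val) i.val :=
        (Finset.mem_filter.mp hi).2
      rw [Pgen_iterate hdisj hmaps hfix k ν.val i.val ν.isLt hS]
      rw [show (bb ℓ μ L ν.val) = blockf (2*ℓ) (Off μ L ν.val) (Lx μ L ν.val) from rfl]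
      rw [blockf_iter_fix_iff hm ha hS k, hL]
    have hcardT : (T ν).card = 2 * L ν := by
      rw [← hL, ← Finset.card_range (2 * Lx μ L ν.val)]
      have h2ℓ : 0 < 2*ℓ := by omega
      refine Finset.card_nbij' (fun i => ψ ℓ (Off μ L ν.val) (Lx μ L ν.val) i.val)
        (fun r => ⟨ρf ℓ (Off μ L ν.val) (Lx μ L ν.val) r % (2*ℓ), Nat.mod_lt _ h2ℓ⟩)
        ?_ ?_ ?_ ?_
      · intro i hi
        rw [Finset.mem_coe, Finset.mem_range]
        exact ψ_lt hm ha (Finset.mem_filter.mp hi).2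
      · intro r hr
        rw [Finset.mem_coe, Finset.mem_range] at hr
        rw [hT]
        refine Finset.mem_filter.mpr ⟨Finset.mem_univ _, ?_⟩
        simp only [Nat.mod_eq_of_lt (ρ_lt hm ha hr)]
        exact Sb_ρ hm ha hr
      · intro i hi
        have hS := (Finset.mem_filter.mp hi).2
        apply Fin.ext
        simp only [Nat.mod_eq_of_lt (ρ_lt hm ha (ψ_lt hm ha hS))]
        exact ρψ hm ha hS
      · intro r hr
        rw [Finset.mem_coe, Finset.mem_range] at hr
        simp only [Nat.mod_eq_of_lt (ρ_lt hm ha hr)]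
        exact ψρ hm ha hr
    by_cases hd : 2 * L ν ∣ k
    · rw [if_pos hd, Finset.filter_true_of_mem (fun i hi => (hfix_iff i hi).mpr hd), hcardT]
    · rw [if_neg hd, Finset.filter_false_of_mem
        (fun i hi hP => hd ((hfix_iff i hi).mp hP)), Finset.card_empty]
  · intro ν _ ν' _ hne
    rw [Function.onFun, Finset.disjoint_left]
    intro i hi hi'
    have h1 : Sb (2*ℓ) (Off μ L ν.val) (Lx μ L ν.val) i.val :=
      (Finset.mem_filter.mp (Finset.mem_filter.mp hi).1).2
    have h2 : Sb (2*ℓ) (Off μ L ν'.val) (Lx μ L ν'.val) i.val :=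
      (Finset.mem_filter.mp (Finset.mem_filter.mp hi').1).2
    exact SS_disj hsum (fun h => hne (Fin.ext h)) h1 h2

end Partition
end Aux

lemma sum_fiber {μ R : ℕ} (f : Fin μ → ℕ) (hf : ∀ ν, f ν ≤ R) (w : ℕ → ℕ) :
    ∑ ν, w (f ν) = ∑ m ∈ Finset.range (R+1),
      (Finset.univ.filter fun ν => f ν = m).card * w m := by
  rw [← Finset.sum_fiberwise_of_maps_to (g := f) (t := Finset.range (R+1))
    (fun ν _ => Finset.mem_range.mpr (by have := hf ν; omega))]
  refine Finset.sum_congr rfl fun m _ => ?_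
  rw [Finset.sum_congr rfl (fun ν hν => ?_), Finset.sum_const, smul_eq_mul]
  rw [(Finset.mem_filter.mp hν).2]

lemma card_fiber_eq {μ μ' ℓ : ℕ} (L : Fin μ → ℕ) (L' : Fin μ' → ℕ)
    (hpos : ∀ ν, 0 < L ν) (hsum : ∑ ν, L ν = ℓ)
    (hpos' : ∀ ν, 0 < L' ν) (hsum' : ∑ ν, L' ν = ℓ)
    (heq : ∀ k, 1 ≤ k → (∑ ν, if 2 * L ν ∣ k then 2 * L ν else 0)
      = ∑ ν', if 2 * L' ν' ∣ k then 2 * L' ν' else 0) :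
    ∀ m, (Finset.univ.filter fun ν => L ν = m).card
      = (Finset.univ.filter fun ν' => L' ν' = m).card := by
  have hLle : ∀ ν, L ν ≤ ℓ := fun ν => hsum ▸ Finset.single_le_sum (fun i _ => Nat.zero_le _)
    (Finset.mem_univ ν)
  have hLle' : ∀ ν, L' ν ≤ ℓ := fun ν => hsum' ▸ Finset.single_le_sum (fun i _ => Nat.zero_le _)
    (Finset.mem_univ ν)
  set c : ℕ → ℕ := fun m => (Finset.univ.filter fun ν => L ν = m).card with hc
  set c' : ℕ → ℕ := fun m => (Finset.univ.filter fun ν' => L' ν' = m).card with hc'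
  -- transformed hypothesis
  have key : ∀ j, 1 ≤ j → ∑ m ∈ Finset.range (ℓ+1), c m * (if m ∣ j then 2*m else 0)
      = ∑ m ∈ Finset.range (ℓ+1), c' m * (if m ∣ j then 2*m else 0) := by
    intro j hj
    have h1 := heq (2*j) (by omega)
    rw [sum_fiber L hLle (fun m => if 2*m ∣ 2*j then 2*m else 0),
        sum_fiber L' hLle' (fun m => if 2*m ∣ 2*j then 2*m else 0)] at h1
    have hdvd : ∀ m : ℕ, (2*m ∣ 2*j) = (m ∣ j) := by
      intro m
      simp [Nat.mul_dvd_mul_iff_left (show 0 < 2 by norm_num)]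
    simpa only [hdvd] using h1
  -- zero case
  have hc0 : c 0 = 0 := by
    rw [hc]
    rw [Finset.card_eq_zero, Finset.filter_eq_empty_iff]
    intro ν _
    have := hpos ν; omega
  have hc0' : c' 0 = 0 := by
    rw [hc']
    rw [Finset.card_eq_zero, Finset.filter_eq_empty_iff]
    intro ν _
    have := hpos' ν; omega
  -- strong induction to show c = c' on [1, ℓ]
  have main : ∀ j, 1 ≤ j → j ≤ ℓ → c j = c' j := by
    intro j
    induction j using Nat.strong_induction_on with
    | _ j ih =>
      intro hj1 hjℓ
      have hjmem : j ∈ Finset.range (ℓ+1) := Finset.mem_range.mpr (by omega)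
      have hsplit := key j hj1
      rw [← Finset.add_sum_erase _ _ hjmem, ← Finset.add_sum_erase _ _ hjmem] at hsplit
      have hrest : ∑ m ∈ (Finset.range (ℓ+1)).erase j, c m * (if m ∣ j then 2*m else 0)
          = ∑ m ∈ (Finset.range (ℓ+1)).erase j, c' m * (if m ∣ j then 2*m else 0) := by
        refine Finset.sum_congr rfl fun m hm => ?_
        rcases Finset.mem_erase.mp hm with ⟨hmj, hmr⟩
        by_cases hd : m ∣ j
        · have hm1 : 1 ≤ m := by
            rcases Nat.eq_zero_or_pos m with h0 | h0
            · subst h0; rcases hd with ⟨w, hw⟩; omega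
            · exact h0
          have hmlt : m < j := by
            have := Nat.le_of_dvd (by omega) hd
            omega
          rw [ih m hmlt hm1 (by omega)]
        · simp [hd]
      rw [hrest] at hsplit
      have hcancel : c j * (if j ∣ j then 2*j else 0) = c' j * (if j ∣ j then 2*j else 0) := by
        omega
      rw [if_pos dvd_rfl] at hcancel
      exact Nat.eq_of_mul_eq_mul_right (by omega) hcancel
  intro m
  show c m = c' m
  rcases Nat.eq_zero_or_pos m with h0 | h1
  · subst h0; rw [hc0, hc0']
  · rcases le_or_gt m ℓ with hle | hgt
    · exact main m h1 hle
    · have e1 : c m = 0 := by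
        rw [hc, Finset.card_eq_zero, Finset.filter_eq_empty_iff]
        intro ν _
        have := hLle ν; omega
      have e2 : c' m = 0 := by
        rw [hc', Finset.card_eq_zero, Finset.filter_eq_empty_iff]
        intro ν _
        have := hLle' ν; omega
      rw [e1, e2]


lemma mono_le_iff {μ : ℕ} (f : Fin μ → ℕ) (hmono : Monotone f) (ν : Fin μ) (m : ℕ) :
    f ν ≤ m ↔ ν.val + 1 ≤ (Finset.univ.filter fun i => f i ≤ m).card := by
  constructor
  · intro h
    calc ν.val + 1 = (Finset.Iic ν).card := (Fin.card_Iic ν).symm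
      _ ≤ _ := Finset.card_le_card fun i hi =>
          Finset.mem_filter.mpr ⟨Finset.mem_univ _,
            le_trans (hmono (Finset.mem_Iic.mp hi)) h⟩
  · intro h
    by_contra hc
    push_neg at hc
    have hsub : (Finset.univ.filter fun i => f i ≤ m) ⊆ Finset.Iio ν := by
      intro i hi
      rcases Finset.mem_filter.mp hi with ⟨-, hfi⟩
      rw [Finset.mem_Iio]
      by_contra hge
      push_neg at hge
      exact absurd (le_trans (hmono hge) hfi) (by omega)
    have := Finset.card_le_card hsub
    rw [Fin.card_Iio] at this
    omega

lemma card_le_sum {μ ℓ : ℕ} (f : Fin μ → ℕ) (hle : ∀ ν, f ν ≤ ℓ) (m : ℕ) :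
    (Finset.univ.filter fun i => f i ≤ m).card
      = ∑ m' ∈ Finset.range (ℓ+1), if m' ≤ m then (Finset.univ.filter fun i => f i = m').card
        else 0 := by
  rw [Finset.card_eq_sum_card_fiberwise (f := f) (t := Finset.range (ℓ+1))
    (fun i _ => Finset.mem_range.mpr (by have := hle i; omega))]
  refine Finset.sum_congr rfl fun m' _ => ?_
  by_cases hm' : m' ≤ m
  · rw [if_pos hm']
    congr 1
    ext i
    simp only [Finset.mem_filter, Finset.mem_univ, true_and]
    constructor
    · rintro ⟨-, h⟩; exact h
    · intro h; exact ⟨by omega, h⟩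
  · rw [if_neg hm']
    rw [Finset.card_eq_zero, Finset.filter_eq_empty_iff]
    rintro i hi
    rcases Finset.mem_filter.mp hi with ⟨-, h⟩
    omega

lemma partition_eq {μ μ' ℓ : ℕ} (L : Fin μ → ℕ) (L' : Fin μ' → ℕ)
    (hmono : Monotone L) (hmono' : Monotone L')
    (hLle : ∀ ν, L ν ≤ ℓ) (hLle' : ∀ ν, L' ν ≤ ℓ)
    (hcnt : ∀ m, (Finset.univ.filter fun ν => L ν = m).card
      = (Finset.univ.filter fun ν' => L' ν' = m).card) :
    μ = μ' ∧ ∀ (ν : ℕ) (h1 : ν < μ) (h2 : ν < μ'), L ⟨ν, h1⟩ = L' ⟨ν, h2⟩ := by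
  have hcardle : ∀ m, (Finset.univ.filter fun i => L i ≤ m).card
      = (Finset.univ.filter fun i => L' i ≤ m).card := by
    intro m
    rw [card_le_sum L hLle m, card_le_sum L' hLle' m]
    exact Finset.sum_congr rfl fun m' _ => by rw [hcnt m']
  have hμ : μ = μ' := by
    have h1 : μ = ∑ m ∈ Finset.range (ℓ+1), (Finset.univ.filter fun ν => L ν = m).card := by
      rw [← Finset.card_eq_sum_card_fiberwise (f := L) (t := Finset.range (ℓ+1))
        (fun i _ => Finset.mem_range.mpr (by have := hLle i; omega))]
      simp
    have h2 : μ' = ∑ m ∈ Finset.range (ℓ+1), (Finset.univ.filter fun ν' => L' ν' = m).card := by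
      rw [← Finset.card_eq_sum_card_fiberwise (f := L') (t := Finset.range (ℓ+1))
        (fun i _ => Finset.mem_range.mpr (by have := hLle' i; omega))]
      simp
    rw [h1, h2]
    exact Finset.sum_congr rfl fun m _ => hcnt m
  refine ⟨hμ, fun ν h1 h2 => ?_⟩
  apply le_antisymm
  · rw [mono_le_iff L hmono ⟨ν, h1⟩ _, hcardle]
    exact (mono_le_iff L' hmono' ⟨ν, h2⟩ _).mp le_rfl
  · rw [mono_le_iff L' hmono' ⟨ν, h2⟩ _, ← hcardle]
    exact (mono_le_iff L hmono ⟨ν, h1⟩ _).mp le_rfl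


/-- Let `ℓ ≥ 3` and let `ℓ⃗`, `ℓ⃗'` be partitions of `ℓ`, each into an even
number of positive parts, with associated elements `n_{ℓ⃗}`, `n_{ℓ⃗'}` of `SO_{2ℓ}(ℂ)` (the
`g ∈ GL_{2ℓ}(ℂ)` with `g = (K g⁻¹ K)ᵀ` and `det g = 1`).  If some `g ∈ SO_{2ℓ}(ℂ)` satisfies
`g n_{ℓ⃗} g⁻¹ = n_{ℓ⃗'}`, then `ℓ⃗ = ℓ⃗'`. -/
theorem stmt11 (ℓ : ℕ) (hℓ : 3 ≤ ℓ) (μ μ' : ℕ) (hμ : Even μ) (hμ' : Even μ')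
    (L : Fin μ → ℕ) (L' : Fin μ' → ℕ)
    (hpos : ∀ ν, 0 < L ν) (hmono : Monotone L) (hsum : ∑ ν, L ν = ℓ)
    (hpos' : ∀ ν, 0 < L' ν) (hmono' : Monotone L') (hsum' : ∑ ν, L' ν = ℓ)
    (g : Matrix (Fin (2*ℓ)) (Fin (2*ℓ)) ℂ)
    (hgdet : g.det = 1) (hgSO : g = (K ℓ * g⁻¹ * K ℓ)ᵀ)
    (hconj : g * n ℓ μ L * g⁻¹ = n ℓ μ' L') :
    μ = μ' ∧ ∀ (ν : ℕ) (h1 : ν < μ) (h2 : ν < μ'), L ⟨ν, h1⟩ = L' ⟨ν, h2⟩ := by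
  -- `g` is invertible
  have hdet : IsUnit g.det := hgdet ▸ isUnit_one
  have hinv : g⁻¹ * g = 1 := Matrix.nonsing_inv_mul g hdet
  have hinv' : g * g⁻¹ = 1 := Matrix.mul_nonsing_inv g hdet
  -- traces of powers agree
  have hpow : ∀ k : ℕ, (n ℓ μ' L') ^ k = g * (n ℓ μ L) ^ k * g⁻¹ := by
    intro k
    rw [← hconj]
    induction k with
    | zero => rw [pow_zero, pow_zero, mul_one, hinv']
    | succ k ih =>
      rw [pow_succ, pow_succ, ih]
      calc g * (n ℓ μ L) ^ k * g⁻¹ * (g * n ℓ μ L * g⁻¹)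
          = g * (n ℓ μ L) ^ k * (g⁻¹ * g) * n ℓ μ L * g⁻¹ := by
            simp only [Matrix.mul_assoc]
        _ = g * ((n ℓ μ L) ^ k * n ℓ μ L) * g⁻¹ := by
            rw [hinv]; simp only [Matrix.mul_assoc, Matrix.one_mul]
  have htr : ∀ k : ℕ, ((n ℓ μ L) ^ k).trace = ((n ℓ μ' L') ^ k).trace := by
    intro k
    rw [hpow k, Matrix.trace_mul_comm, ← Matrix.mul_assoc, hinv, Matrix.one_mul]
  -- identify `n` with the matrix of an explicit map of `Fin (2ℓ)`
  have hFlt : ∀ x, x < 2*ℓ → Pgen (bb ℓ μ L) μ x < 2*ℓ :=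
    Pgen_lt (fun q hq => bb_lt hsum hq)
  have hFlt' : ∀ x, x < 2*ℓ → Pgen (bb ℓ μ' L') μ' x < 2*ℓ :=
    Pgen_lt (fun q hq => bb_lt hsum' hq)
  have heq : ∀ k, 1 ≤ k → (∑ ν, if 2 * L ν ∣ k then 2 * L ν else 0)
      = ∑ ν', if 2 * L' ν' ∣ k then 2 * L' ν' else 0 := by
    intro k _
    have h1 := htr k
    rw [n_eq hpos hsum, n_eq hpos' hsum', Mof_pow hFlt, Mof_pow hFlt',
      trace_Mof, trace_Mof] at h1
    have h2 := Nat.cast_injective h1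
    rw [count_fix hpos hsum k, count_fix hpos' hsum' k] at h2
    exact h2
  have hLle : ∀ ν, L ν ≤ ℓ := fun ν => hsum ▸ Finset.single_le_sum
    (fun i _ => Nat.zero_le _) (Finset.mem_univ ν)
  have hLle' : ∀ ν, L' ν ≤ ℓ := fun ν => hsum' ▸ Finset.single_le_sum
    (fun i _ => Nat.zero_le _) (Finset.mem_univ ν)
  exact partition_eq L L' hmono hmono' hLle hLle'
    (card_fiber_eq L L' hpos hsum hpos' hsum' heq)


end Stmt11
end
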